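/- arXiv:1901.09454 — 3 statements merged into one kernel-verified Lean document; each statement's English description precedes it below -/
import Mathlib

section
/- Let χ : ℝ → ℂ belong to the Carleman class C_M{ℝ}. Then the difference equation f(s) - f(s+1) = χ(s) has the generalized Găvruța stability in C_M{ℝ}: for every y ∈ C_M{ℝ} and every δ : ℝ → [0,∞) with |y(s) - y(s+1) - χ(s)| ≤ δ(s) for all s ∈ ℝ, there exists z ∈ C_M{ℝ} with z(s) - z(s+1) = χ(s) for all s ∈ ℝ and |y(s) - z(s)| ≤ Σ_{n = -⌈(s-a)⁺⌉}^{⌈(b-s)⁺⌉ - 1} δ(s+n) for all s ∈ ℝ, where x⁺ := max(x,0) and ⌈·⌉ is the ceiling function. -/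
open Filter Function

/-- The Carleman class `C_M{ℝ}` of smooth functions `f : ℝ → ℂ` whose derivatives satisfy
`‖f⁽ⁿ⁾‖ ≤ C_K ρ_K^n M_n` on every compact interval `K`. -/
noncomputable def CarlemanClass (M : ℕ → ℝ) : Set (ℝ → ℂ) :=
  {f | ContDiff ℝ (⊤ : ℕ∞) f ∧ ∀ α β : ℝ, ∃ C ρ : ℝ, 0 < C ∧ 0 < ρ ∧
    ∀ n : ℕ, ∀ x ∈ Set.Icc α β, ‖iteratedDeriv n f x‖ ≤ C * ρ ^ n * M n}

/-- Nonquasianalyticity of the Carleman class `C_M{ℝ}`. -/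
def Nonquasianalytic (M : ℕ → ℝ) : Prop :=
  ∃ f₀ ∈ CarlemanClass M, f₀ ≠ 0 ∧ ∃ x₀ : ℝ, ∀ n : ℕ, iteratedDeriv n f₀ x₀ = 0

/-- The standing assumptions on the weight sequence `M` : positivity, nonquasianalyticity
of `C_M{ℝ}`, almost-increasingness of `((M_n/n!)^{1/n})_{n ≥ 1}`, `1 = M_0 ≤ M_1`,
logarithmic convexity of `(M_n/n!)`, `sup_{n ≥ 1} (M_{n+1}/((n+1) M_n))^{1/n} < ∞` and
`liminf (M_n/n!)^{1/n} > 0`. -/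
def StandingAssumptions (M : ℕ → ℝ) : Prop :=
  (∀ n, 0 < M n) ∧ Nonquasianalytic M ∧
  (∃ C : ℝ, 0 < C ∧ ∀ p q : ℕ, 1 ≤ p → p ≤ q →
    (M p / (Nat.factorial p : ℝ)) ^ ((1 : ℝ) / (p : ℝ)) ≤
      C * (M q / (Nat.factorial q : ℝ)) ^ ((1 : ℝ) / (q : ℝ))) ∧
  (M 0 = 1 ∧ M 0 ≤ M 1) ∧
  (∀ n : ℕ, (M (n + 1) / (Nat.factorial (n + 1) : ℝ)) ^ 2 ≤
    (M n / (Nat.factorial n : ℝ)) * (M (n + 2) / (Nat.factorial (n + 2) : ℝ))) ∧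
  (∃ B : ℝ, ∀ n : ℕ, 1 ≤ n →
    (M (n + 1) / (((n : ℝ) + 1) * M n)) ^ ((1 : ℝ) / (n : ℝ)) ≤ B) ∧
  (0 < Filter.liminf (fun n : ℕ => (M n / (Nat.factorial n : ℝ)) ^ ((1 : ℝ) / (n : ℝ)))
    Filter.atTop)

section Mfacts
variable {M : ℕ → ℝ}

/-- the sequence `M n / n!`. -/
noncomputable def ggsm (M : ℕ → ℝ) (n : ℕ) : ℝ := M n / (Nat.factorial n : ℝ)

lemma ggsm_pos (hpos : ∀ n, 0 < M n) (n : ℕ) : 0 < ggsm M n :=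
  div_pos (hpos n) (by exact_mod_cast Nat.factorial_pos n)

lemma ggsm_chain (hpos : ∀ n, 0 < M n)
    (hlc : ∀ n : ℕ, (ggsm M (n+1)) ^ 2 ≤ ggsm M n * ggsm M (n+2)) :
    ∀ p q : ℕ, p ≤ q → ggsm M (p+1) * ggsm M q ≤ ggsm M p * ggsm M (q+1) := by
  have hratio : Monotone (fun n => ggsm M (n+1) / ggsm M n) := by
    apply monotone_nat_of_le_succ
    intro n
    have h := hlc n
    rw [div_le_div_iff₀ (ggsm_pos hpos n) (ggsm_pos hpos (n+1))]
    nlinarith [ggsm_pos hpos n, ggsm_pos hpos (n+1), ggsm_pos hpos (n+2)]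
  intro p q hpq
  have := hratio hpq
  rw [div_le_div_iff₀ (ggsm_pos hpos p) (ggsm_pos hpos q)] at this
  linarith
lemma ggsm_one (hM0 : M 0 = 1) : ggsm M 0 = 1 := by simp [ggsm, hM0]

lemma ggsm_mul (hpos : ∀ n, 0 < M n) (hM0 : M 0 = 1)
    (hlc : ∀ n : ℕ, (ggsm M (n+1)) ^ 2 ≤ ggsm M n * ggsm M (n+2)) :
    ∀ i j : ℕ, ggsm M i * ggsm M j ≤ ggsm M (i+j) := by
  have key : ∀ i j : ℕ, i ≤ j → ggsm M i * ggsm M j ≤ ggsm M (i+j) := by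
    intro i
    induction i with
    | zero => intro j _; simp [ggsm_one hM0]
    | succ i ih =>
      intro j hij
      have h1 : ggsm M (i+1) * ggsm M j ≤ ggsm M i * ggsm M (j+1) :=
        ggsm_chain hpos hlc i j (le_of_lt (Nat.lt_of_succ_le hij))
      have h2 : ggsm M i * ggsm M (j+1) ≤ ggsm M (i+(j+1)) := ih (j+1) (by omega)
      calc ggsm M (i+1) * ggsm M j ≤ ggsm M i * ggsm M (j+1) := h1
        _ ≤ ggsm M (i+(j+1)) := h2
        _ = ggsm M (i+1+j) := by ring_nf
  intro i j
  rcases le_total i j with h | h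
  · exact key i j h
  · have := key j i h
    rw [mul_comm]
    rw [Nat.add_comm j i] at this
    exact this

lemma ggs_choose_mul (hpos : ∀ n, 0 < M n) (hM0 : M 0 = 1)
    (hlc : ∀ n : ℕ, (ggsm M (n+1)) ^ 2 ≤ ggsm M n * ggsm M (n+2)) {i n : ℕ} (hi : i ≤ n) :
    (n.choose i : ℝ) * M i * M (n - i) ≤ M n := by
  have h := ggsm_mul hpos hM0 hlc i (n - i)
  rw [Nat.add_sub_cancel' hi] at h
  unfold ggsm at h
  have hfi : (0:ℝ) < (Nat.factorial i : ℝ) := by exact_mod_cast Nat.factorial_pos i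
  have hfni : (0:ℝ) < (Nat.factorial (n-i) : ℝ) := by exact_mod_cast Nat.factorial_pos (n-i)
  have hfn : (0:ℝ) < (Nat.factorial n : ℝ) := by exact_mod_cast Nat.factorial_pos n
  have hchoose : (n.choose i : ℝ) * (Nat.factorial i : ℝ) * (Nat.factorial (n-i) : ℝ)
      = (Nat.factorial n : ℝ) := by
    exact_mod_cast congrArg (Nat.cast (R := ℝ)) (Nat.choose_mul_factorial_mul_factorial hi)
  rw [div_mul_div_comm, div_le_div_iff₀ (by positivity) hfn] at h
  calc (n.choose i : ℝ) * M i * M (n - i)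
      = (M i * M (n-i)) * ((n.choose i : ℝ) * 1) := by ring
    _ = (M i * M (n-i)) * ((n.choose i : ℝ) * ((Nat.factorial i : ℝ) * (Nat.factorial (n-i)) / ((Nat.factorial i : ℝ) * (Nat.factorial (n-i))))) := by
        rw [div_self (by positivity)]
    _ = (M i * M (n-i) * (Nat.factorial n)) / ((Nat.factorial i : ℝ) * (Nat.factorial (n-i))) := by
        field_simp
        linear_combination (M i * M (n - i)) * hchoose
    _ ≤ (M n * ((Nat.factorial i : ℝ) * (Nat.factorial (n-i)))) / ((Nat.factorial i : ℝ) * (Nat.factorial (n-i))) := by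
        apply div_le_div_of_nonneg_right ?_ (by positivity)
        · linarith [h]
    _ = M n := by field_simp

lemma ggsm_mono (hpos : ∀ n, 0 < M n) (hM0 : M 0 = 1) (hM1 : M 0 ≤ M 1)
    (hlc : ∀ n : ℕ, (ggsm M (n+1)) ^ 2 ≤ ggsm M n * ggsm M (n+2)) :
    ∀ n : ℕ, M n ≤ M (n+1) := by
  intro n
  have h := ggsm_chain hpos hlc 0 n (Nat.zero_le n)
  rw [ggsm_one hM0, zero_add] at h
  -- h : ggsm M 1 * ggsm M n ≤ 1 * ggsm M (n+1)
  have h1 : (1:ℝ) ≤ ggsm M 1 := by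
    unfold ggsm; simp [Nat.factorial]
    linarith [hM1, hM0]
  have h2 : ggsm M n ≤ ggsm M (n+1) := by
    nlinarith [ggsm_pos hpos n, ggsm_pos hpos (n+1)]
  unfold ggsm at h2
  rw [div_le_div_iff₀ (by positivity) (by positivity)] at h2
  have hfact : (Nat.factorial n : ℝ) ≤ (Nat.factorial (n+1) : ℝ) := by
    exact_mod_cast Nat.factorial_le (Nat.le_succ n)
  nlinarith [hpos n, hpos (n+1), (show (0:ℝ) < (Nat.factorial n : ℝ) by positivity)]
end Mfacts
section Closure
variable {M : ℕ → ℝ}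

lemma ggs_contDiff_nat {f : ℝ → ℂ} (hf : ContDiff ℝ (⊤:ℕ∞) f) (n : ℕ) :
    ContDiff ℝ (n : WithTop ℕ∞) f := hf.of_le (by exact_mod_cast le_top)

lemma ggs_carleman_const (hpos : ∀ n, 0 < M n) (c : ℂ) :
    (fun _ : ℝ => c) ∈ CarlemanClass M := by
  have h0 := hpos 0
  refine ⟨contDiff_const, fun α β => ⟨‖c‖ / M 0 + 1, 1, by positivity, one_pos, ?_⟩⟩
  intro n x hx
  cases n with
  | zero =>
    simp only [iteratedDeriv_zero, pow_zero, mul_one]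
    rw [div_add' _ _ _ (ne_of_gt h0)]
    rw [div_mul_eq_mul_div, le_div_iff₀ h0]
    nlinarith [norm_nonneg c]
  | succ n =>
    have : ‖iteratedDeriv (n+1) (fun _ : ℝ => c) x‖ = 0 := by
      rw [← norm_iteratedFDeriv_eq_norm_iteratedDeriv,
        iteratedFDeriv_const_of_ne (Nat.succ_ne_zero n)]
      simp
    rw [this]
    have := hpos (n+1)
    positivity

lemma ggs_carleman_add (hpos : ∀ n, 0 < M n) {f g : ℝ → ℂ}
    (hf : f ∈ CarlemanClass M) (hg : g ∈ CarlemanClass M) :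
    (fun x => f x + g x) ∈ CarlemanClass M := by
  refine ⟨hf.1.add hg.1, fun α β => ?_⟩
  obtain ⟨Cf, ρf, hCf, hρf, hbf⟩ := hf.2 α β
  obtain ⟨Cg, ρg, hCg, hρg, hbg⟩ := hg.2 α β
  refine ⟨Cf + Cg, max ρf ρg, by positivity, lt_max_of_lt_left hρf, fun n x hx => ?_⟩
  have key : ‖iteratedDeriv n (fun x => f x + g x) x‖
      ≤ ‖iteratedDeriv n f x‖ + ‖iteratedDeriv n g x‖ := by
    rw [← norm_iteratedFDeriv_eq_norm_iteratedDeriv, ← norm_iteratedFDeriv_eq_norm_iteratedDeriv,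
      ← norm_iteratedFDeriv_eq_norm_iteratedDeriv]
    have := iteratedFDeriv_add_apply (i := n) (f := f) (g := g) (ggs_contDiff_nat hf.1 n).contDiffAt
      (ggs_contDiff_nat hg.1 n).contDiffAt (x := x)
    calc ‖iteratedFDeriv ℝ n (fun x => f x + g x) x‖ = ‖iteratedFDeriv ℝ n f x + iteratedFDeriv ℝ n g x‖ := by
          rw [← this]; rfl
      _ ≤ _ := norm_add_le _ _
  have h1 : ρf ^ n ≤ max ρf ρg ^ n := pow_le_pow_left₀ (le_of_lt hρf) (le_max_left _ _) n
  have h2 : ρg ^ n ≤ max ρf ρg ^ n := pow_le_pow_left₀ (le_of_lt hρg) (le_max_right _ _) n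
  have hMn := (hpos n).le
  calc ‖iteratedDeriv n (fun x => f x + g x) x‖
      ≤ ‖iteratedDeriv n f x‖ + ‖iteratedDeriv n g x‖ := key
    _ ≤ Cf * ρf ^ n * M n + Cg * ρg ^ n * M n := add_le_add (hbf n x hx) (hbg n x hx)
    _ ≤ Cf * max ρf ρg ^ n * M n + Cg * max ρf ρg ^ n * M n := by
        gcongr
    _ = (Cf + Cg) * max ρf ρg ^ n * M n := by ring

lemma ggs_carleman_neg {f : ℝ → ℂ} (hf : f ∈ CarlemanClass M) :
    (fun x => -(f x)) ∈ CarlemanClass M := by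
  refine ⟨hf.1.neg, fun α β => ?_⟩
  obtain ⟨C, ρ, hC, hρ, hb⟩ := hf.2 α β
  exact ⟨C, ρ, hC, hρ, fun n x hx => by rw [show (fun x => -f x) = -f from rfl, iteratedDeriv_neg, norm_neg]; exact hb n x hx⟩

lemma ggs_carleman_sub (hpos : ∀ n, 0 < M n) {f g : ℝ → ℂ}
    (hf : f ∈ CarlemanClass M) (hg : g ∈ CarlemanClass M) :
    (fun x => f x - g x) ∈ CarlemanClass M := by
  have := ggs_carleman_add hpos hf (ggs_carleman_neg hg)
  simpa [sub_eq_add_neg] using this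

lemma ggs_carleman_const_mul (hpos : ∀ n, 0 < M n) (c : ℂ) {f : ℝ → ℂ} (hf : f ∈ CarlemanClass M) :
    (fun x => c * f x) ∈ CarlemanClass M := by
  refine ⟨contDiff_const.mul hf.1, fun α β => ?_⟩
  obtain ⟨C, ρ, hC, hρ, hb⟩ := hf.2 α β
  refine ⟨C * (‖c‖ + 1), ρ, by positivity, hρ, fun n x hx => ?_⟩
  have key : ‖iteratedDeriv n (fun x => c * f x) x‖ ≤ ‖c‖ * ‖iteratedDeriv n f x‖ := by
    rw [← norm_iteratedFDeriv_eq_norm_iteratedDeriv, ← norm_iteratedFDeriv_eq_norm_iteratedDeriv]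
    have hfun : (fun x : ℝ => c * f x) = c • f := by
      funext x; simp [Pi.smul_apply, smul_eq_mul]
    have heq := iteratedFDeriv_const_smul_apply (i := n) (f := f) (x := x) (a := c)
      (ggs_contDiff_nat hf.1 n).contDiffAt
    rw [hfun, heq]
    exact norm_smul_le c (iteratedFDeriv ℝ n f x)
  refine le_trans key ?_
  have := hb n x hx
  nlinarith [norm_nonneg c, norm_nonneg (iteratedDeriv n f x), hpos n,
    mul_pos hC (pow_pos hρ n)]

lemma ggs_carleman_star {f : ℝ → ℂ} (hf : f ∈ CarlemanClass M) :
    (fun x => starRingEnd ℂ (f x)) ∈ CarlemanClass M := by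
  have hsm : ContDiff ℝ (⊤:ℕ∞) (fun x => starRingEnd ℂ (f x)) :=
    Complex.conjCLE.contDiff.comp hf.1
  refine ⟨hsm, fun α β => ?_⟩
  obtain ⟨C, ρ, hC, hρ, hb⟩ := hf.2 α β
  refine ⟨C, ρ, hC, hρ, fun n x hx => ?_⟩
  have key : ‖iteratedDeriv n (fun x => starRingEnd ℂ (f x)) x‖ = ‖iteratedDeriv n f x‖ := by
    rw [← norm_iteratedFDeriv_eq_norm_iteratedDeriv, ← norm_iteratedFDeriv_eq_norm_iteratedDeriv]
    exact Complex.conjLIE.norm_iteratedFDeriv_comp_left f x n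
  rw [key]; exact hb n x hx

lemma ggs_carleman_affine (hpos : ∀ n, 0 < M n) {f : ℝ → ℂ} (hf : f ∈ CarlemanClass M)
    (k c : ℝ) : (fun x => f (k * x + c)) ∈ CarlemanClass M := by
  have hsm : ContDiff ℝ (⊤:ℕ∞) (fun x => f (k * x + c)) :=
    hf.1.comp ((contDiff_const.mul contDiff_id).add contDiff_const)
  refine ⟨hsm, fun α β => ?_⟩
  obtain ⟨C, ρ, hC, hρ, hb⟩ := hf.2 (min (k*α+c) (k*β+c)) (max (k*α+c) (k*β+c))
  refine ⟨C, ρ * (|k| + 1), hC, by positivity, fun n x hx => ?_⟩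
  -- iterated derivative formula
  have step1 : iteratedDeriv n (fun x => f (k * x + c)) x
      = k ^ n • iteratedDeriv n (fun y => f (y + c)) (k * x) := by
    have h1 : ContDiff ℝ (n : WithTop ℕ∞) (fun y => f (y + c)) :=
      ggs_contDiff_nat (hf.1.comp (contDiff_id.add contDiff_const)) n
    have := iteratedDeriv_comp_const_smul (n := n) (f := fun y => f (y + c)) h1 k
    exact congrFun this x
  have step2 : iteratedDeriv n (fun y => f (y + c)) (k * x) = iteratedDeriv n f (k * x + c) :=
    congrFun (iteratedDeriv_comp_add_const n f c) (k * x)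
  rw [step1, step2, norm_smul]
  have hmem : k * x + c ∈ Set.Icc (min (k*α+c) (k*β+c)) (max (k*α+c) (k*β+c)) := by
    rcases le_total 0 k with hk | hk
    · constructor
      · exact le_trans (min_le_left _ _) (by nlinarith [hx.1, hx.2])
      · exact le_trans (by nlinarith [hx.1, hx.2]) (le_max_right _ _)
    · constructor
      · exact le_trans (min_le_right _ _) (by nlinarith [hx.1, hx.2])
      · exact le_trans (by nlinarith [hx.1, hx.2]) (le_max_left _ _)
  have hb' := hb n _ hmem
  have hknorm : ‖k ^ n‖ = |k| ^ n := by
    rw [norm_pow]; rfl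
  rw [hknorm]
  have h1 : |k| ^ n * ‖iteratedDeriv n f (k * x + c)‖ ≤ |k| ^ n * (C * ρ ^ n * M n) := by
    apply mul_le_mul_of_nonneg_left hb' (by positivity)
  calc |k| ^ n * ‖iteratedDeriv n f (k * x + c)‖ ≤ |k| ^ n * (C * ρ ^ n * M n) := h1
    _ = C * (ρ * |k|) ^ n * M n := by ring
    _ ≤ C * (ρ * (|k| + 1)) ^ n * M n := by
        have h2 : (ρ * |k|) ^ n ≤ (ρ * (|k| + 1)) ^ n := by
          apply pow_le_pow_left₀ (by positivity)
          nlinarith [abs_nonneg k]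
        have := (hpos n).le
        gcongr
end Closure
section Mul
variable {M : ℕ → ℝ}

lemma ggs_carleman_mul (hpos : ∀ n, 0 < M n) (hM0 : M 0 = 1)
    (hlc : ∀ n : ℕ, (ggsm M (n+1)) ^ 2 ≤ ggsm M n * ggsm M (n+2))
    {f g : ℝ → ℂ} (hf : f ∈ CarlemanClass M) (hg : g ∈ CarlemanClass M) :
    (fun x => f x * g x) ∈ CarlemanClass M := by
  refine ⟨hf.1.mul hg.1, fun α β => ?_⟩
  obtain ⟨Cf, ρf, hCf, hρf, hbf⟩ := hf.2 α β
  obtain ⟨Cg, ρg, hCg, hρg, hbg⟩ := hg.2 α β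
  set ρ := max ρf ρg with hρdef
  have hρ : 0 < ρ := lt_max_of_lt_left hρf
  refine ⟨Cf * Cg, 2 * ρ, by positivity, by positivity, fun n x hx => ?_⟩
  have key : ‖iteratedDeriv n (fun x => f x * g x) x‖ ≤ ∑ i ∈ Finset.range (n + 1),
      (n.choose i : ℝ) * ‖iteratedDeriv i f x‖ * ‖iteratedDeriv (n - i) g x‖ := by
    rw [← norm_iteratedFDeriv_eq_norm_iteratedDeriv]
    have := norm_iteratedFDeriv_mul_le (𝕜 := ℝ) (N := ((⊤:ℕ∞) : WithTop ℕ∞))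
      hf.1 hg.1 x (n := n) (by exact_mod_cast le_top)
    refine le_trans this (le_of_eq ?_)
    apply Finset.sum_congr rfl
    intro i _
    rw [norm_iteratedFDeriv_eq_norm_iteratedDeriv, norm_iteratedFDeriv_eq_norm_iteratedDeriv]
  have step : ∀ i ∈ Finset.range (n+1),
      (n.choose i : ℝ) * ‖iteratedDeriv i f x‖ * ‖iteratedDeriv (n - i) g x‖
        ≤ (Cf * Cg) * ρ ^ n * M n := by
    intro i hi
    have hin : i ≤ n := Nat.lt_succ_iff.mp (Finset.mem_range.mp hi)
    have h1 := hbf i x hx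
    have h2 := hbg (n - i) x hx
    have hρf' : ρf ^ i ≤ ρ ^ i := pow_le_pow_left₀ hρf.le (le_max_left _ _) i
    have hρg' : ρg ^ (n-i) ≤ ρ ^ (n-i) := pow_le_pow_left₀ hρg.le (le_max_right _ _) (n-i)
    have hmm : (n.choose i : ℝ) * M i * M (n - i) ≤ M n := ggs_choose_mul hpos hM0 hlc hin
    have hch : (0:ℝ) ≤ (n.choose i : ℝ) := Nat.cast_nonneg _
    have e1 : (n.choose i : ℝ) * ‖iteratedDeriv i f x‖ * ‖iteratedDeriv (n - i) g x‖
        ≤ (n.choose i : ℝ) * (Cf * ρf ^ i * M i) * (Cg * ρg ^ (n-i) * M (n-i)) := by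
      apply mul_le_mul
      · apply mul_le_mul_of_nonneg_left h1 hch
      · exact h2
      · exact norm_nonneg _
      · exact mul_nonneg hch (mul_nonneg (mul_nonneg hCf.le (pow_nonneg hρf.le i)) (hpos i).le)
    have e2 : (n.choose i : ℝ) * (Cf * ρf ^ i * M i) * (Cg * ρg ^ (n-i) * M (n-i))
        ≤ (n.choose i : ℝ) * (Cf * ρ ^ i * M i) * (Cg * ρ ^ (n-i) * M (n-i)) := by
      have := (hpos i).le
      have := (hpos (n-i)).le
      gcongr
    have hpowe : ρ ^ i * ρ ^ (n-i) = ρ ^ n := by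
      rw [← pow_add, Nat.add_sub_cancel' hin]
    have e3 : (n.choose i : ℝ) * (Cf * ρ ^ i * M i) * (Cg * ρ ^ (n-i) * M (n-i))
        = (Cf * Cg) * ρ ^ n * ((n.choose i : ℝ) * M i * M (n-i)) := by
      linear_combination ((n.choose i : ℝ) * M i * M (n-i) * Cf * Cg) * hpowe
    calc (n.choose i : ℝ) * ‖iteratedDeriv i f x‖ * ‖iteratedDeriv (n - i) g x‖
        ≤ (n.choose i : ℝ) * (Cf * ρf ^ i * M i) * (Cg * ρg ^ (n-i) * M (n-i)) := e1
      _ ≤ (n.choose i : ℝ) * (Cf * ρ ^ i * M i) * (Cg * ρ ^ (n-i) * M (n-i)) := e2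
      _ = (Cf * Cg) * ρ ^ n * ((n.choose i : ℝ) * M i * M (n-i)) := e3
      _ ≤ (Cf * Cg) * ρ ^ n * M n := by
          apply mul_le_mul_of_nonneg_left hmm (by positivity)
  have hsum : ∑ i ∈ Finset.range (n + 1),
      (n.choose i : ℝ) * ‖iteratedDeriv i f x‖ * ‖iteratedDeriv (n - i) g x‖
        ≤ (n+1 : ℝ) * ((Cf * Cg) * ρ ^ n * M n) := by
    calc ∑ i ∈ Finset.range (n + 1), (n.choose i : ℝ) * ‖iteratedDeriv i f x‖ * ‖iteratedDeriv (n - i) g x‖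
        ≤ ∑ _i ∈ Finset.range (n + 1), (Cf * Cg) * ρ ^ n * M n := Finset.sum_le_sum step
      _ = (n+1 : ℝ) * ((Cf * Cg) * ρ ^ n * M n) := by
          rw [Finset.sum_const, Finset.card_range]
          push_cast; ring
  have hpow : (n+1 : ℝ) ≤ 2 ^ n := by
    exact_mod_cast Nat.succ_le_of_lt (Nat.lt_two_pow_self (n := n))
  calc ‖iteratedDeriv n (fun x => f x * g x) x‖
      ≤ (n+1 : ℝ) * ((Cf * Cg) * ρ ^ n * M n) := le_trans key hsum
    _ ≤ 2 ^ n * ((Cf * Cg) * ρ ^ n * M n) := by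
        exact mul_le_mul_of_nonneg_right hpow
          (mul_nonneg (mul_nonneg (by positivity) (pow_nonneg hρ.le n)) (hpos n).le)
    _ = (Cf * Cg) * (2 * ρ) ^ n * M n := by rw [mul_pow]; ring

lemma ggs_carleman_of_deriv (hpos : ∀ n, 0 < M n) (hmono : ∀ n : ℕ, M n ≤ M (n+1))
    {f : ℝ → ℂ} (hf : ContDiff ℝ (⊤:ℕ∞) f) (c : ℝ) (hbd : ∀ x, ‖f x‖ ≤ c)
    (hd : deriv f ∈ CarlemanClass M) : f ∈ CarlemanClass M := by
  refine ⟨hf, fun α β => ?_⟩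
  obtain ⟨C, ρ, hC, hρ, hb⟩ := hd.2 α β
  set ρ' := max ρ 1 with hρ'def
  have hρ'1 : 1 ≤ ρ' := le_max_right _ _
  have hρρ' : ρ ≤ ρ' := le_max_left _ _
  set C' := max C ((c+1) / M 0) with hC'def
  have hC' : 0 < C' := lt_max_of_lt_left hC
  refine ⟨C', ρ', hC', by positivity, fun n x hx => ?_⟩
  cases n with
  | zero =>
    simp only [iteratedDeriv_zero, pow_zero, mul_one]
    have h0 := hpos 0
    have hc : 0 ≤ c := le_trans (norm_nonneg _) (hbd x)
    calc ‖f x‖ ≤ c := hbd x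
      _ ≤ ((c+1)/M 0) * M 0 := by rw [div_mul_cancel₀]; linarith; exact ne_of_gt h0
      _ ≤ C' * M 0 := by
          apply mul_le_mul_of_nonneg_right (le_max_right _ _) h0.le
  | succ n =>
    have hstep : iteratedDeriv (n+1) f x = iteratedDeriv n (deriv f) x := by
      rw [iteratedDeriv_succ']
    rw [hstep]
    have hMn : M n ≤ M (n+1) := hmono n
    have hρn : ρ ^ n ≤ ρ' ^ (n+1) := by
      calc ρ ^ n ≤ ρ' ^ n := pow_le_pow_left₀ hρ.le hρρ' n
        _ ≤ ρ' ^ (n+1) := pow_le_pow_right₀ hρ'1 (Nat.le_succ n)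
    calc ‖iteratedDeriv n (deriv f) x‖ ≤ C * ρ ^ n * M n := hb n x hx
      _ ≤ C' * ρ' ^ (n+1) * M (n+1) := by
          apply mul_le_mul
          · apply mul_le_mul (le_max_left _ _) hρn (by positivity) hC'.le
          · exact hMn
          · exact (hpos n).le
          · have h1' : (0:ℝ) < ρ' := lt_of_lt_of_le one_pos hρ'1
            exact mul_nonneg hC'.le (pow_nonneg h1'.le _)
end Mul
lemma ggs_one_le_inf : (1 : WithTop ℕ∞) ≤ ((⊤:ℕ∞) : WithTop ℕ∞) := by exact_mod_cast le_top

section Glue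
variable {M : ℕ → ℝ}

noncomputable def ggsGlue (x₀ : ℝ) (f : ℝ → ℂ) : ℝ → ℂ := fun x => if x₀ ≤ x then f x else 0

lemma ggsGlue_norm_le (x₀ : ℝ) (f : ℝ → ℂ) (x : ℝ) : ‖ggsGlue x₀ f x‖ ≤ ‖f x‖ := by
  unfold ggsGlue
  split
  · exact le_refl _
  · simp
lemma ggsGlue_hasDerivAt {x₀ : ℝ} {f : ℝ → ℂ} (hf : Differentiable ℝ f)
    (h0 : f x₀ = 0) (h1 : deriv f x₀ = 0) (x : ℝ) :
    HasDerivAt (ggsGlue x₀ f) (ggsGlue x₀ (deriv f) x) x := by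
  rcases lt_trichotomy x x₀ with hx | rfl | hx
  · have hval : ggsGlue x₀ (deriv f) x = 0 := if_neg (not_le.mpr hx)
    rw [hval]
    have hev : (fun _ : ℝ => (0:ℂ)) =ᶠ[nhds x] ggsGlue x₀ f := by
      filter_upwards [Iio_mem_nhds hx] with t ht
      exact (if_neg (not_le.mpr ht)).symm
    exact (hasDerivAt_const x (0:ℂ)).congr_of_eventuallyEq hev.symm
  · have hval : ggsGlue x (deriv f) x = deriv f x := if_pos le_rfl
    rw [hval, h1]
    rw [hasDerivAt_iff_isLittleO]
    have hg0 : ggsGlue x f x = 0 := by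
      show (if x ≤ x then f x else 0) = 0
      rw [if_pos le_rfl, h0]
    simp only [hg0, smul_zero, sub_zero]
    have hlo : (fun x' => f x') =o[nhds x] fun x' => x' - x := by
      have := hasDerivAt_iff_isLittleO.mp ((hf.differentiableAt (x := x)).hasDerivAt)
      rw [h1] at this
      simpa [h0] using this
    have hOO : (fun x' => ggsGlue x f x') =O[nhds x] fun x' => f x' :=
      Asymptotics.isBigO_of_le _ (fun x' => ggsGlue_norm_le x f x')
    exact hOO.trans_isLittleO hlo
  · have hval : ggsGlue x₀ (deriv f) x = deriv f x := if_pos hx.le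
    rw [hval]
    have hev : f =ᶠ[nhds x] ggsGlue x₀ f := by
      filter_upwards [Ioi_mem_nhds hx] with t ht
      exact (if_pos ht.le).symm
    exact ((hf.differentiableAt (x := x)).hasDerivAt).congr_of_eventuallyEq hev.symm

lemma ggsGlue_deriv {x₀ : ℝ} {f : ℝ → ℂ} (hf : Differentiable ℝ f)
    (h0 : f x₀ = 0) (h1 : deriv f x₀ = 0) :
    deriv (ggsGlue x₀ f) = ggsGlue x₀ (deriv f) :=
  funext fun x => (ggsGlue_hasDerivAt hf h0 h1 x).deriv

lemma ggsGlue_contDiff_iteratedDeriv {x₀ : ℝ} :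
    ∀ (n : ℕ) (f : ℝ → ℂ), ContDiff ℝ (⊤:ℕ∞) f → (∀ k, iteratedDeriv k f x₀ = 0) →
    ContDiff ℝ (n : WithTop ℕ∞) (ggsGlue x₀ f) ∧
      iteratedDeriv n (ggsGlue x₀ f) = ggsGlue x₀ (iteratedDeriv n f) := by
  intro n
  induction n with
  | zero =>
    intro f hf hflat
    constructor
    · simp only [Nat.cast_zero]
      rw [contDiff_zero]
      have hdiff : Differentiable ℝ (ggsGlue x₀ f) := fun x =>
        (ggsGlue_hasDerivAt (hf.differentiable (lt_of_lt_of_le zero_lt_one ggs_one_le_inf).ne') (by simpa using hflat 0)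
          (by have := hflat 1; rwa [iteratedDeriv_one] at this) x).differentiableAt
      exact hdiff.continuous
    · simp [iteratedDeriv_zero]
  | succ n ih =>
    intro f hf hflat
    have h0 : f x₀ = 0 := by simpa using hflat 0
    have h1 : deriv f x₀ = 0 := by have := hflat 1; rwa [iteratedDeriv_one] at this
    have hdiff : Differentiable ℝ (ggsGlue x₀ f) := fun x =>
      (ggsGlue_hasDerivAt (hf.differentiable (lt_of_lt_of_le zero_lt_one ggs_one_le_inf).ne') h0 h1 x).differentiableAt
    have hderiv : deriv (ggsGlue x₀ f) = ggsGlue x₀ (deriv f) :=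
      ggsGlue_deriv (hf.differentiable (lt_of_lt_of_le zero_lt_one ggs_one_le_inf).ne') h0 h1
    have hfd : ContDiff ℝ (⊤:ℕ∞) (deriv f) := (contDiff_infty_iff_deriv.mp hf).2
    have hfdflat : ∀ k, iteratedDeriv k (deriv f) x₀ = 0 := by
      intro k
      have := hflat (k+1)
      rwa [iteratedDeriv_succ'] at this
    obtain ⟨ihc, ihd⟩ := ih (deriv f) hfd hfdflat
    constructor
    · have hcast : ((n+1 : ℕ) : WithTop ℕ∞) = (n : WithTop ℕ∞) + 1 := by
        push_cast; rfl
      rw [hcast, contDiff_succ_iff_deriv]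
      refine ⟨hdiff, by simp, ?_⟩
      rw [hderiv]; exact ihc
    · rw [iteratedDeriv_succ', hderiv, ihd, ← iteratedDeriv_succ']

lemma ggs_carleman_glue (x₀ : ℝ) {f : ℝ → ℂ} (hf : f ∈ CarlemanClass M)
    (hflat : ∀ k, iteratedDeriv k f x₀ = 0) : ggsGlue x₀ f ∈ CarlemanClass M := by
  constructor
  · rw [show ((⊤:ℕ∞) : WithTop ℕ∞) = ((⊤:ℕ∞) : WithTop ℕ∞) from rfl]
    rw [contDiff_infty]
    intro n
    exact (ggsGlue_contDiff_iteratedDeriv n f hf.1 hflat).1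
  · intro α β
    obtain ⟨C, ρ, hC, hρ, hb⟩ := hf.2 α β
    refine ⟨C, ρ, hC, hρ, fun n x hx => ?_⟩
    rw [(ggsGlue_contDiff_iteratedDeriv n f hf.1 hflat).2]
    exact le_trans (ggsGlue_norm_le _ _ _) (hb n x hx)
end Glue
section Seed
variable {M : ℕ → ℝ}

lemma ggs_seed_of (hpos : ∀ n, 0 < M n) (hM0 : M 0 = 1)
    (hlc : ∀ n : ℕ, (ggsm M (n+1)) ^ 2 ≤ ggsm M n * ggsm M (n+2))
    {f : ℝ → ℂ} (hmem : f ∈ CarlemanClass M) {x₀ t : ℝ}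
    (hflat : ∀ k, iteratedDeriv k f x₀ = 0) (hx : x₀ < t) (hne : f t ≠ 0) :
    ∃ (u : ℝ → ℂ) (U : ℝ → ℝ) (p q : ℝ), u ∈ CarlemanClass M ∧ p < q ∧
      (∀ x, u x = (U x : ℂ)) ∧ (∀ x, 0 ≤ U x) ∧ (∀ x ≤ p, U x = 0) ∧ 0 < U q := by
  set w := ggsGlue x₀ f with hw
  have hwmem : w ∈ CarlemanClass M := ggs_carleman_glue x₀ hmem hflat
  have hwt : w t = f t := if_pos hx.le
  refine ⟨fun x => w x * starRingEnd ℂ (w x), fun x => Complex.normSq (w x), x₀, t,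
    ggs_carleman_mul hpos hM0 hlc hwmem (ggs_carleman_star hwmem), hx, ?_, ?_, ?_, ?_⟩
  · intro x; exact Complex.mul_conj (w x)
  · intro x; exact Complex.normSq_nonneg (w x)
  · intro x hxle
    have hwx : w x = 0 := by
      rcases lt_or_eq_of_le hxle with h | h
      · exact if_neg (not_le.mpr h)
      · rw [h]
        show (if x₀ ≤ x₀ then f x₀ else 0) = 0
        rw [if_pos le_rfl]
        simpa using hflat 0
    show Complex.normSq (w x) = 0
    rw [hwx]; simp
  · show 0 < Complex.normSq (w t)
    rw [hwt]
    exact Complex.normSq_pos.mpr hne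

lemma ggs_exists_seed (hpos : ∀ n, 0 < M n) (hM0 : M 0 = 1)
    (hlc : ∀ n : ℕ, (ggsm M (n+1)) ^ 2 ≤ ggsm M n * ggsm M (n+2))
    (hnq : Nonquasianalytic M) :
    ∃ (u : ℝ → ℂ) (U : ℝ → ℝ) (p q : ℝ), u ∈ CarlemanClass M ∧ p < q ∧
      (∀ x, u x = (U x : ℂ)) ∧ (∀ x, 0 ≤ U x) ∧ (∀ x ≤ p, U x = 0) ∧ 0 < U q := by
  obtain ⟨f₀, hf₀mem, hf₀ne, x₀, hflat⟩ := hnq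
  obtain ⟨t, ht⟩ := Function.ne_iff.mp hf₀ne
  have htx : f₀ t ≠ 0 := ht
  have hf00 : f₀ x₀ = 0 := by simpa using hflat 0
  rcases lt_trichotomy x₀ t with h | h | h
  · exact ggs_seed_of hpos hM0 hlc hf₀mem hflat h htx
  · exact absurd (h ▸ hf00) htx
  · -- reflect
    set f₁ : ℝ → ℂ := fun x => f₀ ((-1) * x + 2 * x₀) with hf₁
    have hf₁mem : f₁ ∈ CarlemanClass M := ggs_carleman_affine hpos hf₀mem (-1) (2*x₀)
    have hf₁flat : ∀ k, iteratedDeriv k f₁ x₀ = 0 := by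
      intro k
      have e1 : f₁ = fun x => (fun z => f₀ (2*x₀ + z)) (-x) := by
        funext x; simp [hf₁]; ring_nf
      rw [e1, iteratedDeriv_comp_neg k (fun z => f₀ (2*x₀ + z)) x₀]
      have e2 := congrFun (iteratedDeriv_comp_const_add k f₀ (2*x₀)) (-x₀)
      rw [e2]
      have : 2*x₀ + -x₀ = x₀ := by ring
      rw [this, hflat k, smul_zero]
    have hx1 : x₀ < 2*x₀ - t := by linarith
    have hne1 : f₁ (2*x₀ - t) ≠ 0 := by
      have : (-1) * (2*x₀ - t) + 2*x₀ = t := by ring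
      simpa [hf₁, this] using htx
    exact ggs_seed_of hpos hM0 hlc hf₁mem hf₁flat hx1 hne1
end Seed
section Cutoff
variable {M : ℕ → ℝ}

lemma ggs_carleman_congr {f g : ℝ → ℂ} (h : f = g) (hf : f ∈ CarlemanClass M) :
    g ∈ CarlemanClass M := h ▸ hf

lemma ggs_exists_cutoff (hpos : ∀ n, 0 < M n) (hM0 : M 0 = 1) (hM1 : M 0 ≤ M 1)
    (hlc : ∀ n : ℕ, (ggsm M (n+1)) ^ 2 ≤ ggsm M n * ggsm M (n+2))
    (hnq : Nonquasianalytic M) (a b : ℝ) (hab : a < b) :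
    ∃ φ : ℝ → ℝ, (fun x => (φ x : ℂ)) ∈ CarlemanClass M ∧ (∀ x, 0 ≤ φ x ∧ φ x ≤ 1) ∧
      (∀ x ≤ a, φ x = 1) ∧ (∀ x, b ≤ x → φ x = 0) := by
  obtain ⟨u, U, p, q, humem, hpq, huU, hU0, hUzero, hUq⟩ := ggs_exists_seed hpos hM0 hlc hnq
  set c : ℝ := (a + b) / 2 with hc
  have hac : a < c := by simp only [hc]; linarith
  have hcb : c < b := by simp only [hc]; linarith
  set k₁ : ℝ := (q - p) / (c - a) with hk₁
  set k₂ : ℝ := (p - q) / (b - c) with hk₂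
  set σ : ℝ → ℝ := fun x => k₁ * x + (p - k₁ * a) with hσ
  set τ : ℝ → ℝ := fun x => k₂ * x + (p - k₂ * b) with hτ
  have hk₁pos : 0 < k₁ := div_pos (by linarith) (by linarith)
  have hk₂neg : k₂ < 0 := div_neg_of_neg_of_pos (by linarith) (by linarith)
  have hσa : σ a = p := by simp [hσ]
  have hca : c - a ≠ 0 := by intro h; linarith [hac]
  have hbc : b - c ≠ 0 := by intro h; linarith [hcb]
  have hkca : k₁ * (c - a) = q - p := by
    rw [hk₁, div_mul_cancel₀ _ hca]
  have hσc : σ c = q := by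
    show k₁ * c + (p - k₁ * a) = q
    linear_combination hkca
  have hτb : τ b = p := by simp [hτ]
  have hkcb : k₂ * (c - b) = q - p := by
    rw [hk₂]
    field_simp
    ring
  have hτc : τ c = q := by
    show k₂ * c + (p - k₂ * b) = q
    linear_combination hkcb
  -- the bump
  set B : ℝ → ℝ := fun x => U (σ x) * U (τ x) with hB
  set βC : ℝ → ℂ := fun x => u (σ x) * u (τ x) with hβC
  have hβCmem : βC ∈ CarlemanClass M := by
    apply ggs_carleman_mul hpos hM0 hlc
    · exact ggs_carleman_affine hpos humem k₁ (p - k₁ * a)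
    · exact ggs_carleman_affine hpos humem k₂ (p - k₂ * b)
  have hβB : ∀ x, βC x = ((B x : ℝ) : ℂ) := by
    intro x
    simp only [hβC, hB, huU]
    push_cast
    ring
  have hBcont : Continuous B := by
    have hcont : Continuous βC := hβCmem.1.continuous
    have : Continuous fun x => (βC x).re := Complex.continuous_re.comp hcont
    refine this.congr fun x => ?_
    rw [hβB x]
    simp
  have hB0 : ∀ x, 0 ≤ B x := fun x => mul_nonneg (hU0 _) (hU0 _)
  have hBa : ∀ x ≤ a, B x = 0 := by
    intro x hx
    have : σ x ≤ p := by
      rw [← hσa]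
      simp only [hσ]
      nlinarith
    rw [hB]
    simp only
    rw [hUzero _ this, zero_mul]
  have hBb : ∀ x, b ≤ x → B x = 0 := by
    intro x hx
    have : τ x ≤ p := by
      rw [← hτb]
      simp only [hτ]
      nlinarith
    rw [hB]
    simp only
    rw [hUzero _ this, mul_zero]
  have hBc : 0 < B c := by
    rw [hB]
    simp only
    rw [hσc, hτc]
    exact mul_pos hUq hUq
  -- positive integral
  obtain ⟨ε, hε, hball⟩ : ∃ ε > 0, ∀ x, |x - c| < ε → B c / 2 ≤ B x := by
    have hev : ∀ᶠ x in nhds c, B c / 2 ≤ B x := by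
      have hmem : Set.Ioi (B c / 2) ∈ nhds (B c) := Ioi_mem_nhds (by linarith)
      filter_upwards [hBcont.continuousAt.preimage_mem_nhds hmem] with x hx
      exact le_of_lt hx
    obtain ⟨ε, hε, hb⟩ := Metric.eventually_nhds_iff_ball.mp hev
    refine ⟨ε, hε, fun x hx => ?_⟩
    exact hb x (by rwa [Metric.mem_ball, Real.dist_eq])
  set η : ℝ := min (ε / 2) (min ((c - a) / 2) ((b - c) / 2)) with hη
  have hηpos : 0 < η := by
    apply lt_min (by linarith) (lt_min (by linarith) (by linarith))
  have hη1 : a ≤ c - η := by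
    have : η ≤ (c - a) / 2 := le_trans (min_le_right _ _) (min_le_left _ _)
    linarith
  have hη2 : c + η ≤ b := by
    have : η ≤ (b - c) / 2 := le_trans (min_le_right _ _) (min_le_right _ _)
    linarith
  have hη3 : c - η ≤ c + η := by linarith
  have hint : ∀ α β : ℝ, IntervalIntegrable B MeasureTheory.volume α β := fun α β =>
    hBcont.intervalIntegrable α β
  set I : ℝ := ∫ t in a..b, B t with hI
  have hIpos : 0 < I := by
    have hsplit1 : (∫ t in a..(c-η), B t) + (∫ t in (c-η)..(c+η), B t) = ∫ t in a..(c+η), B t :=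
      intervalIntegral.integral_add_adjacent_intervals (hint _ _) (hint _ _)
    have hsplit2 : (∫ t in a..(c+η), B t) + (∫ t in (c+η)..b, B t) = ∫ t in a..b, B t :=
      intervalIntegral.integral_add_adjacent_intervals (hint _ _) (hint _ _)
    have h1 : 0 ≤ ∫ t in a..(c-η), B t :=
      intervalIntegral.integral_nonneg (by linarith) (fun t _ => hB0 t)
    have h3 : 0 ≤ ∫ t in (c+η)..b, B t :=
      intervalIntegral.integral_nonneg (by linarith) (fun t _ => hB0 t)
    have h2 : η * B c ≤ ∫ t in (c-η)..(c+η), B t := by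
      have hconst : ∫ _t in (c-η)..(c+η), (B c / 2) = (2 * η) * (B c / 2) := by
        rw [intervalIntegral.integral_const, smul_eq_mul]
        ring_nf
      have hmono : (∫ _t in (c-η)..(c+η), (B c / 2)) ≤ ∫ t in (c-η)..(c+η), B t := by
        apply intervalIntegral.integral_mono_on hη3 (intervalIntegrable_const) (hint _ _)
        intro x hx
        apply hball
        have hηε : η ≤ ε / 2 := min_le_left _ _
        rw [abs_lt]
        constructor
        · linarith [hx.1]
        · linarith [hx.2]
      rw [hconst] at hmono
      linarith
    nlinarith [hBc]
  -- the primitive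
  set Φ : ℝ → ℝ := fun s => ∫ t in a..s, B t with hΦ
  have hΦderiv : ∀ s, HasDerivAt Φ (B s) s := fun s =>
    (hBcont.integral_hasStrictDerivAt a s).hasDerivAt
  have hΦzero : ∀ s ≤ a, Φ s = 0 := by
    intro s hs
    rw [hΦ]
    simp only
    rw [intervalIntegral.integral_congr (g := fun _ => (0:ℝ)) ?_, intervalIntegral.integral_zero]
    intro t ht
    rw [Set.uIcc_of_ge hs] at ht
    exact hBa t ht.2
  have hΦI : ∀ s, b ≤ s → Φ s = I := by
    intro s hs
    have hadd : (∫ t in a..b, B t) + (∫ t in b..s, B t) = ∫ t in a..s, B t :=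
      intervalIntegral.integral_add_adjacent_intervals (hint _ _) (hint _ _)
    have hz : (∫ t in b..s, B t) = 0 := by
      rw [intervalIntegral.integral_congr (g := fun _ => (0:ℝ)) ?_, intervalIntegral.integral_zero]
      intro t ht
      rw [Set.uIcc_of_le hs] at ht
      exact hBb t ht.1
    rw [hΦ]
    simp only
    rw [← hadd, hz, add_zero]
  have hΦmono : Monotone Φ := by
    intro s s' hss
    have hadd : (∫ t in a..s, B t) + (∫ t in s..s', B t) = ∫ t in a..s', B t :=
      intervalIntegral.integral_add_adjacent_intervals (hint _ _) (hint _ _)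
    have : 0 ≤ ∫ t in s..s', B t :=
      intervalIntegral.integral_nonneg hss (fun t _ => hB0 t)
    show Φ s ≤ Φ s'
    rw [hΦ]
    simp only
    linarith [hadd]
  have hΦbounds : ∀ s, 0 ≤ Φ s ∧ Φ s ≤ I := by
    intro s
    constructor
    · rcases le_total s a with h | h
      · rw [hΦzero s h]
      · have := hΦmono h
        rwa [hΦzero a le_rfl] at this
    · rcases le_total s b with h | h
      · have := hΦmono h
        rwa [hΦI b le_rfl] at this
      · rw [hΦI s h]
  -- the cutoff
  refine ⟨fun s => 1 - Φ s / I, ?_, ?_, ?_, ?_⟩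
  · -- Carleman membership
    have hΦsmooth : ContDiff ℝ (⊤:ℕ∞) Φ := by
      rw [contDiff_infty_iff_deriv]
      constructor
      · exact fun s => (hΦderiv s).differentiableAt
      · have : deriv Φ = B := funext fun s => (hΦderiv s).deriv
        rw [this]
        have hBeq : (fun x => (βC x).re) = B := funext fun x => by rw [hβB x]; simp
        rw [← hBeq]
        exact Complex.reCLM.contDiff.comp hβCmem.1
    have hsmooth : ContDiff ℝ (⊤:ℕ∞) (fun x => ((1 - Φ x / I : ℝ) : ℂ)) :=
      Complex.ofRealCLM.contDiff.comp (contDiff_const.sub (hΦsmooth.div_const I))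
    have hd : ∀ x, HasDerivAt (fun x => ((1 - Φ x / I : ℝ) : ℂ)) ((-(B x / I) : ℝ) : ℂ) x := by
      intro x
      exact (((hΦderiv x).div_const I).const_sub 1).ofReal_comp
    have hderiveq : deriv (fun x => ((1 - Φ x / I : ℝ) : ℂ))
        = fun x => ((-(1/I) : ℝ) : ℂ) * βC x := by
      funext x
      rw [(hd x).deriv, hβB]
      push_cast
      ring
    apply ggs_carleman_of_deriv hpos (ggsm_mono hpos hM0 hM1 hlc) hsmooth 1
    · intro x
      rw [Complex.norm_real, Real.norm_eq_abs]
      have := hΦbounds x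
      rw [abs_le]
      constructor
      · rw [le_sub_iff_add_le]
        have : Φ x / I ≤ 1 := by rw [div_le_one hIpos]; exact this.2
        linarith
      · have : 0 ≤ Φ x / I := div_nonneg (hΦbounds x).1 hIpos.le
        linarith
    · apply ggs_carleman_congr hderiveq.symm
      exact ggs_carleman_const_mul hpos _ hβCmem
  · intro x
    have := hΦbounds x
    constructor
    · rw [sub_nonneg, div_le_one hIpos]
      exact this.2
    · have h0 : 0 ≤ Φ x / I := div_nonneg this.1 hIpos.le
      linarith
  · intro x hx
    show 1 - Φ x / I = 1
    rw [hΦzero x hx]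
    simp
  · intro x hx
    show 1 - Φ x / I = 0
    rw [hΦI x hx, div_self (ne_of_gt hIpos)]
    ring
end Cutoff
section SumMach
variable {M : ℕ → ℝ}

lemma ggs_sum_ext {F : ℝ → ℂ} {b : ℝ} (hF0 : ∀ x, b ≤ x → F x = 0) (s : ℝ) {N : ℕ}
    (hN : ⌈b - s⌉₊ ≤ N) :
    ∑ n ∈ Finset.range N, F (s + n) = ∑ n ∈ Finset.range ⌈b - s⌉₊, F (s + n) := by
  symm
  apply Finset.sum_subset (Finset.range_subset_range.mpr hN)
  intro n _ hn
  rw [Finset.mem_range, not_lt] at hn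
  apply hF0
  have h1 : b - s ≤ (⌈b - s⌉₊ : ℝ) := Nat.le_ceil _
  have h2 : ((⌈b - s⌉₊ : ℕ) : ℝ) ≤ (n : ℝ) := Nat.cast_le.mpr hn
  linarith

lemma ggs_iteratedDeriv_sum_translates {F : ℝ → ℂ} (hF : ContDiff ℝ (⊤:ℕ∞) F) (K n : ℕ)
    (x : ℝ) :
    iteratedDeriv n (fun s => ∑ j ∈ Finset.range K, F (s + j)) x
      = ∑ j ∈ Finset.range K, iteratedDeriv n F (x + j) := by
  have h1 : ∀ j : ℕ, ContDiff ℝ (n : WithTop ℕ∞) (fun s : ℝ => F (s + j)) := fun j =>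
    ggs_contDiff_nat (hF.comp (contDiff_id.add contDiff_const)) n
  rw [iteratedDeriv_eq_iteratedFDeriv]
  have hsum := congrFun (iteratedFDeriv_sum (𝕜 := ℝ) (f := fun (j : ℕ) (s : ℝ) => F (s + j))
    (u := Finset.range K) (i := n) (fun j _ => h1 j)) x
  rw [hsum, Finset.sum_apply, ContinuousMultilinearMap.sum_apply]
  apply Finset.sum_congr rfl
  intro j _
  rw [← iteratedDeriv_eq_iteratedFDeriv]
  exact congrFun (iteratedDeriv_comp_add_const n F (j:ℝ)) x

lemma ggs_H1_mem (hpos : ∀ n, 0 < M n) {F : ℝ → ℂ} (hF : F ∈ CarlemanClass M) {b : ℝ}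
    (hF0 : ∀ x, b ≤ x → F x = 0) :
    (fun s => ∑ n ∈ Finset.range ⌈b - s⌉₊, F (s + n)) ∈ CarlemanClass M := by
  set H : ℝ → ℂ := fun s => ∑ n ∈ Finset.range ⌈b - s⌉₊, F (s + n) with hH
  have hSK_smooth : ∀ K : ℕ, ContDiff ℝ (⊤:ℕ∞) (fun s => ∑ n ∈ Finset.range K, F (s + n)) :=
    fun K => ContDiff.sum (fun j _ => hF.1.comp (contDiff_id.add contDiff_const))
  have hlocal : ∀ (α : ℝ) (s : ℝ), α < s →
      H s = ∑ n ∈ Finset.range ⌈b - α⌉₊, F (s + n) := by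
    intro α s hs
    exact (ggs_sum_ext hF0 s (Nat.ceil_le_ceil (by linarith))).symm
  constructor
  · rw [contDiff_iff_contDiffAt]
    intro x
    have hev : H =ᶠ[nhds x] (fun s => ∑ n ∈ Finset.range ⌈b - (x-1)⌉₊, F (s + n)) := by
      filter_upwards [Ioi_mem_nhds (show x - 1 < x by linarith)] with t ht
      exact hlocal (x-1) t ht
    exact ((hSK_smooth _).contDiffAt).congr_of_eventuallyEq hev
  · intro α β
    set K := ⌈b - (α-1)⌉₊ with hK
    obtain ⟨C, ρ, hC, hρ, hb⟩ := hF.2 α (β + K)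
    refine ⟨(K+1) * C, ρ, by positivity, hρ, fun n x hx => ?_⟩
    have heqon : Set.EqOn H (fun s => ∑ j ∈ Finset.range K, F (s + j)) (Set.Ioi (α-1)) :=
      fun t ht => hlocal (α-1) t ht
    have hxmem : x ∈ Set.Ioi (α - 1) := by
      have := hx.1; simp only [Set.mem_Ioi]; linarith
    have hder := heqon.iteratedDeriv_of_isOpen isOpen_Ioi n hxmem
    rw [hder, ggs_iteratedDeriv_sum_translates hF.1 K n x]
    calc ‖∑ j ∈ Finset.range K, iteratedDeriv n F (x + j)‖
        ≤ ∑ j ∈ Finset.range K, ‖iteratedDeriv n F (x + j)‖ := norm_sum_le _ _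
      _ ≤ ∑ _j ∈ Finset.range K, C * ρ ^ n * M n := by
          apply Finset.sum_le_sum
          intro j hj
          apply hb
          have hj' : (j : ℝ) ≤ (K : ℝ) := by
            exact_mod_cast (Finset.mem_range.mp hj).le
          constructor
          · have := hx.1
            have : (0:ℝ) ≤ j := Nat.cast_nonneg j
            linarith [hx.1]
          · linarith [hx.2, hj']
      _ = (K : ℝ) * (C * ρ ^ n * M n) := by
          rw [Finset.sum_const, Finset.card_range, nsmul_eq_mul]
      _ ≤ (K+1) * C * ρ ^ n * M n := by
          have h1 : (K:ℝ) ≤ (K:ℝ)+1 := by linarith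
          have := (hpos n).le
          have h2 : (0:ℝ) ≤ C * ρ ^ n * M n := by positivity
          nlinarith
end SumMach

section SumArith

lemma ggs_ceil_max (x : ℝ) : ⌈max x 0⌉ = (⌈x⌉₊ : ℤ) := by
  rcases le_total x 0 with h | h
  · rw [max_eq_right h, Int.ceil_zero, Nat.ceil_eq_zero.mpr h, Nat.cast_zero]
  · rw [max_eq_left h, (Int.natCast_ceil_eq_ceil h)]

lemma ggs_sumA (δ : ℝ → ℝ) (s : ℝ) : ∀ U : ℕ,
    ∑ k ∈ Finset.Icc (0:ℤ) ((U:ℤ) - 1), δ (s + k) = ∑ n ∈ Finset.range U, δ (s + n) := by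
  intro U
  induction U with
  | zero => simp
  | succ U ih =>
    have hins : Finset.Icc (0:ℤ) (((U:ℤ)+1) - 1) = insert (U:ℤ) (Finset.Icc 0 ((U:ℤ)-1)) := by
      ext k
      simp only [Finset.mem_Icc, Finset.mem_insert]
      omega
    have hnot : (U:ℤ) ∉ Finset.Icc (0:ℤ) ((U:ℤ)-1) := by
      simp only [Finset.mem_Icc]
      omega
    rw [show ((U+1:ℕ):ℤ) - 1 = ((U:ℤ)+1) - 1 by push_cast; ring, hins, Finset.sum_insert hnot,
      ih, Finset.sum_range_succ]
    have : ((U:ℤ):ℝ) = ((U:ℕ):ℝ) := by push_cast; ring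
    rw [this]
    ring

lemma ggs_sumB (δ : ℝ → ℝ) (s : ℝ) : ∀ L : ℕ,
    ∑ k ∈ Finset.Icc (-(L:ℤ)) (-1), δ (s + k) = ∑ n ∈ Finset.range L, δ (s - ((n:ℝ) + 1)) := by
  intro L
  induction L with
  | zero => simp
  | succ L ih =>
    have hins : Finset.Icc (-((L:ℤ)+1)) (-1) = insert (-((L:ℤ)+1)) (Finset.Icc (-(L:ℤ)) (-1)) := by
      ext k
      simp only [Finset.mem_Icc, Finset.mem_insert]
      omega
    have hnot : (-((L:ℤ)+1)) ∉ Finset.Icc (-(L:ℤ)) (-1) := by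
      simp only [Finset.mem_Icc]
      omega
    rw [show (-((L+1:ℕ):ℤ)) = -((L:ℤ)+1) by push_cast; ring, hins, Finset.sum_insert hnot,
      ih, Finset.sum_range_succ]
    have harg : s + ((-((L:ℤ)+1) : ℤ) : ℝ) = s - (((L:ℕ):ℝ) + 1) := by push_cast; ring
    rw [harg]
    ring

lemma ggs_split_sum (δ : ℝ → ℝ) (s : ℝ) (L U : ℕ) :
    ∑ k ∈ Finset.Icc (-(L:ℤ)) ((U:ℤ) - 1), δ (s + k) =
      (∑ n ∈ Finset.range L, δ (s - ((n:ℝ) + 1))) + ∑ n ∈ Finset.range U, δ (s + n) := by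
  have hunion : Finset.Icc (-(L:ℤ)) ((U:ℤ) - 1)
      = Finset.Icc (-(L:ℤ)) (-1) ∪ Finset.Icc (0:ℤ) ((U:ℤ) - 1) := by
    ext k
    simp only [Finset.mem_Icc, Finset.mem_union]
    omega
  have hdisj : Disjoint (Finset.Icc (-(L:ℤ)) (-1)) (Finset.Icc (0:ℤ) ((U:ℤ) - 1)) := by
    rw [Finset.disjoint_left]
    intro k hk hk'
    simp only [Finset.mem_Icc] at hk hk'
    omega
  rw [hunion, Finset.sum_union hdisj, ggs_sumA δ s U, ggs_sumB δ s L]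
end SumArith

/-- Generalized Găvruța stability of the difference equation `f(s) - f(s+1) = χ(s)` in the
nonquasianalytic Carleman class `C_M{ℝ}`. -/
theorem ggs_difference_equation
    (a b : ℝ) (hab : a < b) (M : ℕ → ℝ) (hM : StandingAssumptions M)
    (χ : ℝ → ℂ) (hχM : χ ∈ CarlemanClass M)
    (y : ℝ → ℂ) (hy : y ∈ CarlemanClass M)
    (δ : ℝ → ℝ) (hδ : ∀ s : ℝ, 0 ≤ δ s)
    (hyδ : ∀ s : ℝ, ‖y s - y (s + 1) - χ s‖ ≤ δ s) :
    ∃ z ∈ CarlemanClass M, (∀ s : ℝ, z s - z (s + 1) = χ s) ∧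
      ∀ s : ℝ, ‖y s - z s‖ ≤
        ∑ n ∈ Finset.Icc (-⌈max (s - a) 0⌉) (⌈max (b - s) 0⌉ - 1), δ (s + (n : ℝ)) := by
  obtain ⟨hpos, hnq, _, ⟨hM0, hM1⟩, hlc, _, _⟩ := hM
  have hlc' : ∀ n : ℕ, (ggsm M (n+1)) ^ 2 ≤ ggsm M n * ggsm M (n+2) := hlc
  -- the defect
  set g : ℝ → ℂ := fun s => y s - y (s+1) - χ s with hgdef
  have hy1 : (fun s : ℝ => y (s + 1)) ∈ CarlemanClass M := by
    apply ggs_carleman_congr ?_ (ggs_carleman_affine hpos hy 1 1)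
    funext x; norm_num
  have hgM : g ∈ CarlemanClass M := by
    apply ggs_carleman_sub hpos (ggs_carleman_sub hpos hy hy1) hχM
  -- cutoff
  obtain ⟨φ, hφM, hφ01, hφ1, hφ0⟩ := ggs_exists_cutoff hpos hM0 hM1 hlc' hnq a b hab
  set F : ℝ → ℂ := fun x => (φ x : ℂ) * g x with hFdef
  set G : ℝ → ℂ := fun x => ((1 - φ x : ℝ) : ℂ) * g x with hGdef
  have hFM : F ∈ CarlemanClass M := ggs_carleman_mul hpos hM0 hlc' hφM hgM
  have hGM : G ∈ CarlemanClass M := by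
    apply ggs_carleman_mul hpos hM0 hlc' ?_ hgM
    apply ggs_carleman_congr ?_ (ggs_carleman_sub hpos (ggs_carleman_const hpos 1) hφM)
    funext x; push_cast; ring
  have hFb : ∀ x, b ≤ x → F x = 0 := by
    intro x hx
    show (φ x : ℂ) * g x = 0
    rw [hφ0 x hx]
    simp
  have hGa : ∀ x ≤ a, G x = 0 := by
    intro x hx
    show ((1 - φ x : ℝ) : ℂ) * g x = 0
    rw [hφ1 x hx]
    simp
  have hFδ : ∀ x, ‖F x‖ ≤ δ x := by
    intro x
    show ‖(φ x : ℂ) * g x‖ ≤ δ x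
    rw [norm_mul, Complex.norm_real, Real.norm_eq_abs, abs_of_nonneg (hφ01 x).1]
    calc φ x * ‖g x‖ ≤ 1 * ‖g x‖ :=
          mul_le_mul_of_nonneg_right (hφ01 x).2 (norm_nonneg _)
      _ = ‖g x‖ := one_mul _
      _ ≤ δ x := hyδ x
  have hGδ : ∀ x, ‖G x‖ ≤ δ x := by
    intro x
    show ‖((1 - φ x : ℝ) : ℂ) * g x‖ ≤ δ x
    rw [norm_mul, Complex.norm_real, Real.norm_eq_abs,
      abs_of_nonneg (by linarith [(hφ01 x).2])]
    calc (1 - φ x) * ‖g x‖ ≤ 1 * ‖g x‖ :=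
          mul_le_mul_of_nonneg_right (by linarith [(hφ01 x).1]) (norm_nonneg _)
      _ = ‖g x‖ := one_mul _
      _ ≤ δ x := hyδ x
  have hFG : ∀ x, F x + G x = g x := by
    intro x
    show (φ x : ℂ) * g x + ((1 - φ x : ℝ) : ℂ) * g x = g x
    push_cast
    ring
  -- the two half-sums
  set H₁ : ℝ → ℂ := fun s => ∑ n ∈ Finset.range ⌈b - s⌉₊, F (s + n) with hH₁def
  set H₂ : ℝ → ℂ := fun s => ∑ n ∈ Finset.range ⌈s - a⌉₊, G (s - ((n:ℝ) + 1)) with hH₂def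
  have hH₁M : H₁ ∈ CarlemanClass M := ggs_H1_mem hpos hFM hFb
  have hH₂M : H₂ ∈ CarlemanClass M := by
    set G' : ℝ → ℂ := fun x => G (-x - 1) with hG'def
    have hG'M : G' ∈ CarlemanClass M := by
      apply ggs_carleman_congr ?_ (ggs_carleman_affine hpos hGM (-1) (-1))
      funext x; show G ((-1) * x + (-1)) = G (-x - 1); ring_nf
    have hG'0 : ∀ x, -a ≤ x → G' x = 0 := by
      intro x hx
      show G (-x - 1) = 0
      exact hGa _ (by linarith)
    have hJ : (fun t => ∑ n ∈ Finset.range ⌈(-a) - t⌉₊, G' (t + n)) ∈ CarlemanClass M :=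
      ggs_H1_mem hpos hG'M hG'0
    have hcomp : (fun s : ℝ => ∑ n ∈ Finset.range ⌈(-a) - ((-1) * s + 0)⌉₊,
        G' (((-1) * s + 0) + n)) ∈ CarlemanClass M := ggs_carleman_affine hpos hJ (-1) 0
    apply ggs_carleman_congr ?_ hcomp
    funext s
    have hc1 : ⌈(-a) - ((-1) * s + 0)⌉₊ = ⌈s - a⌉₊ := by norm_num; ring_nf
    rw [hc1]
    apply Finset.sum_congr rfl
    intro n _
    show G (-(((-1) * s + 0) + n) - 1) = G (s - ((n:ℝ) + 1))
    norm_num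
    ring_nf
  -- extension lemmas
  have hH₁ext : ∀ (s : ℝ) (N : ℕ), ⌈b - s⌉₊ ≤ N →
      H₁ s = ∑ n ∈ Finset.range N, F (s + n) := by
    intro s N hN
    exact (ggs_sum_ext hFb s hN).symm
  have hH₂ext : ∀ (s : ℝ) (N : ℕ), ⌈s - a⌉₊ ≤ N →
      H₂ s = ∑ n ∈ Finset.range N, G (s - ((n:ℝ) + 1)) := by
    intro s N hN
    show ∑ n ∈ Finset.range ⌈s - a⌉₊, G (s - ((n:ℝ) + 1)) = _
    apply Finset.sum_subset (Finset.range_subset_range.mpr hN)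
    intro n _ hn
    rw [Finset.mem_range, not_lt] at hn
    apply hGa
    have h1 : s - a ≤ (⌈s - a⌉₊ : ℝ) := Nat.le_ceil _
    have h2 : ((⌈s - a⌉₊ : ℕ) : ℝ) ≤ (n : ℝ) := Nat.cast_le.mpr hn
    linarith
  -- the solution
  refine ⟨fun s => y s + (H₂ s - H₁ s), ?_, ?_, ?_⟩
  · exact ggs_carleman_add hpos hy (ggs_carleman_sub hpos hH₂M hH₁M)
  · -- functional equation
    intro s
    have e1 : H₁ s - H₁ (s+1) = F s := by
      set K := max ⌈b - s⌉₊ ⌈b - (s+1)⌉₊ with hKdef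
      have h1 : H₁ s = ∑ n ∈ Finset.range (K+1), F (s + n) :=
        hH₁ext s (K+1) (le_trans (le_max_left _ _) (Nat.le_succ K))
      have h2 : H₁ (s+1) = ∑ n ∈ Finset.range K, F ((s+1) + n) :=
        hH₁ext (s+1) K (le_max_right _ _)
      rw [h1, h2, Finset.sum_range_succ']
      have harg : ∀ n : ℕ, F (s + ((n:ℝ)+1)) = F ((s+1) + n) := by
        intro n
        congr 1
        push_cast
        ring
      have : ∑ n ∈ Finset.range K, F (s + (((n+1:ℕ)):ℝ)) = ∑ n ∈ Finset.range K, F ((s+1) + n) := by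
        apply Finset.sum_congr rfl
        intro n _
        rw [← harg n]
        congr 1
        push_cast
        ring
      rw [this]
      simp
    have e2 : H₂ (s+1) - H₂ s = G s := by
      set L := max ⌈s - a⌉₊ ⌈(s+1) - a⌉₊ with hLdef
      have h1 : H₂ (s+1) = ∑ n ∈ Finset.range (L+1), G ((s+1) - ((n:ℝ)+1)) :=
        hH₂ext (s+1) (L+1) (le_trans (le_max_right _ _) (Nat.le_succ L))
      have h2 : H₂ s = ∑ n ∈ Finset.range L, G (s - ((n:ℝ)+1)) :=
        hH₂ext s L (le_max_left _ _)
      rw [h1, h2, Finset.sum_range_succ']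
      have : ∑ n ∈ Finset.range L, G ((s+1) - (((n+1:ℕ):ℝ)+1))
          = ∑ n ∈ Finset.range L, G (s - ((n:ℝ)+1)) := by
        apply Finset.sum_congr rfl
        intro n _
        congr 1
        push_cast
        ring
      rw [this]
      norm_num
    have hgs : g s = y s - y (s+1) - χ s := rfl
    have hfg := hFG s
    show y s + (H₂ s - H₁ s) - (y (s+1) + (H₂ (s+1) - H₁ (s+1))) = χ s
    linear_combination -hgs - e1 - e2 - hfg
  · -- the estimate
    intro s
    have hval : y s - (y s + (H₂ s - H₁ s)) = H₁ s - H₂ s := by ring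
    rw [hval]
    rw [ggs_ceil_max (s - a), ggs_ceil_max (b - s), ggs_split_sum δ s ⌈s - a⌉₊ ⌈b - s⌉₊]
    have hb1 : ‖H₁ s‖ ≤ ∑ n ∈ Finset.range ⌈b - s⌉₊, δ (s + n) := by
      refine le_trans (norm_sum_le _ _) (Finset.sum_le_sum fun n _ => hFδ _)
    have hb2 : ‖H₂ s‖ ≤ ∑ n ∈ Finset.range ⌈s - a⌉₊, δ (s - ((n:ℝ)+1)) := by
      refine le_trans (norm_sum_le _ _) (Finset.sum_le_sum fun n _ => hGδ _)
    calc ‖H₁ s - H₂ s‖ ≤ ‖H₂ s‖ + ‖H₁ s‖ := by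
          rw [norm_sub_rev]
          exact norm_sub_le _ _
      _ ≤ (∑ n ∈ Finset.range ⌈s - a⌉₊, δ (s - ((n:ℝ)+1)))
            + ∑ n ∈ Finset.range ⌈b - s⌉₊, δ (s + n) := add_le_add hb2 hb1
end

section
/- Let χ : ℝ → ℂ belong to the Carleman class C_M{ℝ}, and suppose y ∈ C_M{ℝ} and δ : ℝ → [0,∞) satisfy |y(s) - y(s+1) - χ(s)| ≤ δ(s) for all s ∈ ℝ, where δ is periodic with period 1. Then there exists z ∈ C_M{ℝ} with z(s) - z(s+1) = χ(s) for all s ∈ ℝ and |y(s) - z(s)| ≤ (⌈(b-s)⁺⌉ + ⌈(s-a)⁺⌉)·δ(s) for all s ∈ ℝ, where x⁺ := max(x,0) and ⌈·⌉ is the ceiling function. -/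
open Filter Function

namespace GGS
set_option linter.unusedSectionVars false
set_option linter.unusedVariables false

variable {M : ℕ → ℝ}

/-- Convenient bound predicate. -/
def Bnd (M : ℕ → ℝ) (f : ℝ → ℂ) (α β K : ℝ) : Prop :=
  ∀ n : ℕ, ∀ x ∈ Set.Icc α β, ‖iteratedDeriv n f x‖ ≤ K ^ (n + 1) * M n

lemma mem_iff (hpos : ∀ n, 0 < M n) (f : ℝ → ℂ) :
    f ∈ CarlemanClass M ↔ ContDiff ℝ (⊤ : ℕ∞) f ∧
      ∀ α β : ℝ, ∃ K : ℝ, 1 ≤ K ∧ Bnd M f α β K := by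
  constructor
  · rintro ⟨hsm, hb⟩
    refine ⟨hsm, fun α β => ?_⟩
    obtain ⟨C, ρ, hC, hρ, h⟩ := hb α β
    refine ⟨max 1 (max C ρ), le_max_left _ _, fun n x hx => ?_⟩
    refine (h n x hx).trans ?_
    have h1 : C ≤ max 1 (max C ρ) := le_trans (le_max_left _ _) (le_max_right _ _)
    have h2 : ρ ≤ max 1 (max C ρ) := le_trans (le_max_right _ _) (le_max_right _ _)
    have : C * ρ ^ n ≤ max 1 (max C ρ) ^ (n + 1) := by
      rw [pow_succ']
      exact mul_le_mul h1 (pow_le_pow_left₀ hρ.le h2 n) (by positivity) (by positivity)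
    exact mul_le_mul_of_nonneg_right this (hpos n).le
  · rintro ⟨hsm, hb⟩
    refine ⟨hsm, fun α β => ?_⟩
    obtain ⟨K, hK, h⟩ := hb α β
    exact ⟨K, K, lt_of_lt_of_le one_pos hK, lt_of_lt_of_le one_pos hK,
      fun n x hx => by simpa [pow_succ', mul_assoc] using h n x hx⟩

lemma smooth_of_mem {f : ℝ → ℂ} (hf : f ∈ CarlemanClass M) : ContDiff ℝ (⊤ : ℕ∞) f := hf.1

section Mfacts

variable (hM : StandingAssumptions M)
include hM

lemma Mpos : ∀ n, 0 < M n := hM.1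

/-- `a n = M n / n!` is supermultiplicative. -/
lemma a_mul_a_le (j k : ℕ) :
    M j / (Nat.factorial j : ℝ) * (M k / (Nat.factorial k : ℝ)) ≤
      M (j + k) / (Nat.factorial (j + k) : ℝ) := by
  obtain ⟨hpos, -, -, ⟨hM0, hM01⟩, hlc, -, -⟩ := hM
  set a : ℕ → ℝ := fun n => M n / (Nat.factorial n : ℝ) with ha
  have hapos : ∀ n, 0 < a n := fun n => div_pos (hpos n) (by positivity)
  set r : ℕ → ℝ := fun n => a (n + 1) / a n with hr
  have hrpos : ∀ n, 0 < r n := fun n => div_pos (hapos _) (hapos _)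
  have hrmono : Monotone r := by
    apply monotone_nat_of_le_succ
    intro n
    have := hlc n
    rw [div_le_div_iff₀ (hapos _) (hapos _)]
    calc a (n + 1) * a (n + 1) = a (n+1) ^ 2 := (sq _).symm
      _ ≤ a n * a (n + 2) := this
      _ = a (n + 2) * a n := mul_comm _ _
  have hra : ∀ n, a (n + 1) = r n * a n := fun n => by
    rw [hr]; rw [div_mul_cancel₀ _ (hapos n).ne']
  induction j with
  | zero => simp [ha, hM0]
  | succ j ih =>
    have h1 : a (j + 1) * a k ≤ r (j + k) * (a (j + k)) := by
      rw [hra j, mul_assoc]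
      calc r j * (a j * a k) ≤ r j * a (j + k) :=
            mul_le_mul_of_nonneg_left ih (hrpos j).le
        _ ≤ r (j + k) * a (j + k) :=
            mul_le_mul_of_nonneg_right (hrmono (Nat.le_add_right j k)) (hapos _).le
    have : j + 1 + k = (j + k) + 1 := by omega
    rw [this]
    calc a (j+1) * a k ≤ r (j + k) * a (j + k) := h1
      _ = a (j + k + 1) := (hra (j + k)).symm

lemma choose_mul_le (n j : ℕ) (hj : j ≤ n) :
    (n.choose j : ℝ) * (M j * M (n - j)) ≤ M n := by
  have hpos := hM.1
  have key := a_mul_a_le hM j (n - j)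
  rw [Nat.add_sub_cancel' hj] at key
  have hfact : (n.choose j : ℝ) * (Nat.factorial j : ℝ) * (Nat.factorial (n - j) : ℝ)
      = (Nat.factorial n : ℝ) := by
    rw [← Nat.cast_mul, ← Nat.cast_mul, Nat.choose_mul_factorial_mul_factorial hj]
  have hjf : (0:ℝ) < (Nat.factorial j : ℝ) := by positivity
  have hnjf : (0:ℝ) < (Nat.factorial (n - j) : ℝ) := by positivity
  have hnf : (0:ℝ) < (Nat.factorial n : ℝ) := by positivity
  have := mul_le_mul_of_nonneg_left key hnf.le
  rw [div_mul_div_comm] at this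
  calc (n.choose j : ℝ) * (M j * M (n - j))
      = (Nat.factorial n : ℝ) * (M j * M (n - j) / ((Nat.factorial j : ℝ) * (Nat.factorial (n-j) : ℝ))) := by
        field_simp [← hfact]; rw [← hfact]; ring
    _ ≤ (Nat.factorial n : ℝ) * (M n / (Nat.factorial n : ℝ)) := this
    _ = M n := by field_simp

lemma Mmono : Monotone M := by
  apply monotone_nat_of_le_succ
  intro n
  have h := a_mul_a_le hM 1 n
  have hM0 : M 0 = 1 := hM.2.2.2.1.1
  have hM1 : 1 ≤ M 1 := hM0 ▸ hM.2.2.2.1.2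
  have hpos := hM.1
  have hfn : (0:ℝ) < (Nat.factorial n : ℝ) := by positivity
  have h1 : M n / (Nat.factorial n : ℝ) ≤ M (1 + n) / (Nat.factorial (1 + n) : ℝ) := by
    calc M n / (Nat.factorial n : ℝ) = 1 * (M n / (Nat.factorial n : ℝ)) := (one_mul _).symm
      _ ≤ (M 1 / (Nat.factorial 1 : ℝ)) * (M n / (Nat.factorial n : ℝ)) := by
          apply mul_le_mul_of_nonneg_right _ (div_nonneg (hpos n).le hfn.le)
          simpa using hM1
      _ ≤ _ := h
  have h2 : (Nat.factorial n : ℝ) ≤ (Nat.factorial (1 + n) : ℝ) := by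
    exact_mod_cast Nat.factorial_le (by omega)
  have := div_le_div_iff₀ hfn (Nat.cast_pos.2 (Nat.factorial_pos (1+n))) |>.1 h1
  have hle : M n * (Nat.factorial (1 + n) : ℝ) ≤ M (1 + n) * (Nat.factorial (1 + n) : ℝ) := by
    calc M n * (Nat.factorial (1 + n) : ℝ) ≤ M (1 + n) * (Nat.factorial n : ℝ) := this
      _ ≤ M (1 + n) * (Nat.factorial (1 + n) : ℝ) :=
          mul_le_mul_of_nonneg_left h2 (hpos _).le
  have := le_of_mul_le_mul_right hle (by positivity)
  simpa [Nat.add_comm] using this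

end Mfacts


section lemmas
variable (hpos : ∀ n, 0 < M n) (hM0 : M 0 = 1)
include hpos

omit hpos in
lemma itd_add {f g : ℝ → ℂ} (hf : ContDiff ℝ (⊤ : ℕ∞) f) (hg : ContDiff ℝ (⊤ : ℕ∞) g)
    (n : ℕ) (x : ℝ) :
    iteratedDeriv n (fun y => f y + g y) x = iteratedDeriv n f x + iteratedDeriv n g x := by
  have h1 : ContDiff ℝ n f := hf.of_le (by exact_mod_cast le_top)
  have h2 : ContDiff ℝ n g := hg.of_le (by exact_mod_cast le_top)
  simp only [iteratedDeriv_eq_iteratedFDeriv]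
  rw [show (fun y => f y + g y) = f + g from rfl, iteratedFDeriv_add_apply h1.contDiffAt h2.contDiffAt]
  rfl

lemma CC_add {f g : ℝ → ℂ} (hf : f ∈ CarlemanClass M) (hg : g ∈ CarlemanClass M) :
    (fun x => f x + g x) ∈ CarlemanClass M := by
  rw [mem_iff hpos] at hf hg ⊢
  obtain ⟨hf1, hf2⟩ := hf
  obtain ⟨hg1, hg2⟩ := hg
  refine ⟨hf1.add hg1, fun α β => ?_⟩
  obtain ⟨K1, hK1, hb1⟩ := hf2 α β
  obtain ⟨K2, hK2, hb2⟩ := hg2 α β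
  refine ⟨K1 + K2, by linarith, fun n x hx => ?_⟩
  rw [itd_add hf1 hg1]
  calc ‖iteratedDeriv n f x + iteratedDeriv n g x‖
      ≤ ‖iteratedDeriv n f x‖ + ‖iteratedDeriv n g x‖ := norm_add_le _ _
    _ ≤ K1 ^ (n+1) * M n + K2 ^ (n+1) * M n := add_le_add (hb1 n x hx) (hb2 n x hx)
    _ = (K1 ^ (n+1) + K2 ^ (n+1)) * M n := by ring
    _ ≤ (K1 + K2) ^ (n+1) * M n := by
        apply mul_le_mul_of_nonneg_right _ (hpos n).le
        exact pow_add_pow_le (by linarith) (by linarith) (Nat.succ_ne_zero n)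

lemma CC_neg {f : ℝ → ℂ} (hf : f ∈ CarlemanClass M) :
    (fun x => -f x) ∈ CarlemanClass M := by
  rw [mem_iff hpos] at hf ⊢
  refine ⟨hf.1.neg, fun α β => ?_⟩
  obtain ⟨K, hK, hb⟩ := hf.2 α β
  exact ⟨K, hK, fun n x hx => by
    rw [show (fun x => -f x) = -f from rfl, iteratedDeriv_neg, norm_neg]; exact hb n x hx⟩

omit hpos in
lemma itd_const : ∀ (n : ℕ) (c : ℂ), iteratedDeriv (n + 1) (fun _ : ℝ => c) = fun _ => 0 := by
  intro n
  induction n with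
  | zero =>
    intro c; funext x
    rw [iteratedDeriv_succ, iteratedDeriv_zero]
    simp
  | succ n ih =>
    intro c
    rw [iteratedDeriv_succ',
      show deriv (fun _ : ℝ => c) = fun _ => (0 : ℂ) from funext fun x => deriv_const x c]
    exact ih 0

include hM0 in
lemma CC_const (c : ℂ) : (fun _ : ℝ => c) ∈ CarlemanClass M := by
  rw [mem_iff hpos]
  refine ⟨contDiff_const, fun α β => ⟨max 1 ‖c‖, le_max_left _ _, fun n x hx => ?_⟩⟩
  match n with
  | 0 =>
    rw [iteratedDeriv_zero, pow_one, hM0, mul_one]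
    exact le_max_right _ _
  | (n+1) =>
    rw [itd_const]
    simp only [norm_zero]
    exact mul_nonneg (by positivity) (hpos _).le

include hM0 in
lemma CC_sub {f g : ℝ → ℂ} (hf : f ∈ CarlemanClass M) (hg : g ∈ CarlemanClass M) :
    (fun x => f x - g x) ∈ CarlemanClass M := by
  simpa [sub_eq_add_neg] using CC_add hpos hf (CC_neg hpos hg)

lemma CC_mul (hkey : ∀ n j : ℕ, j ≤ n → (n.choose j : ℝ) * (M j * M (n - j)) ≤ M n)
    {f g : ℝ → ℂ} (hf : f ∈ CarlemanClass M) (hg : g ∈ CarlemanClass M) :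
    (fun x => f x * g x) ∈ CarlemanClass M := by
  rw [mem_iff hpos] at hf hg ⊢
  obtain ⟨hf1, hf2⟩ := hf
  obtain ⟨hg1, hg2⟩ := hg
  refine ⟨hf1.mul hg1, fun α β => ?_⟩
  obtain ⟨K1, hK1, hb1⟩ := hf2 α β
  obtain ⟨K2, hK2, hb2⟩ := hg2 α β
  refine ⟨2 * K1 * K2, by nlinarith, fun n x hx => ?_⟩
  have hfd : ContDiff ℝ ((⊤ : ℕ∞) : WithTop ℕ∞) f := by exact_mod_cast hf1
  have hgd : ContDiff ℝ ((⊤ : ℕ∞) : WithTop ℕ∞) g := by exact_mod_cast hg1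
  have hn : (n : WithTop ℕ∞) ≤ ((⊤ : ℕ∞) : WithTop ℕ∞) := by exact_mod_cast le_top
  have lb := norm_iteratedFDeriv_mul_le hfd hgd x hn
  rw [← norm_iteratedFDeriv_eq_norm_iteratedDeriv]
  refine lb.trans ?_
  have hterm : ∀ i ∈ Finset.range (n + 1),
      (n.choose i : ℝ) * ‖iteratedFDeriv ℝ i f x‖ * ‖iteratedFDeriv ℝ (n - i) g x‖
        ≤ (K1 * K2) ^ (n + 1) * M n := by
    intro i hi
    have hin : i ≤ n := Nat.lt_succ_iff.1 (Finset.mem_range.1 hi)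
    have e1 : ‖iteratedFDeriv ℝ i f x‖ ≤ K1 ^ (i + 1) * M i := by
      rw [norm_iteratedFDeriv_eq_norm_iteratedDeriv]; exact hb1 i x hx
    have e2 : ‖iteratedFDeriv ℝ (n - i) g x‖ ≤ K2 ^ (n - i + 1) * M (n - i) := by
      rw [norm_iteratedFDeriv_eq_norm_iteratedDeriv]; exact hb2 _ x hx
    have hK1' : K1 ^ (i + 1) ≤ K1 ^ (n + 1) := pow_le_pow_right₀ hK1 (by omega)
    have hK2' : K2 ^ (n - i + 1) ≤ K2 ^ (n + 1) := pow_le_pow_right₀ hK2 (by omega)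
    calc (n.choose i : ℝ) * ‖iteratedFDeriv ℝ i f x‖ * ‖iteratedFDeriv ℝ (n - i) g x‖
        ≤ (n.choose i : ℝ) * (K1 ^ (i+1) * M i) * (K2 ^ (n-i+1) * M (n - i)) := by
          apply mul_le_mul
          · exact mul_le_mul_of_nonneg_left e1 (by positivity)
          · exact e2
          · exact norm_nonneg _
          · exact mul_nonneg (by positivity) (mul_nonneg (by positivity) (hpos i).le)
      _ = (K1 ^ (i+1) * K2 ^ (n-i+1)) * ((n.choose i : ℝ) * (M i * M (n - i))) := by ring
      _ ≤ (K1 ^ (n+1) * K2 ^ (n+1)) * M n := by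
          apply mul_le_mul
          · exact mul_le_mul hK1' hK2' (by positivity) (by positivity)
          · exact hkey n i hin
          · exact mul_nonneg (by positivity) (mul_nonneg (hpos i).le (hpos _).le)
          · positivity
      _ = (K1 * K2) ^ (n + 1) * M n := by rw [mul_pow]
  calc (∑ i ∈ Finset.range (n + 1),
        (n.choose i : ℝ) * ‖iteratedFDeriv ℝ i f x‖ * ‖iteratedFDeriv ℝ (n - i) g x‖)
      ≤ ∑ i ∈ Finset.range (n + 1), (K1 * K2) ^ (n + 1) * M n := Finset.sum_le_sum hterm
    _ = (n + 1 : ℝ) * ((K1 * K2) ^ (n + 1) * M n) := by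
        rw [Finset.sum_const, Finset.card_range]; push_cast; ring
    _ ≤ (2 : ℝ) ^ (n + 1) * ((K1 * K2) ^ (n + 1) * M n) := by
        apply mul_le_mul_of_nonneg_right _ (mul_nonneg (by positivity) (hpos n).le)
        exact_mod_cast (Nat.lt_two_pow_self (n := n + 1)).le
    _ = (2 * K1 * K2) ^ (n + 1) * M n := by rw [show (2:ℝ) * K1 * K2 = 2 * (K1 * K2) by ring, mul_pow]; ring

lemma CC_conj {f : ℝ → ℂ} (hf : f ∈ CarlemanClass M) :
    (fun x => (starRingEnd ℂ) (f x)) ∈ CarlemanClass M := by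
  rw [mem_iff hpos] at hf ⊢
  constructor
  · exact Complex.conjLIE.contDiff.comp hf.1
  · intro α β
    obtain ⟨K, hK, hb⟩ := hf.2 α β
    refine ⟨K, hK, fun n x hx => ?_⟩
    have : (fun x => (starRingEnd ℂ) (f x)) = ⇑Complex.conjLIE ∘ f := rfl
    rw [← norm_iteratedFDeriv_eq_norm_iteratedDeriv, this,
      LinearIsometryEquiv.norm_iteratedFDeriv_comp_left,
      norm_iteratedFDeriv_eq_norm_iteratedDeriv]
    exact hb n x hx

omit hpos in
lemma itd_affine {f : ℝ → ℂ} (hf : ContDiff ℝ (⊤ : ℕ∞) f) (c d : ℝ) (n : ℕ) (x : ℝ) :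
    iteratedDeriv n (fun x => f (c * x + d)) x = c ^ n • iteratedDeriv n f (c * x + d) := by
  have hg1 : ContDiff ℝ (⊤ : ℕ∞) (fun y : ℝ => f (y + d)) :=
    hf.comp (contDiff_id.add contDiff_const)
  have h1 : ContDiff ℝ n (fun y : ℝ => f (y + d)) := hg1.of_le (by exact_mod_cast le_top)
  have h2 := iteratedDeriv_comp_const_smul (f := fun y : ℝ => f (y + d)) h1 c
  have e1 : (fun x : ℝ => f (c * x + d)) = fun x : ℝ => (fun y : ℝ => f (y + d)) (c * x) := rfl
  rw [e1, h2]
  simp only [iteratedDeriv_comp_add_const]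

lemma CC_affine {f : ℝ → ℂ} (hf : f ∈ CarlemanClass M) (c d : ℝ) :
    (fun x => f (c * x + d)) ∈ CarlemanClass M := by
  rw [mem_iff hpos] at hf ⊢
  obtain ⟨hf1, hf2⟩ := hf
  have hcd : ContDiff ℝ (⊤ : ℕ∞) (fun x : ℝ => c * x + d) :=
    (contDiff_const.mul contDiff_id).add contDiff_const
  have hg1 : ContDiff ℝ (⊤ : ℕ∞) (fun y : ℝ => f (y + d)) :=
    hf1.comp (contDiff_id.add contDiff_const)
  have hitd : ∀ (n : ℕ) (x : ℝ), iteratedDeriv n (fun x => f (c * x + d)) x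
      = c ^ n • iteratedDeriv n f (c * x + d) := by
    intro n x
    have h1 : ContDiff ℝ n (fun y : ℝ => f (y + d)) := hg1.of_le (by exact_mod_cast le_top)
    have := iteratedDeriv_comp_const_smul (f := fun y : ℝ => f (y + d)) h1 c
    have e1 : (fun x : ℝ => f (c * x + d)) = fun x : ℝ => (fun y : ℝ => f (y + d)) (c * x) := rfl
    rw [e1, this]
    simp only [iteratedDeriv_comp_add_const]
  refine ⟨hf1.comp hcd, fun α β => ?_⟩
  obtain ⟨K, hK, hb⟩ := hf2 (min (c * α + d) (c * β + d)) (max (c * α + d) (c * β + d))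
  refine ⟨K * max 1 |c|, le_trans hK (le_mul_of_one_le_right (by linarith) (le_max_left _ _)),
    fun n x hx => ?_⟩
  rw [hitd n x]
  have hmem : c * x + d ∈ Set.Icc (min (c * α + d) (c * β + d)) (max (c * α + d) (c * β + d)) := by
    obtain ⟨h1, h2⟩ := hx
    rcases le_total 0 c with hc | hc
    · constructor
      · exact le_trans (min_le_left _ _) (by nlinarith)
      · exact le_trans (by nlinarith) (le_max_right _ _)
    · constructor
      · exact le_trans (min_le_right _ _) (by nlinarith)
      · exact le_trans (by nlinarith) (le_max_left _ _)
  calc ‖c ^ n • iteratedDeriv n f (c * x + d)‖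
      = |c| ^ n * ‖iteratedDeriv n f (c * x + d)‖ := by
        rw [norm_smul, norm_pow, Real.norm_eq_abs]
    _ ≤ |c| ^ n * (K ^ (n + 1) * M n) :=
        mul_le_mul_of_nonneg_left (hb n _ hmem) (by positivity)
    _ ≤ (max 1 |c|) ^ (n + 1) * (K ^ (n + 1) * M n) := by
        apply mul_le_mul_of_nonneg_right _ (mul_nonneg (by positivity) (hpos n).le)
        calc |c| ^ n ≤ (max 1 |c|) ^ n :=
              pow_le_pow_left₀ (abs_nonneg c) (le_max_right _ _) n
          _ ≤ (max 1 |c|) ^ (n + 1) := pow_le_pow_right₀ (le_max_left _ _) (by omega)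
    _ = (K * max 1 |c|) ^ (n + 1) * M n := by rw [mul_pow]; ring

include hM0 in
lemma CC_sum {m : ℕ} {F : ℕ → ℝ → ℂ} (hF : ∀ k, k < m → F k ∈ CarlemanClass M) :
    (fun x => ∑ k ∈ Finset.range m, F k x) ∈ CarlemanClass M := by
  induction m with
  | zero => simpa using CC_const hpos hM0 0
  | succ m ih =>
    have : (fun x => ∑ k ∈ Finset.range (m+1), F k x)
        = fun x => (∑ k ∈ Finset.range m, F k x) + F m x := by
      funext x; rw [Finset.sum_range_succ]
    rw [this]
    exact CC_add hpos (ih fun k hk => hF k (by omega)) (hF m (by omega))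

end lemmas

section glue
variable {f : ℝ → ℂ} (hf : ContDiff ℝ (⊤ : ℕ∞) f) {x₀ : ℝ}
  (hflat : ∀ n, iteratedDeriv n f x₀ = 0)
include hf

lemma hasDerivAt_itd (n : ℕ) (x : ℝ) :
    HasDerivAt (iteratedDeriv n f) (iteratedDeriv (n + 1) f x) x := by
  have h1 : ContDiff ℝ ((n + 1 : ℕ)) f := hf.of_le (by exact_mod_cast le_top)
  have hdiff : DifferentiableAt ℝ (iteratedDeriv n f) x :=
    (h1.differentiable_iteratedDeriv n (by exact_mod_cast n.lt_succ_self)) x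
  rw [iteratedDeriv_succ]
  exact hdiff.hasDerivAt

include hflat in
lemma glue_hasDerivAt (n : ℕ) (x : ℝ) :
    HasDerivAt (fun y => if x₀ ≤ y then iteratedDeriv n f y else 0)
      (if x₀ ≤ x then iteratedDeriv (n + 1) f x else 0) x := by
  rcases lt_trichotomy x₀ x with hx | hx | hx
  · rw [if_pos hx.le]
    apply (hasDerivAt_itd hf n x).congr_of_eventuallyEq
    filter_upwards [IsOpen.mem_nhds isOpen_Ioi hx] with y hy
    rw [if_pos (le_of_lt hy)]
  · subst hx
    rw [if_pos le_rfl, hflat (n + 1)]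
    rw [hasDerivAt_iff_tendsto]
    have key := hasDerivAt_iff_tendsto.1 ((hasDerivAt_itd hf n x₀).congr_deriv (hflat (n+1)))
    refine squeeze_zero (fun t => by positivity) (fun y => ?_) key
    apply mul_le_mul_of_nonneg_left _ (by positivity)
    by_cases hy : x₀ ≤ y
    · simp only [if_pos hy, if_pos (le_refl x₀)]
      exact le_refl _
    · simp only [if_neg hy, if_pos (le_refl x₀), hflat n, smul_zero, sub_zero, zero_sub,
        norm_neg, norm_zero]
      exact norm_nonneg _
  · rw [if_neg (not_le.2 hx)]
    apply (hasDerivAt_const x (0:ℂ)).congr_of_eventuallyEq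
    filter_upwards [IsOpen.mem_nhds isOpen_Iio hx] with y hy
    rw [if_neg (not_le.2 hy)]

include hflat in
lemma glue_itd (n : ℕ) :
    iteratedDeriv n (fun y => if x₀ ≤ y then f y else 0)
      = fun x => if x₀ ≤ x then iteratedDeriv n f x else 0 := by
  induction n with
  | zero => simp only [iteratedDeriv_zero]
  | succ n ih =>
    rw [iteratedDeriv_succ, ih]
    funext x
    exact (glue_hasDerivAt hf hflat n x).deriv

include hflat in
include hflat in
lemma glue_contDiff :
    ContDiff ℝ (⊤ : ℕ∞) (fun y => if x₀ ≤ y then f y else 0) := by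
  apply contDiff_of_differentiable_iteratedDeriv
  intro m _
  rw [glue_itd hf hflat m]
  intro x
  exact ((glue_hasDerivAt hf hflat m x).differentiableAt : _)

include hflat in
lemma CC_glue (hpos : ∀ n, 0 < M n) (hfm : f ∈ CarlemanClass M) :
    (fun y => if x₀ ≤ y then f y else 0) ∈ CarlemanClass M := by
  rw [mem_iff hpos] at hfm ⊢
  obtain ⟨h1, h2⟩ := hfm
  refine ⟨glue_contDiff hf hflat, fun α β => ?_⟩
  obtain ⟨K, hK, hb⟩ := h2 α β
  refine ⟨K, hK, fun n x hx => ?_⟩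
  rw [glue_itd hf hflat n]
  dsimp only
  by_cases hy : x₀ ≤ x
  · rw [if_pos hy]; exact hb n x hx
  · rw [if_neg hy]
    simp only [norm_zero]
    exact mul_nonneg (by positivity) (hpos n).le

end glue

section antideriv

lemma antideriv_itd {f : ℝ → ℂ} (hf : ContDiff ℝ (⊤ : ℕ∞) f) (c : ℝ) :
    (ContDiff ℝ (⊤ : ℕ∞) (fun x => ∫ t in c..x, f t)) ∧
    (∀ n : ℕ, iteratedDeriv (n + 1) (fun x => ∫ t in c..x, f t) = iteratedDeriv n f) := by
  have hcont : Continuous f := hf.continuous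
  have hderiv : deriv (fun x => ∫ t in c..x, f t) = f := by
    funext x; exact hcont.deriv_integral f c x
  have hdiff : Differentiable ℝ (fun x => ∫ t in c..x, f t) := fun x =>
    ((hcont.integral_hasStrictDerivAt c x).hasDerivAt).differentiableAt
  constructor
  · rw [show ((⊤ : ℕ∞) : WithTop ℕ∞) = (⊤ : ℕ∞) from rfl, contDiff_infty_iff_deriv]
    exact ⟨hdiff, by rw [hderiv]; exact hf⟩
  · intro n
    rw [iteratedDeriv_succ', hderiv]

lemma CC_antideriv (hpos : ∀ n, 0 < M n) (hM0 : M 0 = 1) (hmono : Monotone M)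
    {f : ℝ → ℂ} (hf : f ∈ CarlemanClass M) (c : ℝ) :
    (fun x => ∫ t in c..x, f t) ∈ CarlemanClass M := by
  rw [mem_iff hpos] at hf ⊢
  obtain ⟨h1, h2⟩ := hf
  obtain ⟨hF1, hF2⟩ := antideriv_itd h1 c
  refine ⟨hF1, fun α β => ?_⟩
  obtain ⟨K, hK, hb⟩ := h2 α β
  obtain ⟨C0, hC0⟩ := isCompact_Icc.exists_bound_of_continuousOn
    (hF1.continuous.continuousOn : ContinuousOn (fun x => ∫ t in c..x, f t) (Set.Icc α β))
  set K' := max K (max C0 1) with hK'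
  have hK'1 : (1:ℝ) ≤ K' := le_trans (le_max_right _ _) (le_max_right _ _)
  have hKK' : K ≤ K' := le_max_left _ _
  refine ⟨K', hK'1, fun n x hx => ?_⟩
  match n with
  | 0 =>
    rw [iteratedDeriv_zero, pow_one, hM0, mul_one]
    exact (hC0 x hx).trans (le_trans (le_max_left _ _) (le_max_right _ _))
  | (n+1) =>
    rw [hF2 n]
    calc ‖iteratedDeriv n f x‖ ≤ K ^ (n + 1) * M n := hb n x hx
      _ ≤ K' ^ (n + 2) * M (n + 1) := by
          apply mul_le_mul _ (hmono (by omega)) (hpos n).le (by positivity)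
          calc K ^ (n+1) ≤ K' ^ (n+1) := pow_le_pow_left₀ (by linarith) hKK' _
            _ ≤ K' ^ (n+2) := pow_le_pow_right₀ hK'1 (by omega)

end antideriv

section cutoff
variable (hpos : ∀ n, 0 < M n) (hM0 : M 0 = 1) (hmono : Monotone M)
  (hkey : ∀ n j : ℕ, j ≤ n → (n.choose j : ℝ) * (M j * M (n - j)) ≤ M n)
include hpos

lemma exists_flat_pos (hnq : Nonquasianalytic M) :
    ∃ f ∈ CarlemanClass M, ∃ x₀ x₁ : ℝ, x₀ < x₁ ∧ (∀ n, iteratedDeriv n f x₀ = 0) ∧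
      f x₁ ≠ 0 := by
  obtain ⟨f₀, hCC, hne, x₀, hflat⟩ := hnq
  obtain ⟨x₁, hx₁⟩ := Function.ne_iff.mp hne
  have hx₁' : f₀ x₁ ≠ 0 := hx₁
  have hx0 : f₀ x₀ = 0 := by
    have := hflat 0
    rwa [iteratedDeriv_zero] at this
  have hne' : x₁ ≠ x₀ := fun h => hx₁' (h ▸ hx0)
  rcases hne'.lt_or_gt with hlt | hlt
  · -- x₁ < x₀ : reflect
    refine ⟨fun x => f₀ ((-1) * x + 2 * x₀), CC_affine hpos hCC (-1) (2 * x₀),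
      x₀, 2 * x₀ - x₁, by linarith, fun n => ?_, ?_⟩
    · rw [itd_affine (smooth_of_mem hCC) (-1) (2 * x₀) n x₀,
        show (-1) * x₀ + 2 * x₀ = x₀ by ring, hflat n, smul_zero]
    · show f₀ ((-1) * (2 * x₀ - x₁) + 2 * x₀) ≠ 0
      rw [show (-1) * (2 * x₀ - x₁) + 2 * x₀ = x₁ by ring]
      exact hx₁'
  · exact ⟨f₀, hCC, x₀, x₁, hlt, hflat, hx₁'⟩

include hM0 hmono hkey in
set_option maxHeartbeats 2000000 in
lemma exists_cutoff (hnq : Nonquasianalytic M) (a b : ℝ) (hab : a < b) :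
    ∃ φ : ℝ → ℂ, φ ∈ CarlemanClass M ∧ (∀ x, x ≤ a → φ x = 1) ∧ (∀ x, b ≤ x → φ x = 0) ∧
      (∀ x, ‖φ x‖ ≤ 1) ∧ (∀ x, ‖1 - φ x‖ ≤ 1) := by
  obtain ⟨f, hfCC, x₀, x₁, hx01, hflat, hfx₁⟩ := exists_flat_pos hpos hnq
  have hfsm := smooth_of_mem hfCC
  -- glued function
  set g : ℝ → ℂ := fun y => if x₀ ≤ y then f y else 0 with hg
  have hgCC : g ∈ CarlemanClass M := CC_glue hfsm hflat hpos hfCC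
  have hgsm := smooth_of_mem hgCC
  have hg0 : ∀ y, y ≤ x₀ → g y = 0 := by
    intro y hy
    rcases eq_or_lt_of_le hy with h | h
    · rw [hg]
      simp only
      rw [if_pos (le_of_eq h.symm), h]
      have := hflat 0
      rwa [iteratedDeriv_zero] at this
    · rw [hg]; simp only; rw [if_neg (not_le.2 h)]
  have hgx₁ : g x₁ ≠ 0 := by
    rw [hg]; simp only; rw [if_pos hx01.le]; exact hfx₁
  set d : ℝ := 2 * x₁ - x₀ with hd
  have hx₁d : x₁ < d := by rw [hd]; linarith
  have hx₀d : x₀ < d := lt_trans hx01 hx₁d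
  -- the bump
  set u : ℝ → ℂ := fun y =>
    (g y * (starRingEnd ℂ) (g y)) *
      ((fun z => g ((-1) * z + 2 * x₁) * (starRingEnd ℂ) (g ((-1) * z + 2 * x₁))) y) with hu
  have huCC : u ∈ CarlemanClass M := by
    apply CC_mul hpos hkey (CC_mul hpos hkey hgCC (CC_conj hpos hgCC))
    have h1 : (fun z => g z * (starRingEnd ℂ) (g z)) ∈ CarlemanClass M :=
      CC_mul hpos hkey hgCC (CC_conj hpos hgCC)
    exact CC_affine hpos h1 (-1) (2 * x₁)
  set ur : ℝ → ℝ := fun y => Complex.normSq (g y) * Complex.normSq (g ((-1) * y + 2 * x₁))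
    with hur
  have huur : ∀ y, u y = ((ur y : ℝ) : ℂ) := by
    intro y
    rw [hu, hur]
    simp only [Complex.mul_conj]
    push_cast
    ring
  have hurnn : ∀ y, 0 ≤ ur y := fun y =>
    mul_nonneg (Complex.normSq_nonneg _) (Complex.normSq_nonneg _)
  have hurx₁ : 0 < ur x₁ := by
    rw [hur]
    simp only
    rw [show (-1) * x₁ + 2 * x₁ = x₁ by ring]
    exact mul_pos (Complex.normSq_pos.2 hgx₁) (Complex.normSq_pos.2 hgx₁)
  have hurleft : ∀ y, y ≤ x₀ → ur y = 0 := by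
    intro y hy
    rw [hur]; simp only [hg0 y hy, map_zero, zero_mul]
  have hurright : ∀ y, d ≤ y → ur y = 0 := by
    intro y hy
    have : (-1) * y + 2 * x₁ ≤ x₀ := by rw [hd] at hy; linarith
    rw [hur]; simp only [hg0 _ this, map_zero, mul_zero]
  have hurcont : Continuous ur := by
    apply Continuous.mul
    · exact Complex.continuous_normSq.comp hgsm.continuous
    · exact (Complex.continuous_normSq.comp hgsm.continuous).comp (by continuity)
  have hint : ∀ p q : ℝ, IntervalIntegrable ur MeasureTheory.volume p q := fun p q =>
    hurcont.intervalIntegrable p q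
  -- primitive
  set P : ℝ → ℝ := fun x => ∫ t in x₀..x, ur t with hP
  set Ψ : ℝ → ℂ := fun x => ∫ t in x₀..x, u t with hΨ
  have hΨCC : Ψ ∈ CarlemanClass M := CC_antideriv hpos hM0 hmono huCC x₀
  have hΨP : ∀ x, Ψ x = ((P x : ℝ) : ℂ) := by
    intro x
    rw [hΨ, hP]
    simp only
    rw [show (fun t => u t) = fun t => ((ur t : ℝ) : ℂ) from funext huur]
    exact RCLike.intervalIntegral_ofReal
  have hPadd : ∀ p q : ℝ, P q = P p + ∫ t in p..q, ur t := by
    intro p q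
    rw [hP]
    simp only
    rw [← intervalIntegral.integral_add_adjacent_intervals (hint x₀ p) (hint p q)]
  have hPmono : Monotone P := by
    intro p q hpq
    rw [hPadd p q]
    have : 0 ≤ ∫ t in p..q, ur t :=
      intervalIntegral.integral_nonneg hpq (fun t _ => hurnn t)
    linarith
  have hP0 : ∀ x, x ≤ x₀ → P x = 0 := by
    intro x hx
    rw [hP]
    simp only
    rw [intervalIntegral.integral_symm, intervalIntegral.integral_congr
      (g := fun _ => (0:ℝ)) (fun y hy => ?_), intervalIntegral.integral_zero, neg_zero]
    apply hurleft
    rw [Set.uIcc_of_le hx] at hy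
    exact hy.2
  have hPd : ∀ x, d ≤ x → P x = P d := by
    intro x hx
    rw [hPadd d x, intervalIntegral.integral_congr (g := fun _ => (0:ℝ)) (fun y hy => ?_),
      intervalIntegral.integral_zero, add_zero]
    apply hurright
    rw [Set.uIcc_of_le hx] at hy
    exact hy.1
  have hPx₀ : P x₀ = 0 := hP0 x₀ le_rfl
  -- positivity of total mass
  have hPdpos : 0 < P d := by
    have hc : ContinuousAt ur x₁ := hurcont.continuousAt
    have hev : ∀ᶠ y in nhds x₁, ur y ∈ Set.Ioi (0:ℝ) := hc (Ioi_mem_nhds hurx₁)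
    rw [Metric.eventually_nhds_iff] at hev
    obtain ⟨ε, hε, hball⟩ := hev
    set ε₀ : ℝ := min (ε / 2) (min (x₁ - x₀) (d - x₁)) with hε₀
    have hε₀pos : 0 < ε₀ := by
      apply lt_min (by linarith) (lt_min (by linarith) (by linarith))
    have hmid : 0 < ∫ t in (x₁ - ε₀)..(x₁ + ε₀), ur t := by
      apply intervalIntegral.intervalIntegral_pos_of_pos_on (hint _ _) _ (by linarith)
      intro y hy
      apply hball
      rw [Real.dist_eq, abs_lt]
      have h1 : ε₀ ≤ ε / 2 := min_le_left _ _
      obtain ⟨hy1, hy2⟩ := hy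
      constructor <;> linarith
    have h1 : P (x₁ + ε₀) = P (x₁ - ε₀) + ∫ t in (x₁ - ε₀)..(x₁ + ε₀), ur t :=
      hPadd _ _
    have h2 : 0 ≤ P (x₁ - ε₀) := by
      rw [← hPx₀]
      apply hPmono
      have : ε₀ ≤ x₁ - x₀ := le_trans (min_le_right _ _) (min_le_left _ _)
      linarith
    have h3 : P (x₁ + ε₀) ≤ P d := by
      apply hPmono
      have : ε₀ ≤ d - x₁ := le_trans (min_le_right _ _) (min_le_right _ _)
      linarith
    linarith
  have hPbounds : ∀ x, 0 ≤ P x ∧ P x ≤ P d := by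
    intro x
    constructor
    · rcases le_total x x₀ with h | h
      · rw [hP0 x h]
      · rw [← hPx₀]; exact hPmono h
    · rcases le_total x d with h | h
      · exact hPmono h
      · rw [hPd x h]
  -- affine rescaling
  set c : ℝ := (x₀ - d) / (b - a) with hc
  set dd : ℝ := d - c * a with hdd
  have hcneg : c < 0 := div_neg_of_neg_of_pos (by linarith) (by linarith)
  have hLa : ∀ x, x ≤ a → d ≤ c * x + dd := by
    intro x hx
    rw [hdd]
    nlinarith
  have hLb : ∀ x, b ≤ x → c * x + dd ≤ x₀ := by
    intro x hx
    have hba : b - a ≠ 0 := sub_ne_zero.2 hab.ne'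
    have hcb : c * (b - a) = x₀ - d := by rw [hc]; field_simp
    have : c * b + dd = x₀ := by rw [hdd]; linear_combination hcb
    nlinarith
  -- the cutoff
  refine ⟨fun x => Ψ (c * x + dd) * ((P d : ℝ) : ℂ)⁻¹,
    CC_mul hpos hkey (CC_affine hpos hΨCC c dd) (CC_const hpos hM0 _), ?_, ?_, ?_, ?_⟩
  · intro x hx
    show Ψ (c * x + dd) * ((P d : ℝ) : ℂ)⁻¹ = 1
    rw [hΨP, hPd _ (hLa x hx)]
    rw [mul_inv_cancel₀]
    exact_mod_cast hPdpos.ne'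
  · intro x hx
    show Ψ (c * x + dd) * ((P d : ℝ) : ℂ)⁻¹ = 0
    rw [hΨP, hP0 _ (hLb x hx)]
    simp
  · intro x
    show ‖Ψ (c * x + dd) * ((P d : ℝ) : ℂ)⁻¹‖ ≤ 1
    rw [hΨP]
    rw [show ((P (c * x + dd) : ℝ) : ℂ) * ((P d : ℝ) : ℂ)⁻¹
      = ((P (c * x + dd) / P d : ℝ) : ℂ) by push_cast; ring]
    rw [Complex.norm_real, Real.norm_eq_abs]
    rw [abs_div, abs_of_nonneg (hPbounds _).1, abs_of_pos hPdpos]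
    rw [div_le_one hPdpos]
    exact (hPbounds _).2
  · intro x
    show ‖1 - Ψ (c * x + dd) * ((P d : ℝ) : ℂ)⁻¹‖ ≤ 1
    rw [hΨP]
    rw [show (1 : ℂ) - ((P (c * x + dd) : ℝ) : ℂ) * ((P d : ℝ) : ℂ)⁻¹
      = ((1 - P (c * x + dd) / P d : ℝ) : ℂ) by push_cast; ring]
    rw [Complex.norm_real, Real.norm_eq_abs, abs_le]
    have h1 : 0 ≤ P (c * x + dd) / P d := div_nonneg (hPbounds _).1 hPdpos.le
    have h2 : P (c * x + dd) / P d ≤ 1 := by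
      rw [div_le_one hPdpos]; exact (hPbounds _).2
    constructor <;> linarith

end cutoff

section main

variable (hpos : ∀ n, 0 < M n) (hM0 : M 0 = 1)
  (hkey : ∀ n j : ℕ, j ≤ n → (n.choose j : ℝ) * (M j * M (n - j)) ≤ M n)
include hpos

lemma CC_translate {f : ℝ → ℂ} (hf : f ∈ CarlemanClass M) (d : ℝ) :
    (fun x => f (x + d)) ∈ CarlemanClass M := by
  have := CC_affine hpos hf 1 d
  simpa only [one_mul] using this

omit hpos in
lemma toNat_ceil_cast (x : ℝ) : ((Int.toNat ⌈x⌉ : ℤ) : ℝ) = ((⌈max x 0⌉ : ℤ) : ℝ) := by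
  rcases le_total x 0 with h | h
  · have h1 : ⌈x⌉ ≤ 0 := by
      calc ⌈x⌉ ≤ ⌈(0:ℝ)⌉ := Int.ceil_le_ceil h
        _ = 0 := Int.ceil_zero
    rw [max_eq_right h, Int.ceil_zero]
    simp [Int.toNat_of_nonpos h1]
  · have h1 : 0 ≤ ⌈x⌉ := by
      calc (0:ℤ) = ⌈(0:ℝ)⌉ := Int.ceil_zero.symm
        _ ≤ ⌈x⌉ := Int.ceil_le_ceil h
    rw [max_eq_left h, Int.toNat_of_nonneg h1]

include hM0 hkey in
theorem main_construction
    (a b : ℝ) (hab : a < b)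
    (χ : ℝ → ℂ) (hχM : χ ∈ CarlemanClass M)
    (y : ℝ → ℂ) (hy : y ∈ CarlemanClass M)
    (δ : ℝ → ℝ) (hδ : ∀ s : ℝ, 0 ≤ δ s)
    (hδper : ∀ s : ℝ, δ (s + 1) = δ s)
    (hyδ : ∀ s : ℝ, ‖y s - y (s + 1) - χ s‖ ≤ δ s)
    (φ : ℝ → ℂ) (hφCC : φ ∈ CarlemanClass M)
    (hφ1 : ∀ x, x ≤ a → φ x = 1) (hφ0 : ∀ x, b ≤ x → φ x = 0)
    (hφn : ∀ x, ‖φ x‖ ≤ 1) (hφn' : ∀ x, ‖1 - φ x‖ ≤ 1) :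
    ∃ z ∈ CarlemanClass M, (∀ s : ℝ, z s - z (s + 1) = χ s) ∧
      ∀ s : ℝ, ‖y s - z s‖ ≤ ((⌈max (b - s) 0⌉ + ⌈max (s - a) 0⌉ : ℤ) : ℝ) * δ s := by
  classical
  -- the error function
  set e : ℝ → ℂ := fun s => y s - y (s + 1) - χ s with he
  have heCC : e ∈ CarlemanClass M := by
    have h1 : (fun x : ℝ => y (x + 1)) ∈ CarlemanClass M := CC_translate hpos hy 1
    exact CC_sub hpos hM0 (CC_sub hpos hM0 hy h1) hχM
  have heδ : ∀ s, ‖e s‖ ≤ δ s := hyδ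
  -- periodicity of δ over integers
  have hδk : ∀ (k : ℕ) (s : ℝ), δ (s + k) = δ s := by
    intro k
    induction k with
    | zero => intro s; norm_num
    | succ k ih =>
      intro s
      have : s + ((k:ℝ) + 1) = (s + k) + 1 := by ring
      push_cast
      rw [this, hδper, ih]
  have hδk' : ∀ (k : ℕ) (s : ℝ), δ (s + (-((k:ℝ) + 1))) = δ s := by
    intro k s
    have h1 := hδk (k + 1) (s + (-((k:ℝ) + 1)))
    have h2 : s + (-((k:ℝ) + 1)) + ((k + 1 : ℕ) : ℝ) = s := by push_cast; ring
    rw [h2] at h1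
    exact h1.symm
  -- the two families
  set FF : ℕ → ℝ → ℂ := fun k s => φ (s + (k:ℝ)) * e (s + (k:ℝ)) with hFFdef
  set GG : ℕ → ℝ → ℂ :=
    fun k s => (1 - φ (s + (-((k:ℝ) + 1)))) * e (s + (-((k:ℝ) + 1))) with hGGdef
  have hFFCC : ∀ k, FF k ∈ CarlemanClass M := fun k =>
    CC_translate hpos (CC_mul hpos hkey hφCC heCC) (k : ℝ)
  have hGGCC : ∀ k, GG k ∈ CarlemanClass M := fun k =>
    CC_translate hpos
      (CC_mul hpos hkey (CC_sub hpos hM0 (CC_const hpos hM0 1) hφCC) heCC) (-((k:ℝ) + 1))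
  have hFF0 : ∀ (k : ℕ) (s : ℝ), b ≤ s + (k:ℝ) → FF k s = 0 := by
    intro k s h
    rw [hFFdef]
    simp only [hφ0 _ h, zero_mul]
  have hGG0 : ∀ (k : ℕ) (s : ℝ), s + (-((k:ℝ) + 1)) ≤ a → GG k s = 0 := by
    intro k s h
    rw [hGGdef]
    simp only [hφ1 _ h, sub_self, zero_mul]
  -- partial sums
  set W : ℕ → ℝ → ℂ := fun m s =>
    (∑ k ∈ Finset.range m, FF k s) - (∑ k ∈ Finset.range m, GG k s) with hWdef
  have hWCC : ∀ m, W m ∈ CarlemanClass M := fun m =>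
    CC_sub hpos hM0 (CC_sum hpos hM0 (fun k _ => hFFCC k)) (CC_sum hpos hM0 (fun k _ => hGGCC k))
  -- the cut index
  set N : ℝ → ℕ := fun s => max (Int.toNat ⌈b - s⌉) (Int.toNat ⌈s - a⌉) with hNdef
  have hNb : ∀ (s : ℝ) (k : ℕ), N s ≤ k → b ≤ s + (k:ℝ) := by
    intro s k hk
    have h1 : b - s ≤ ((Int.toNat ⌈b - s⌉ : ℕ) : ℝ) := by
      refine le_trans (Int.le_ceil _) ?_
      exact_mod_cast Int.self_le_toNat _
    have h2 : (Int.toNat ⌈b - s⌉ : ℕ) ≤ k := le_trans (le_max_left _ _) hk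
    have h3 : ((Int.toNat ⌈b - s⌉ : ℕ) : ℝ) ≤ (k : ℝ) := by exact_mod_cast h2
    linarith
  have hNa : ∀ (s : ℝ) (k : ℕ), N s ≤ k → s + (-((k:ℝ) + 1)) ≤ a := by
    intro s k hk
    have h1 : s - a ≤ ((Int.toNat ⌈s - a⌉ : ℕ) : ℝ) := by
      refine le_trans (Int.le_ceil _) ?_
      exact_mod_cast Int.self_le_toNat _
    have h2 : (Int.toNat ⌈s - a⌉ : ℕ) ≤ k := le_trans (le_max_right _ _) hk
    have h3 : ((Int.toNat ⌈s - a⌉ : ℕ) : ℝ) ≤ (k : ℝ) := by exact_mod_cast h2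
    linarith
  have W_stab : ∀ (s : ℝ) (m m' : ℕ), N s ≤ m → m ≤ m' → W m' s = W m s := by
    intro s m m' hm hmm'
    rw [hWdef]
    simp only
    congr 1
    · refine (Finset.sum_subset (Finset.range_subset_range.2 hmm') fun k _ hk => ?_).symm
      rw [Finset.mem_range, not_lt] at hk
      exact hFF0 k s (hNb s k (le_trans hm hk))
    · refine (Finset.sum_subset (Finset.range_subset_range.2 hmm') fun k _ hk => ?_).symm
      rw [Finset.mem_range, not_lt] at hk
      exact hGG0 k s (hNa s k (le_trans hm hk))
  have hNnear : ∀ x s : ℝ, |s - x| < 1 → N s ≤ N x + 1 := by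
    intro x s hsx
    rw [abs_lt] at hsx
    have hb1 : ⌈b - s⌉ ≤ ⌈b - x⌉ + 1 := by
      rw [← Int.ceil_add_one]
      exact Int.ceil_le_ceil (by linarith)
    have ha1 : ⌈s - a⌉ ≤ ⌈x - a⌉ + 1 := by
      rw [← Int.ceil_add_one]
      exact Int.ceil_le_ceil (by linarith)
    rw [hNdef]
    simp only
    have e1 := Int.self_le_toNat ⌈b - x⌉
    have e2 := Int.self_le_toNat ⌈x - a⌉
    omega
  -- the corrector
  set w : ℝ → ℂ := fun s => W (N s) s with hwdef
  have w_eq_near : ∀ (x : ℝ) (m : ℕ), N x + 1 ≤ m → w =ᶠ[nhds x] W m := by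
    intro x m hm
    filter_upwards [Metric.ball_mem_nhds x one_pos] with s hs
    rw [Metric.mem_ball, Real.dist_eq] at hs
    have h1 : N s ≤ m := le_trans (hNnear x s hs) hm
    rw [hwdef]
    simp only
    exact (W_stab s (N s) m le_rfl h1).symm
  have hwsm : ContDiff ℝ (⊤ : ℕ∞) w := by
    rw [contDiff_iff_contDiffAt]
    intro x
    exact ((smooth_of_mem (hWCC (N x + 1))).contDiffAt).congr_of_eventuallyEq
      (w_eq_near x (N x + 1) le_rfl)
  have w_itd : ∀ (x : ℝ) (m : ℕ), N x + 1 ≤ m → ∀ n : ℕ,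
      iteratedDeriv n w x = iteratedDeriv n (W m) x := by
    intro x m hm n
    exact Filter.EventuallyEq.iteratedDeriv_eq n (w_eq_near x m hm)
  have hwCC : w ∈ CarlemanClass M := by
    rw [mem_iff hpos]
    refine ⟨hwsm, fun α β => ?_⟩
    set m₀ : ℕ := max (Int.toNat ⌈b - α⌉) (Int.toNat ⌈β - a⌉) + 1 with hm₀
    have hWm := (mem_iff hpos _).1 (hWCC m₀)
    obtain ⟨K, hK, hb⟩ := hWm.2 α β
    refine ⟨K, hK, fun n x hx => ?_⟩
    have hNx : N x + 1 ≤ m₀ := by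
      obtain ⟨hx1, hx2⟩ := hx
      have c1 : ⌈b - x⌉ ≤ ⌈b - α⌉ := Int.ceil_le_ceil (by linarith)
      have c2 : ⌈x - a⌉ ≤ ⌈β - a⌉ := Int.ceil_le_ceil (by linarith)
      rw [hNdef, hm₀]
      simp only
      omega
    rw [w_itd x m₀ hNx n]
    exact hb n x hx
  -- difference equation
  have hweq : ∀ s : ℝ, w s - w (s + 1) = e s := by
    intro s
    set m' : ℕ := max (N s) (N (s + 1)) with hm'
    have hws : w s = W (m' + 1) s :=
      (W_stab s (N s) (m' + 1) le_rfl (by omega)).symm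
    have hws1 : w (s + 1) = W (m' + 1) (s + 1) :=
      (W_stab (s + 1) (N (s + 1)) (m' + 1) le_rfl (by omega)).symm
    rw [hws, hws1, hWdef]
    simp only
    have hA : (∑ k ∈ Finset.range (m' + 1), FF k s)
        = (∑ k ∈ Finset.range m', FF k (s + 1)) + φ s * e s := by
      rw [Finset.sum_range_succ']
      congr 1
      · apply Finset.sum_congr rfl
        intro k _
        rw [hFFdef]
        simp only
        rw [show s + ((k + 1 : ℕ) : ℝ) = (s + 1) + (k : ℝ) by push_cast; ring]
      · rw [hFFdef]
        simp only
        norm_num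
    have hA1 : (∑ k ∈ Finset.range (m' + 1), FF k (s + 1))
        = (∑ k ∈ Finset.range m', FF k (s + 1)) := by
      rw [Finset.sum_range_succ]
      rw [hFF0 m' (s + 1) (by
        have := hNb s m' (le_max_left _ _)
        linarith), add_zero]
    have hB : (∑ k ∈ Finset.range (m' + 1), GG k s)
        = (∑ k ∈ Finset.range m', GG k s) := by
      rw [Finset.sum_range_succ]
      rw [hGG0 m' s (hNa s m' (le_max_left _ _)), add_zero]
    have hB1 : (∑ k ∈ Finset.range (m' + 1), GG k (s + 1))
        = (∑ k ∈ Finset.range m', GG k s) + (1 - φ s) * e s := by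
      rw [Finset.sum_range_succ']
      congr 1
      · apply Finset.sum_congr rfl
        intro k _
        rw [hGGdef]
        simp only
        rw [show (s + 1) + (-(((k + 1 : ℕ) : ℝ) + 1)) = s + (-((k : ℝ) + 1)) by push_cast; ring]
      · rw [hGGdef]
        simp only
        rw [show (s + 1) + (-(((0 : ℕ) : ℝ) + 1)) = s by push_cast; ring]
    rw [hA, hA1, hB, hB1]
    ring
  -- the bound
  have hwb : ∀ s : ℝ, ‖w s‖ ≤ ((⌈max (b - s) 0⌉ + ⌈max (s - a) 0⌉ : ℤ) : ℝ) * δ s := by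
    intro s
    have h1 : ‖w s‖ ≤ (∑ k ∈ Finset.range (N s), ‖FF k s‖)
        + (∑ k ∈ Finset.range (N s), ‖GG k s‖) := by
      rw [hwdef, hWdef]
      simp only
      refine le_trans (norm_sub_le _ _) (add_le_add ?_ ?_) <;> exact norm_sum_le _ _
    have hFFb : ∀ k ∈ Finset.range (N s),
        ‖FF k s‖ ≤ if (k : ℝ) < b - s then δ s else 0 := by
      intro k _
      by_cases hk : (k : ℝ) < b - s
      · rw [if_pos hk, hFFdef]
        simp only
        calc ‖φ (s + (k:ℝ)) * e (s + (k:ℝ))‖ = ‖φ (s + (k:ℝ))‖ * ‖e (s + (k:ℝ))‖ := norm_mul _ _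
          _ ≤ 1 * δ (s + (k:ℝ)) := mul_le_mul (hφn _) (heδ _) (norm_nonneg _) zero_le_one
          _ = δ s := by rw [one_mul, hδk k s]
      · rw [if_neg hk, hFF0 k s (by push_neg at hk; linarith)]
        simp
    have hGGb : ∀ k ∈ Finset.range (N s),
        ‖GG k s‖ ≤ if (k : ℝ) < s - a then δ s else 0 := by
      intro k _
      by_cases hk : (k : ℝ) < s - a
      · rw [if_pos hk, hGGdef]
        simp only
        calc ‖(1 - φ (s + (-((k:ℝ) + 1)))) * e (s + (-((k:ℝ) + 1)))‖
            = ‖1 - φ (s + (-((k:ℝ) + 1)))‖ * ‖e (s + (-((k:ℝ) + 1)))‖ := norm_mul _ _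
          _ ≤ 1 * δ (s + (-((k:ℝ) + 1))) :=
              mul_le_mul (hφn' _) (heδ _) (norm_nonneg _) zero_le_one
          _ = δ s := by rw [one_mul, hδk' k s]
      · rw [if_neg hk, hGG0 k s (by push_neg at hk; linarith)]
        simp
    have hsum : ∀ (m : ℕ) (c : ℝ), (∑ k ∈ Finset.range m, if (k : ℝ) < c then δ s else 0)
        ≤ ((⌈max c 0⌉ : ℤ) : ℝ) * δ s := by
      intro m c
      rw [← Finset.sum_filter, Finset.sum_const, nsmul_eq_mul]
      have hsub : Finset.filter (fun k : ℕ => (k : ℝ) < c) (Finset.range m)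
          ⊆ Finset.range (Int.toNat ⌈c⌉) := by
        intro k hk
        rw [Finset.mem_filter] at hk
        rw [Finset.mem_range]
        have : (k : ℤ) < ⌈c⌉ := Int.lt_ceil.2 (by exact_mod_cast hk.2)
        omega
      have hcard : (Finset.filter (fun k : ℕ => (k : ℝ) < c) (Finset.range m)).card
          ≤ Int.toNat ⌈c⌉ := (Finset.card_le_card hsub).trans_eq (Finset.card_range _)
      calc ((Finset.filter (fun k : ℕ => (k : ℝ) < c) (Finset.range m)).card : ℝ) * δ s
          ≤ ((Int.toNat ⌈c⌉ : ℕ) : ℝ) * δ s :=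
            mul_le_mul_of_nonneg_right (by exact_mod_cast hcard) (hδ s)
        _ = ((⌈max c 0⌉ : ℤ) : ℝ) * δ s := by
            rw [show ((Int.toNat ⌈c⌉ : ℕ) : ℝ) = ((Int.toNat ⌈c⌉ : ℤ) : ℝ) by push_cast; ring,
              toNat_ceil_cast]
    calc ‖w s‖ ≤ (∑ k ∈ Finset.range (N s), ‖FF k s‖)
        + (∑ k ∈ Finset.range (N s), ‖GG k s‖) := h1
      _ ≤ (∑ k ∈ Finset.range (N s), if (k : ℝ) < b - s then δ s else 0)
        + (∑ k ∈ Finset.range (N s), if (k : ℝ) < s - a then δ s else 0) :=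
          add_le_add (Finset.sum_le_sum hFFb) (Finset.sum_le_sum hGGb)
      _ ≤ ((⌈max (b - s) 0⌉ : ℤ) : ℝ) * δ s + ((⌈max (s - a) 0⌉ : ℤ) : ℝ) * δ s :=
          add_le_add (hsum _ _) (hsum _ _)
      _ = ((⌈max (b - s) 0⌉ + ⌈max (s - a) 0⌉ : ℤ) : ℝ) * δ s := by push_cast; ring
  -- conclusion
  refine ⟨fun s => y s - w s, CC_sub hpos hM0 hy hwCC, fun s => ?_, fun s => ?_⟩
  · have h1 := hweq s
    rw [he] at h1
    simp only at h1
    linear_combination -h1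
  · have : y s - (y s - w s) = w s := by ring
    rw [this]
    exact hwb s

end main

end GGS

/-- Generalized Găvruța stability of the difference equation `f(s) - f(s+1) = χ(s)` with a
`1`-periodic control function `δ`: the error bound becomes
`(⌈(b-s)⁺⌉ + ⌈(s-a)⁺⌉)·δ(s)`. -/
theorem ggs_difference_equation_periodic
    (a b : ℝ) (hab : a < b) (M : ℕ → ℝ) (hM : StandingAssumptions M)
    (χ : ℝ → ℂ) (hχM : χ ∈ CarlemanClass M)
    (y : ℝ → ℂ) (hy : y ∈ CarlemanClass M)
    (δ : ℝ → ℝ) (hδ : ∀ s : ℝ, 0 ≤ δ s)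
    (hδper : ∀ s : ℝ, δ (s + 1) = δ s)
    (hyδ : ∀ s : ℝ, ‖y s - y (s + 1) - χ s‖ ≤ δ s) :
    ∃ z ∈ CarlemanClass M, (∀ s : ℝ, z s - z (s + 1) = χ s) ∧
      ∀ s : ℝ, ‖y s - z s‖ ≤ ((⌈max (b - s) 0⌉ + ⌈max (s - a) 0⌉ : ℤ) : ℝ) * δ s := by
  have hpos := GGS.Mpos hM
  have hM0 : M 0 = 1 := hM.2.2.2.1.1
  have hkey : ∀ n j : ℕ, j ≤ n → (n.choose j : ℝ) * (M j * M (n - j)) ≤ M n :=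
    fun n j hj => GGS.choose_mul_le hM n j hj
  have hmono := GGS.Mmono hM
  have hnq : Nonquasianalytic M := hM.2.1
  obtain ⟨φ, hφCC, hφ1, hφ0, hφn, hφn'⟩ :=
    GGS.exists_cutoff hpos hM0 hmono hkey hnq a b hab
  exact GGS.main_construction hpos hM0 hkey a b hab χ hχM y hy δ hδ hδper hyδ
    φ hφCC hφ1 hφ0 hφn hφn'
end

section
/- Let χ : ℝ → ℂ belong to the Carleman class C_M{ℝ}, and suppose y ∈ C_M{ℝ} and δ : ℝ → [0,∞) satisfy |y(s) - y(s+1) - χ(s)| ≤ δ(s) for all s ∈ ℝ, where δ is of class C¹ on ℝ. Then there exists z ∈ C_M{ℝ} with z(s) - z(s+1) = χ(s) for all s ∈ ℝ and, for all s ∈ ℝ, |y(s) - z(s)| ≤ (⌈(b-s)⁺⌉ + ⌈(s-a)⁺⌉)·sup_{u ∈ I_s} δ(u) + ((⌈(b-s)⁺⌉ + ⌈(s-a)⁺⌉ - 1)/2)·sup_{u ∈ I_s} |δ'(u)|, where I_s denotes the interval [s - ⌈(s-a)⁺⌉, s + ⌈(b-s)⁺⌉ - 1], x⁺ := max(x,0),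 and ⌈·⌉ is the ceiling function. -/
open Filter Function Topology

namespace GGSAux

variable {M : ℕ → ℝ} {f g : ℝ → ℂ}


/-- abbreviation for `M n / n!`. -/
noncomputable def mm (M : ℕ → ℝ) (n : ℕ) : ℝ := M n / (Nat.factorial n : ℝ)

lemma mm_pos (hpos : ∀ n, 0 < M n) (n : ℕ) : 0 < mm M n :=
  div_pos (hpos n) (by positivity)

lemma ratio_mono (hpos : ∀ n, 0 < M n)
    (hlc : ∀ n : ℕ, (M (n + 1) / (Nat.factorial (n + 1) : ℝ)) ^ 2 ≤
      (M n / (Nat.factorial n : ℝ)) * (M (n + 2) / (Nat.factorial (n + 2) : ℝ))) :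
    Monotone (fun n => mm M (n + 1) / mm M n) := by
  apply monotone_nat_of_le_succ
  intro n
  have h0 := mm_pos hpos
  rw [div_le_div_iff₀ (h0 n) (h0 (n + 1))]
  have := hlc n
  simp only [mm] at *
  nlinarith [this]

lemma mm_mul_le (hpos : ∀ n, 0 < M n) (h1 : M 0 = 1)
    (hlc : ∀ n : ℕ, (M (n + 1) / (Nat.factorial (n + 1) : ℝ)) ^ 2 ≤
      (M n / (Nat.factorial n : ℝ)) * (M (n + 2) / (Nat.factorial (n + 2) : ℝ))) :
    ∀ i j : ℕ, mm M i * mm M j ≤ mm M (i + j) := by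
  have h0 := mm_pos hpos
  have hm0 : mm M 0 = 1 := by simp [mm, h1]
  have hr := ratio_mono hpos hlc
  intro i
  induction i with
  | zero => intro j; simp [hm0]
  | succ i ih =>
    intro j
    have hne : mm M i ≠ 0 := ne_of_gt (h0 i)
    have key : mm M (i + 1) * mm M j
        = (mm M (i + 1) / mm M i) * (mm M i * mm M j) := by
      rw [div_mul_eq_mul_div, mul_div_assoc, mul_comm (mm M i) (mm M j), mul_div_assoc,
        div_self hne, mul_one]
    rw [key]
    calc (mm M (i + 1) / mm M i) * (mm M i * mm M j)
        ≤ (mm M (i + 1) / mm M i) * mm M (i + j) := by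
          apply mul_le_mul_of_nonneg_left (ih j) (le_of_lt (div_pos (h0 _) (h0 _)))
      _ ≤ (mm M (i + j + 1) / mm M (i + j)) * mm M (i + j) := by
          apply mul_le_mul_of_nonneg_right (hr (Nat.le_add_right i j)) (le_of_lt (h0 _))
      _ = mm M (i + j + 1) := div_mul_cancel₀ _ (ne_of_gt (h0 _))
      _ = mm M (i + 1 + j) := by ring_nf

lemma choose_mul_M_le (hpos : ∀ n, 0 < M n) (h1 : M 0 = 1)
    (hlc : ∀ n : ℕ, (M (n + 1) / (Nat.factorial (n + 1) : ℝ)) ^ 2 ≤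
      (M n / (Nat.factorial n : ℝ)) * (M (n + 2) / (Nat.factorial (n + 2) : ℝ)))
    {i n : ℕ} (hin : i ≤ n) :
    (n.choose i : ℝ) * M i * M (n - i) ≤ M n := by
  have hmm := mm_mul_le hpos h1 hlc i (n - i)
  rw [Nat.add_sub_cancel' hin] at hmm
  have hfac : (n.choose i : ℝ) * (Nat.factorial i : ℝ) * (Nat.factorial (n - i) : ℝ)
      = (Nat.factorial n : ℝ) := by
    rw [← Nat.cast_mul, ← Nat.cast_mul, Nat.choose_mul_factorial_mul_factorial hin]
  have hMi : M i = (Nat.factorial i : ℝ) * mm M i := by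
    rw [mm, mul_div_cancel₀]; positivity
  have hMni : M (n - i) = (Nat.factorial (n - i) : ℝ) * mm M (n - i) := by
    rw [mm, mul_div_cancel₀]; positivity
  have hMn : M n = (Nat.factorial n : ℝ) * mm M n := by
    rw [mm, mul_div_cancel₀]; positivity
  rw [hMi, hMni, hMn, ← hfac]
  have hfi : (0:ℝ) < (n.choose i : ℝ) * (Nat.factorial i : ℝ) * (Nat.factorial (n - i) : ℝ) := by
    have := Nat.choose_pos hin; positivity
  calc (n.choose i : ℝ) * ((Nat.factorial i : ℝ) * mm M i)
        * ((Nat.factorial (n - i) : ℝ) * mm M (n - i))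
      = ((n.choose i : ℝ) * (Nat.factorial i : ℝ) * (Nat.factorial (n - i) : ℝ))
        * (mm M i * mm M (n - i)) := by ring
    _ ≤ ((n.choose i : ℝ) * (Nat.factorial i : ℝ) * (Nat.factorial (n - i) : ℝ)) * mm M n := by
        exact mul_le_mul_of_nonneg_left hmm (le_of_lt hfi)

lemma M_mono (hpos : ∀ n, 0 < M n) (h1 : M 0 = 1) (h01 : M 0 ≤ M 1)
    (hlc : ∀ n : ℕ, (M (n + 1) / (Nat.factorial (n + 1) : ℝ)) ^ 2 ≤
      (M n / (Nat.factorial n : ℝ)) * (M (n + 2) / (Nat.factorial (n + 2) : ℝ))) :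
    Monotone M := by
  have h0 := mm_pos hpos
  have hr := ratio_mono hpos hlc
  have hr0 : (1:ℝ) ≤ mm M 1 / mm M 0 := by
    have : mm M 0 = 1 := by simp [mm, h1]
    rw [this, div_one]
    simpa [mm, h1] using h01
  apply monotone_nat_of_le_succ
  intro n
  have hrn : (1:ℝ) ≤ mm M (n + 1) / mm M n := le_trans hr0 (hr (Nat.zero_le n))
  have hmn : mm M n ≤ mm M (n + 1) := by
    have := mul_le_mul_of_nonneg_right hrn (le_of_lt (h0 n))
    rwa [one_mul, div_mul_cancel₀ _ (ne_of_gt (h0 n))] at this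
  have : M n = (Nat.factorial n : ℝ) * mm M n := by
    rw [mm, mul_div_cancel₀]; positivity
  rw [this]
  have h2 : M (n + 1) = (Nat.factorial (n + 1) : ℝ) * mm M (n + 1) := by
    rw [mm, mul_div_cancel₀]; positivity
  rw [h2]
  have hfle : (Nat.factorial n : ℝ) ≤ (Nat.factorial (n + 1) : ℝ) := by
    exact_mod_cast Nat.factorial_le (Nat.le_succ n)
  calc (Nat.factorial n : ℝ) * mm M n ≤ (Nat.factorial (n + 1) : ℝ) * mm M n := by
        apply mul_le_mul_of_nonneg_right hfle (le_of_lt (h0 n))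
    _ ≤ (Nat.factorial (n + 1) : ℝ) * mm M (n + 1) := by
        apply mul_le_mul_of_nonneg_left hmn (by positivity)



lemma cd_nat (hf : ContDiff ℝ (⊤ : ℕ∞) f) (n : ℕ) : ContDiff ℝ n f :=
  hf.of_le (by exact_mod_cast le_top)

lemma iteratedDeriv_sub' (hf : ContDiff ℝ (⊤ : ℕ∞) f) (hg : ContDiff ℝ (⊤ : ℕ∞) g)
    (n : ℕ) (x : ℝ) :
    iteratedDeriv n (fun t => f t - g t) x = iteratedDeriv n f x - iteratedDeriv n g x := by
  have := iteratedDerivWithin_sub (Set.mem_univ x) uniqueDiffOn_univ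
    ((cd_nat hf n).contDiffWithinAt (s := Set.univ) (x := x)) ((cd_nat hg n).contDiffWithinAt (s := Set.univ) (x := x))
  simp only [iteratedDerivWithin_univ] at this
  exact this

lemma iteratedDeriv_add' (hf : ContDiff ℝ (⊤ : ℕ∞) f) (hg : ContDiff ℝ (⊤ : ℕ∞) g)
    (n : ℕ) (x : ℝ) :
    iteratedDeriv n (fun t => f t + g t) x = iteratedDeriv n f x + iteratedDeriv n g x := by
  have := iteratedDerivWithin_add (Set.mem_univ x) uniqueDiffOn_univ
    ((cd_nat hf n).contDiffWithinAt (s := Set.univ) (x := x)) ((cd_nat hg n).contDiffWithinAt (s := Set.univ) (x := x))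
  simp only [iteratedDerivWithin_univ] at this
  exact this

lemma iteratedDeriv_const_smul' (c : ℂ) (hf : ContDiff ℝ (⊤ : ℕ∞) f) (n : ℕ) (x : ℝ) :
    iteratedDeriv n (fun t => c * f t) x = c * iteratedDeriv n f x := by
  have := iteratedDerivWithin_const_smul (F := ℂ) (R := ℂ) (Set.mem_univ x) uniqueDiffOn_univ c
    ((cd_nat hf n).contDiffWithinAt (s := Set.univ) (x := x))
  simpa [iteratedDerivWithin_univ, smul_eq_mul] using this

lemma CarlemanClass.sub (hpos : ∀ n, 0 < M n) (hf : f ∈ CarlemanClass M) (hg : g ∈ CarlemanClass M) :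
    (fun t => f t - g t) ∈ CarlemanClass M := by
  refine ⟨hf.1.sub hg.1, fun α β => ?_⟩
  obtain ⟨C, ρ, hC, hρ, hB⟩ := hf.2 α β
  obtain ⟨C', ρ', hC', hρ', hB'⟩ := hg.2 α β
  refine ⟨C + C', max ρ ρ', by positivity, lt_max_of_lt_left hρ, fun n x hx => ?_⟩
  rw [iteratedDeriv_sub' hf.1 hg.1]
  calc ‖iteratedDeriv n f x - iteratedDeriv n g x‖
      ≤ ‖iteratedDeriv n f x‖ + ‖iteratedDeriv n g x‖ := norm_sub_le _ _
    _ ≤ C * ρ ^ n * M n + C' * ρ' ^ n * M n := add_le_add (hB n x hx) (hB' n x hx)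
    _ ≤ C * (max ρ ρ') ^ n * M n + C' * (max ρ ρ') ^ n * M n := by
        have hMn : 0 ≤ M n := (hpos n).le
        gcongr <;> simp [le_max_left, le_max_right]
    _ = (C + C') * (max ρ ρ') ^ n * M n := by ring

lemma CarlemanClass.const_mul (c : ℂ) (hf : f ∈ CarlemanClass M) :
    (fun t => c * f t) ∈ CarlemanClass M := by
  refine ⟨contDiff_const.mul hf.1, fun α β => ?_⟩
  obtain ⟨C, ρ, hC, hρ, hB⟩ := hf.2 α β
  refine ⟨(‖c‖ + 1) * C, ρ, by positivity, hρ, fun n x hx => ?_⟩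
  rw [iteratedDeriv_const_smul' c hf.1, norm_mul]
  calc ‖c‖ * ‖iteratedDeriv n f x‖ ≤ (‖c‖ + 1) * (C * ρ ^ n * M n) := by
        apply mul_le_mul (by linarith [norm_nonneg c]) (hB n x hx) (norm_nonneg _) (by positivity)
    _ = (‖c‖ + 1) * C * ρ ^ n * M n := by ring

lemma iteratedDeriv_const_fun (c : ℂ) :
    ∀ n : ℕ, iteratedDeriv n (fun _ : ℝ => c) = fun _ : ℝ => if n = 0 then c else 0
  | 0 => by simp
  | n + 1 => by
    rw [iteratedDeriv_succ, iteratedDeriv_const_fun c n]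
    cases n <;> simp

lemma CarlemanClass.const (c : ℂ) (hpos : ∀ n, 0 < M n) :
    (fun _ : ℝ => c) ∈ CarlemanClass M := by
  refine ⟨contDiff_const, fun α β => ?_⟩
  have h0 := hpos 0
  have hCpos : 0 < ‖c‖ / M 0 + 1 :=
    add_pos_of_nonneg_of_pos (div_nonneg (norm_nonneg c) h0.le) one_pos
  refine ⟨‖c‖ / M 0 + 1, 1, hCpos, one_pos, fun n x _ => ?_⟩
  rw [show iteratedDeriv n (fun _ : ℝ => c) x = if n = 0 then c else 0 from by
    rw [iteratedDeriv_const_fun]]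
  cases n with
  | zero =>
    have heq : (‖c‖ / M 0 + 1) * M 0 = ‖c‖ + M 0 := by field_simp
    rw [if_pos rfl]
    simp only [pow_zero, mul_one]
    rw [heq]; linarith
  | succ m =>
    simp only [Nat.succ_ne_zero, if_false, norm_zero]
    exact le_of_lt (mul_pos (mul_pos hCpos (by positivity)) (hpos _))

lemma iteratedDeriv_comp_affine (hf : ContDiff ℝ (⊤ : ℕ∞) f) (p q : ℝ) (n : ℕ) (x : ℝ) :
    iteratedDeriv n (fun s => f (p * s + q)) x = p ^ n • iteratedDeriv n f (p * x + q) := by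
  have hg : ContDiff ℝ n (fun u => f (u + q)) :=
    (cd_nat hf n).comp (contDiff_id.add contDiff_const)
  have h1 := congrFun (iteratedDeriv_comp_const_smul (f := fun u => f (u + q)) hg p) x
  have h2 := congrFun (iteratedDeriv_comp_add_const n f q) (p * x)
  rw [h2] at h1
  exact h1

lemma CarlemanClass.comp_affine (hpos : ∀ n, 0 < M n) (hf : f ∈ CarlemanClass M) (p q : ℝ) :
    (fun s => f (p * s + q)) ∈ CarlemanClass M := by
  refine ⟨hf.1.comp ((contDiff_const.mul contDiff_id).add contDiff_const), fun α β => ?_⟩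
  obtain ⟨C, ρ, hC, hρ, hB⟩ := hf.2 (min (p * α + q) (p * β + q)) (max (p * α + q) (p * β + q))
  refine ⟨C, ρ * |p| + 1, hC, by positivity, fun n x hx => ?_⟩
  rw [iteratedDeriv_comp_affine hf.1 p q, norm_smul]
  have hmem : p * x + q ∈ Set.Icc (min (p * α + q) (p * β + q)) (max (p * α + q) (p * β + q)) := by
    obtain ⟨hx1, hx2⟩ := hx
    rcases le_total 0 p with hp | hp
    · exact ⟨le_trans (min_le_left _ _) (by nlinarith), le_trans (by nlinarith) (le_max_right _ _)⟩
    · exact ⟨le_trans (min_le_right _ _) (by nlinarith), le_trans (by nlinarith) (le_max_left _ _)⟩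
  calc ‖p ^ n‖ * ‖iteratedDeriv n f (p * x + q)‖
      ≤ |p| ^ n * (C * ρ ^ n * M n) := by
        rw [Real.norm_eq_abs, abs_pow]
        exact mul_le_mul_of_nonneg_left (hB n _ hmem) (by positivity)
    _ = C * (ρ * |p|) ^ n * M n := by rw [mul_pow]; ring
    _ ≤ C * (ρ * |p| + 1) ^ n * M n := by
        apply mul_le_mul_of_nonneg_right _ (hpos n).le
        apply mul_le_mul_of_nonneg_left _ hC.le
        exact pow_le_pow_left₀ (by positivity) (by linarith) n
    _ = C * (ρ * |p| + 1) ^ n * M n := rfl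

lemma CarlemanClass.translate (hf : f ∈ CarlemanClass M) (c : ℝ) :
    (fun s => f (s + c)) ∈ CarlemanClass M := by
  refine ⟨hf.1.comp (contDiff_id.add contDiff_const), fun α β => ?_⟩
  obtain ⟨C, ρ, hC, hρ, hB⟩ := hf.2 (α + c) (β + c)
  refine ⟨C, ρ, hC, hρ, fun n x hx => ?_⟩
  rw [congrFun (iteratedDeriv_comp_add_const n f c) x]
  exact hB n (x + c) ⟨by linarith [hx.1], by linarith [hx.2]⟩

lemma CarlemanClass.mul (hpos : ∀ n, 0 < M n) (h1 : M 0 = 1)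
    (hlc : ∀ n : ℕ, (M (n + 1) / (Nat.factorial (n + 1) : ℝ)) ^ 2 ≤
      (M n / (Nat.factorial n : ℝ)) * (M (n + 2) / (Nat.factorial (n + 2) : ℝ)))
    (hf : f ∈ CarlemanClass M) (hg : g ∈ CarlemanClass M) :
    (fun t => f t * g t) ∈ CarlemanClass M := by
  refine ⟨hf.1.mul hg.1, fun α β => ?_⟩
  obtain ⟨C, ρ, hC, hρ, hB⟩ := hf.2 α β
  obtain ⟨C', ρ', hC', hρ', hB'⟩ := hg.2 α β
  set r := max ρ ρ' with hr
  have hrpos : 0 < r := lt_max_of_lt_left hρ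
  refine ⟨C * C', 2 * r, by positivity, by positivity, fun n x hx => ?_⟩
  have key : ‖iteratedDeriv n (fun y => f y * g y) x‖ ≤
      ∑ i ∈ Finset.range (n + 1),
        (n.choose i : ℝ) * ‖iteratedDeriv i f x‖ * ‖iteratedDeriv (n - i) g x‖ := by
    rw [← norm_iteratedFDeriv_eq_norm_iteratedDeriv]
    simp_rw [← norm_iteratedFDeriv_eq_norm_iteratedDeriv]
    exact norm_iteratedFDeriv_mul_le (cd_nat hf.1 n) (cd_nat hg.1 n) x le_rfl
  have step : ∀ i ∈ Finset.range (n + 1),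
      (n.choose i : ℝ) * ‖iteratedDeriv i f x‖ * ‖iteratedDeriv (n - i) g x‖
        ≤ C * C' * r ^ n * M n := by
    intro i hi
    have hin : i ≤ n := Nat.lt_succ_iff.mp (Finset.mem_range.mp hi)
    have e1 := hB i x hx
    have e2 := hB' (n - i) x hx
    have e3 : ρ ^ i * ρ' ^ (n - i) ≤ r ^ n := by
      calc ρ ^ i * ρ' ^ (n - i) ≤ r ^ i * r ^ (n - i) := by
            apply mul_le_mul (pow_le_pow_left₀ hρ.le (le_max_left _ _) i)
              (pow_le_pow_left₀ hρ'.le (le_max_right _ _) _) (by positivity) (by positivity)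
        _ = r ^ n := by rw [← pow_add, Nat.add_sub_cancel' hin]
    have e4 := choose_mul_M_le hpos h1 hlc hin
    calc (n.choose i : ℝ) * ‖iteratedDeriv i f x‖ * ‖iteratedDeriv (n - i) g x‖
        ≤ (n.choose i : ℝ) * (C * ρ ^ i * M i) * (C' * ρ' ^ (n - i) * M (n - i)) := by
          apply mul_le_mul (mul_le_mul le_rfl e1 (norm_nonneg _) (Nat.cast_nonneg _)) e2
            (norm_nonneg _)
          have := hpos i
          positivity
      _ = (C * C') * (ρ ^ i * ρ' ^ (n - i)) * ((n.choose i : ℝ) * M i * M (n - i)) := by ring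
      _ ≤ (C * C') * r ^ n * ((n.choose i : ℝ) * M i * M (n - i)) := by
          apply mul_le_mul_of_nonneg_right (mul_le_mul_of_nonneg_left e3 (by positivity))
          have h5 := hpos i; have h6 := hpos (n - i)
          positivity
      _ ≤ (C * C') * r ^ n * M n := by
          apply mul_le_mul_of_nonneg_left e4 (by positivity)
      _ = C * C' * r ^ n * M n := by ring
  calc ‖iteratedDeriv n (fun y => f y * g y) x‖
      ≤ ∑ i ∈ Finset.range (n + 1),
        (n.choose i : ℝ) * ‖iteratedDeriv i f x‖ * ‖iteratedDeriv (n - i) g x‖ := key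
    _ ≤ ∑ _i ∈ Finset.range (n + 1), C * C' * r ^ n * M n := Finset.sum_le_sum step
    _ = (n + 1 : ℝ) * (C * C' * r ^ n * M n) := by
        rw [Finset.sum_const, Finset.card_range, nsmul_eq_mul]; push_cast; ring
    _ ≤ (2 : ℝ) ^ n * (C * C' * r ^ n * M n) := by
        have h2 : (n + 1 : ℝ) ≤ (2 : ℝ) ^ n := by
          exact_mod_cast Nat.succ_le_of_lt (n.lt_two_pow_self)
        have hge : 0 ≤ C * C' * r ^ n * M n :=
          le_of_lt (mul_pos (mul_pos (mul_pos hC hC') (pow_pos hrpos n)) (hpos n))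
        exact mul_le_mul_of_nonneg_right h2 hge
    _ = C * C' * (2 * r) ^ n * M n := by rw [mul_pow]; ring

lemma CarlemanClass.conj (hf : f ∈ CarlemanClass M) :
    (fun t => (starRingEnd ℂ) (f t)) ∈ CarlemanClass M := by
  refine ⟨Complex.conjCLE.contDiff.comp hf.1, fun α β => ?_⟩
  obtain ⟨C, ρ, hC, hρ, hB⟩ := hf.2 α β
  refine ⟨C, ρ, hC, hρ, fun n x hx => ?_⟩
  have : ‖iteratedDeriv n (fun t => (starRingEnd ℂ) (f t)) x‖ = ‖iteratedDeriv n f x‖ := by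
    rw [← norm_iteratedFDeriv_eq_norm_iteratedDeriv, ← norm_iteratedFDeriv_eq_norm_iteratedDeriv]
    exact Complex.conjLIE.norm_iteratedFDeriv_comp_left f x n
  rw [this]; exact hB n x hx

lemma hasDerivAt_iteratedDeriv (hf : ContDiff ℝ (⊤ : ℕ∞) f) (n : ℕ) (x : ℝ) :
    HasDerivAt (iteratedDeriv n f) (iteratedDeriv (n + 1) f x) x := by
  have hdiff : Differentiable ℝ (iteratedDeriv n f) :=
    ContDiff.differentiable_iteratedDeriv' n (by exact_mod_cast cd_nat hf (n + 1))
  have := (hdiff x).hasDerivAt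
  rwa [show deriv (iteratedDeriv n f) x = iteratedDeriv (n + 1) f x from
    (congrFun (iteratedDeriv_succ (n := n)) x).symm] at this

lemma contDiff_of_derivSeq (h : ℕ → ℝ → ℂ)
    (hd : ∀ n x, HasDerivAt (h n) (h (n + 1) x) x) :
    ContDiff ℝ (⊤ : ℕ∞) (h 0) ∧ ∀ n, iteratedDeriv n (h 0) = h n := by
  have hderiv : ∀ n, deriv (h n) = h (n + 1) := fun n => funext fun x => (hd n x).deriv
  have hcd : ∀ k m : ℕ, ContDiff ℝ k (h m) := by
    intro k
    induction k with
    | zero =>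
      intro m
      rw [Nat.cast_zero, contDiff_zero]
      exact Differentiable.continuous (fun x => (hd m x).differentiableAt)
    | succ k ih =>
      intro m
      rw [show ((k + 1 : ℕ) : WithTop ℕ∞) = (k : WithTop ℕ∞) + 1 by push_cast; rfl,
        contDiff_succ_iff_deriv]
      refine ⟨fun x => (hd m x).differentiableAt, ?_, ?_⟩
      · intro habs
        exact absurd habs (by simp)
      · rw [hderiv m]; exact ih (m + 1)
  constructor
  · exact contDiff_infty.mpr fun k => hcd k 0
  · intro n
    induction n with
    | zero => simp
    | succ n ihn => rw [iteratedDeriv_succ, ihn, hderiv n]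

lemma glue_flat (hf : ContDiff ℝ (⊤ : ℕ∞) f) (x₀ : ℝ) (hflat : ∀ n, iteratedDeriv n f x₀ = 0) :
    ContDiff ℝ (⊤ : ℕ∞) (fun x => if x₀ ≤ x then f x else 0) ∧
    ∀ n, iteratedDeriv n (fun x => if x₀ ≤ x then f x else 0)
      = fun x => if x₀ ≤ x then iteratedDeriv n f x else 0 := by
  set h : ℕ → ℝ → ℂ := fun n x => if x₀ ≤ x then iteratedDeriv n f x else 0 with hh
  have hd : ∀ n x, HasDerivAt (h n) (h (n + 1) x) x := by
    intro n x
    rcases lt_trichotomy x x₀ with hx | hx | hx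
    · have heq : (fun _ : ℝ => (0 : ℂ)) =ᶠ[𝓝 x] h n := by
        filter_upwards [Iio_mem_nhds hx] with t ht
        simp [hh, (Set.mem_Iio.mp ht).not_ge]
      have hv : h (n + 1) x = 0 := by simp [hh, not_le.mpr hx]
      rw [hv]
      exact (hasDerivAt_const x (0 : ℂ)).congr_of_eventuallyEq heq.symm
    · subst hx
      have hv : h (n + 1) x = 0 := by simp [hh, hflat (n + 1)]
      rw [hv, hasDerivAt_iff_isLittleO]
      have base := hasDerivAt_iteratedDeriv hf n x
      rw [hflat (n + 1)] at base
      have hlo := hasDerivAt_iff_isLittleO.mp base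
      have hpt : ∀ t : ℝ, ‖h n t - h n x - (t - x) • (0 : ℂ)‖ ≤
          ‖iteratedDeriv n f t - iteratedDeriv n f x - (t - x) • (0 : ℂ)‖ := by
        intro t
        by_cases ht : x ≤ t
        · simp [hh, ht, hflat n]
        · simp [hh, ht, hflat n]
      exact (Asymptotics.isBigO_of_le (𝓝 x) hpt).trans_isLittleO hlo
    · have heq : iteratedDeriv n f =ᶠ[𝓝 x] h n := by
        filter_upwards [Ioi_mem_nhds hx] with t ht
        simp [hh, le_of_lt (Set.mem_Ioi.mp ht)]
      have hv : h (n + 1) x = iteratedDeriv (n + 1) f x := by simp [hh, hx.le]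
      rw [hv]
      exact (hasDerivAt_iteratedDeriv hf n x).congr_of_eventuallyEq heq.symm
  have h0 : h 0 = fun x => if x₀ ≤ x then f x else 0 := by
    funext x; simp [hh]
  obtain ⟨hc, hit⟩ := contDiff_of_derivSeq h hd
  rw [h0] at hc hit
  exact ⟨hc, fun n => hit n⟩

lemma exists_cutoff (hpos : ∀ n, 0 < M n) (h1 : M 0 = 1) (h01 : M 0 ≤ M 1)
    (hlc : ∀ n : ℕ, (M (n + 1) / (Nat.factorial (n + 1) : ℝ)) ^ 2 ≤
      (M n / (Nat.factorial n : ℝ)) * (M (n + 2) / (Nat.factorial (n + 2) : ℝ)))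
    (hNQ : ∃ f₀ ∈ CarlemanClass M, f₀ ≠ 0 ∧ ∃ x₀ : ℝ, ∀ n : ℕ, iteratedDeriv n f₀ x₀ = 0)
    (a b : ℝ) (hab : a < b) :
    ∃ ψ : ℝ → ℂ, ψ ∈ CarlemanClass M ∧ (∀ x : ℝ, ‖ψ x‖ ≤ 1 ∧ ‖1 - ψ x‖ ≤ 1) ∧
      (∀ x : ℝ, x ≤ a → ψ x = 1) ∧ (∀ x : ℝ, b ≤ x → ψ x = 0) := by
  classical
  -- Step 1: a function in the class, flat at `u`, nonvanishing at some `v > u`.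
  have key : ∃ g ∈ CarlemanClass M, ∃ u v : ℝ, u < v ∧
      (∀ n, iteratedDeriv n g u = 0) ∧ g v ≠ 0 := by
    obtain ⟨f₀, hf₀M, hf₀ne, x₀, hflat⟩ := hNQ
    obtain ⟨x₁, hx₁⟩ := Function.ne_iff.mp hf₀ne
    have hx₁0 : f₀ x₁ ≠ 0 := by simpa using hx₁
    have hne : x₁ ≠ x₀ := by
      intro hEq
      apply hx₁0
      have h' := hflat 0
      rw [iteratedDeriv_zero] at h'
      rw [hEq]
      exact h'
    rcases hne.lt_or_gt with hlt | hlt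
    · -- x₁ < x₀ : reflect
      refine ⟨fun s => f₀ (-1 * s + 2 * x₀), CarlemanClass.comp_affine hpos hf₀M _ _,
        x₀, 2 * x₀ - x₁, by linarith, ?_, ?_⟩
      · intro n
        rw [iteratedDeriv_comp_affine hf₀M.1 (-1) (2 * x₀)]
        rw [show -1 * x₀ + 2 * x₀ = x₀ by ring, hflat n, smul_zero]
      · intro hcontra
        apply hx₁0
        have hcontra' : f₀ (-1 * (2 * x₀ - x₁) + 2 * x₀) = 0 := hcontra
        rwa [show -1 * (2 * x₀ - x₁) + 2 * x₀ = x₁ by ring] at hcontra'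
    · exact ⟨f₀, hf₀M, x₀, x₁, hlt, hflat, hx₁0⟩
  obtain ⟨g, hgM, u, v, huv, hgflat, hgv⟩ := key
  -- Step 2: glue to get a function vanishing on `(-∞, u]`.
  obtain ⟨hsm, hitd⟩ := glue_flat hgM.1 u hgflat
  set h : ℝ → ℂ := fun x => if u ≤ x then g x else 0 with hhdef
  have hhM : h ∈ CarlemanClass M := by
    refine ⟨hsm, fun α β => ?_⟩
    obtain ⟨C, ρ, hC, hρ, hB⟩ := hgM.2 α β
    refine ⟨C, ρ, hC, hρ, fun n x hx => ?_⟩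
    rw [congrFun (hitd n) x]
    by_cases hux : u ≤ x
    · rw [if_pos hux]; exact hB n x hx
    · rw [if_neg hux, norm_zero]
      exact le_of_lt (mul_pos (mul_pos hC (pow_pos hρ n)) (hpos n))
  have hh0 : ∀ x ≤ u, h x = 0 := by
    intro x hx
    rcases eq_or_lt_of_le hx with rfl | hx'
    · have := hgflat 0
      rw [iteratedDeriv_zero] at this
      simp [hhdef, this]
    · simp [hhdef, not_le.mpr hx']
  have hhv : h v = g v := by simp [hhdef, huv.le]
  have hcont : Continuous h := hsm.continuous
  -- Step 3: the real bump `R` supported in `[a, b]`.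
  set p : ℝ := (2 * v - 2 * u) / (b - a) with hpdef
  have hppos : 0 < p := div_pos (by linarith) (by linarith)
  set q0 : ℝ := u - p * a with hq0def
  set R : ℝ → ℝ := fun t =>
    Complex.normSq (h (p * t + q0)) * Complex.normSq (h (-1 * (p * t + q0) + 2 * v)) with hRdef
  have hRcont : Continuous R := by
    apply Continuous.mul
    · exact Complex.continuous_normSq.comp
        (hcont.comp (((continuous_const.mul continuous_id).add continuous_const)))
    · exact Complex.continuous_normSq.comp (hcont.comp
        ((continuous_const.mul ((continuous_const.mul continuous_id).add
          continuous_const)).add continuous_const))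
  have hRnn : ∀ t, 0 ≤ R t := fun t =>
    mul_nonneg (Complex.normSq_nonneg _) (Complex.normSq_nonneg _)
  have hpba : p * (b - a) = 2 * v - 2 * u := by
    have hba : (b - a) ≠ 0 := ne_of_gt (by linarith)
    rw [hpdef, div_mul_cancel₀ _ hba]
  have hR0l : ∀ t ≤ a, R t = 0 := by
    intro t ht
    have harg : p * t + q0 ≤ u := by
      have hpt : p * t ≤ p * a := mul_le_mul_of_nonneg_left ht hppos.le
      rw [hq0def]; linarith
    have hzero : h (p * t + q0) = 0 := hh0 _ harg
    show Complex.normSq (h (p * t + q0)) *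
      Complex.normSq (h (-1 * (p * t + q0) + 2 * v)) = 0
    rw [hzero]; simp
  have hR0r : ∀ t, b ≤ t → R t = 0 := by
    intro t ht
    have hpt : p * b ≤ p * t := mul_le_mul_of_nonneg_left ht hppos.le
    have harg : -1 * (p * t + q0) + 2 * v ≤ u := by
      rw [hq0def]; nlinarith [hpba, hpt]
    have hzero : h (-1 * (p * t + q0) + 2 * v) = 0 := hh0 _ harg
    show Complex.normSq (h (p * t + q0)) *
      Complex.normSq (h (-1 * (p * t + q0) + 2 * v)) = 0
    rw [hzero]; simp
  have hRmid : 0 < R ((a + b) / 2) := by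
    have harg1 : p * ((a + b) / 2) + q0 = v := by
      rw [hq0def]; nlinarith [hpba]
    have hvne : h v ≠ 0 := by rw [hhv]; exact hgv
    have hpos' : 0 < Complex.normSq (h v) := Complex.normSq_pos.mpr hvne
    have hRe : R ((a + b) / 2) = Complex.normSq (h v) * Complex.normSq (h v) := by
      show Complex.normSq (h (p * ((a + b) / 2) + q0)) *
        Complex.normSq (h (-1 * (p * ((a + b) / 2) + q0) + 2 * v)) = _
      rw [harg1, show -1 * v + 2 * v = v by ring]
    rw [hRe]
    exact mul_pos hpos' hpos'
  -- Step 4: the integral normalization.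
  set c₀ : ℝ := ∫ t in a..b, R t with hc₀def
  have hInt : ∀ x₁ x₂ : ℝ, IntervalIntegrable R MeasureTheory.volume x₁ x₂ :=
    fun x₁ x₂ => hRcont.intervalIntegrable x₁ x₂
  have hc₀pos : 0 < c₀ := by
    apply intervalIntegral.integral_pos hab hRcont.continuousOn
      (fun x _ => hRnn x)
    exact ⟨(a + b) / 2, ⟨by linarith, by linarith⟩, hRmid⟩
  set I : ℝ → ℝ := fun x => ∫ t in x..b, R t with hIdef
  have hIleft : ∀ x ≤ a, I x = c₀ := by
    intro x hx
    have hzero : (∫ t in x..a, R t) = 0 := by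
      rw [show (0:ℝ) = ∫ t in x..a, (0:ℝ) by simp]
      apply intervalIntegral.integral_congr
      intro t ht
      rw [Set.uIcc_of_le hx] at ht
      exact hR0l t ht.2
    have hadj := intervalIntegral.integral_add_adjacent_intervals (hInt x a) (hInt a b)
    show (∫ t in x..b, R t) = c₀
    rw [← hadj, hzero, zero_add]
  have hIright : ∀ x, b ≤ x → I x = 0 := by
    intro x hx
    have hzero : (∫ t in b..x, R t) = 0 := by
      rw [show (0:ℝ) = ∫ t in b..x, (0:ℝ) by simp]
      apply intervalIntegral.integral_congr
      intro t ht
      rw [Set.uIcc_of_le hx] at ht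
      exact hR0r t ht.1
    show (∫ t in x..b, R t) = 0
    rw [intervalIntegral.integral_symm, hzero, neg_zero]
  have hIbound : ∀ x, 0 ≤ I x ∧ I x ≤ c₀ := by
    intro x
    rcases le_total x a with hx | hx
    · rw [hIleft x hx]; exact ⟨hc₀pos.le, le_rfl⟩
    rcases le_total b x with hx' | hx'
    · rw [hIright x hx']; exact ⟨le_rfl, hc₀pos.le⟩
    constructor
    · exact intervalIntegral.integral_nonneg hx' (fun t _ => hRnn t)
    · have hsplit := intervalIntegral.integral_add_adjacent_intervals (hInt a x) (hInt x b)
      have h1' : 0 ≤ ∫ t in a..x, R t :=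
        intervalIntegral.integral_nonneg hx (fun t _ => hRnn t)
      show (∫ t in x..b, R t) ≤ c₀
      have : c₀ = (∫ t in a..x, R t) + ∫ t in x..b, R t := by rw [hsplit]
      linarith
  -- Step 5: the cutoff function.
  set ψr : ℝ → ℝ := fun x => I x / c₀ with hψrdef
  set ψ : ℝ → ℂ := fun x => ((ψr x : ℝ) : ℂ) with hψdef
  have hψr01 : ∀ x, 0 ≤ ψr x ∧ ψr x ≤ 1 := by
    intro x
    obtain ⟨h0', h1'⟩ := hIbound x
    exact ⟨div_nonneg h0' hc₀pos.le, (div_le_one hc₀pos).mpr h1'⟩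
  -- the complex bump
  set p1 : ℝ → ℂ := fun t => h t * (starRingEnd ℂ) (h t) with hp1def
  have hp1M : p1 ∈ CarlemanClass M := CarlemanClass.mul hpos h1 hlc hhM (CarlemanClass.conj hhM)
  set g2 : ℝ → ℂ := fun t => p1 (-1 * t + 2 * v) with hg2def
  have hg2M : g2 ∈ CarlemanClass M := CarlemanClass.comp_affine hpos hp1M _ _
  set g3 : ℝ → ℂ := fun t => (fun s => p1 s * g2 s) (p * t + q0) with hg3def
  have hg3M : g3 ∈ CarlemanClass M :=
    CarlemanClass.comp_affine hpos (CarlemanClass.mul hpos h1 hlc hp1M hg2M) _ _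
  have hg3R : ∀ t, g3 t = ((R t : ℝ) : ℂ) := by
    intro t
    rw [hg3def, hRdef]
    simp only [hp1def, hg2def, Complex.mul_conj, Complex.ofReal_mul]
  set D : ℝ → ℂ := fun x => (-(c₀ : ℂ)⁻¹) * g3 x with hDdef
  have hDM : D ∈ CarlemanClass M := CarlemanClass.const_mul _ hg3M
  have hψderiv : ∀ x, HasDerivAt ψ (D x) x := by
    intro x
    have hftc : HasDerivAt I (-R x) x := by
      apply intervalIntegral.integral_hasDerivAt_left (hInt x b)
      · exact hRcont.stronglyMeasurableAtFilter _ _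
      · exact hRcont.continuousAt
    have hr : HasDerivAt ψr (-R x / c₀) x := hftc.div_const c₀
    have hc : HasDerivAt ψ ((-R x / c₀ : ℝ) : ℂ) x := hr.ofReal_comp
    have : ((-R x / c₀ : ℝ) : ℂ) = D x := by
      rw [hDdef]
      simp only [hg3R x]
      push_cast
      field_simp
    rwa [this] at hc
  -- smoothness and bounds via the derivative sequence
  set hseq : ℕ → ℝ → ℂ := fun n => match n with
    | 0 => ψ
    | (k + 1) => iteratedDeriv k D with hseqdef
  have hd : ∀ n x, HasDerivAt (hseq n) (hseq (n + 1) x) x := by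
    intro n x
    match n with
    | 0 =>
      have := hψderiv x
      rwa [show hseq 1 x = D x by simp [hseqdef, iteratedDeriv_zero]]
    | (k + 1) => exact hasDerivAt_iteratedDeriv hDM.1 k x
  obtain ⟨hψsm, hψitd⟩ := contDiff_of_derivSeq hseq hd
  have hψM : ψ ∈ CarlemanClass M := by
    refine ⟨hψsm, fun α β => ?_⟩
    obtain ⟨C, ρ, hC, hρ, hB⟩ := hDM.2 α β
    set C' := max C 1 with hC'def
    set ρ' := max ρ 1 with hρ'def
    have hC'1 : (1:ℝ) ≤ C' := le_max_right _ _
    have hρ'1 : (1:ℝ) ≤ ρ' := le_max_right _ _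
    have hMmono := M_mono hpos h1 h01 hlc
    refine ⟨C', ρ', lt_of_lt_of_le one_pos hC'1, lt_of_lt_of_le one_pos hρ'1, fun n x hx => ?_⟩
    rw [congrFun (hψitd n) x]
    match n with
    | 0 =>
      have : ‖hseq 0 x‖ ≤ 1 := by
        rw [hseqdef]
        simp only [hψdef, Complex.norm_real, Real.norm_eq_abs]
        rw [abs_of_nonneg (hψr01 x).1]
        exact (hψr01 x).2
      calc ‖hseq 0 x‖ ≤ 1 := this
        _ ≤ C' * ρ' ^ 0 * M 0 := by rw [h1, pow_zero]; nlinarith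
    | (k + 1) =>
      have hb := hB k x hx
      calc ‖hseq (k + 1) x‖ = ‖iteratedDeriv k D x‖ := by rw [hseqdef]
        _ ≤ C * ρ ^ k * M k := hb
        _ ≤ C' * ρ' ^ (k + 1) * M (k + 1) := by
            have e1 : C ≤ C' := le_max_left _ _
            have e2 : ρ ^ k ≤ ρ' ^ (k + 1) := by
              calc ρ ^ k ≤ ρ' ^ k := pow_le_pow_left₀ hρ.le (le_max_left _ _) k
                _ ≤ ρ' ^ (k + 1) := pow_le_pow_right₀ hρ'1 (Nat.le_succ k)
            have e3 : M k ≤ M (k + 1) := hMmono (Nat.le_succ k)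
            have h2 : 0 ≤ M k := (hpos k).le
            have h3 : 0 ≤ ρ ^ k := by positivity
            calc C * ρ ^ k * M k ≤ C' * ρ ^ k * M k :=
                  mul_le_mul_of_nonneg_right (mul_le_mul_of_nonneg_right e1 h3) h2
              _ ≤ C' * ρ' ^ (k + 1) * M k :=
                  mul_le_mul_of_nonneg_right
                    (mul_le_mul_of_nonneg_left e2 (by linarith)) h2
              _ ≤ C' * ρ' ^ (k + 1) * M (k + 1) :=
                  mul_le_mul_of_nonneg_left e3
                    (mul_nonneg (by linarith) (pow_nonneg (by linarith) _))
  refine ⟨ψ, hψM, fun x => ?_, fun x hx => ?_, fun x hx => ?_⟩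
  · obtain ⟨h0', h1'⟩ := hψr01 x
    constructor
    · rw [hψdef]; simp only [Complex.norm_real, Real.norm_eq_abs]
      rw [abs_of_nonneg h0']; exact h1'
    · rw [hψdef]
      rw [show (1 : ℂ) - ((ψr x : ℝ) : ℂ) = (((1 - ψr x : ℝ)) : ℂ) by push_cast; ring]
      simp only [Complex.norm_real, Real.norm_eq_abs]
      rw [abs_of_nonneg (by linarith : (0:ℝ) ≤ 1 - ψr x)]
      linarith
  · rw [hψdef]
    simp only [hψrdef]
    rw [hIleft x hx, div_self (ne_of_gt hc₀pos)]
    norm_num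
  · rw [hψdef]
    simp only [hψrdef]
    rw [hIright x hx, zero_div]
    norm_num

lemma iteratedDeriv_finset_sum_range (m : ℕ) (φ : ℕ → ℝ → ℂ)
    (hφ : ∀ k, ContDiff ℝ (⊤ : ℕ∞) (φ k)) (n : ℕ) (x : ℝ) :
    iteratedDeriv n (fun s => ∑ k ∈ Finset.range m, φ k s) x
      = ∑ k ∈ Finset.range m, iteratedDeriv n (φ k) x := by
  induction m with
  | zero =>
    simp only [Finset.range_zero, Finset.sum_empty]
    rw [iteratedDeriv_const_fun (0 : ℂ) n]
    simp
  | succ m ih =>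
    have hsm : ContDiff ℝ (⊤ : ℕ∞) (fun s => ∑ k ∈ Finset.range m, φ k s) := by
      apply ContDiff.sum
      intro k _
      exact hφ k
    have : (fun s => ∑ k ∈ Finset.range (m + 1), φ k s)
        = fun s => (∑ k ∈ Finset.range m, φ k s) + φ m s := by
      funext s
      rw [Finset.sum_range_succ]
    rw [this, iteratedDeriv_add' hsm (hφ m), ih, Finset.sum_range_succ]

end GGSAux

open GGSAux

/-- Generalized Găvruța stability of the difference equation `f(s) - f(s+1) = χ(s)` with a
`C¹` control function `δ`, with the improved Euler–Maclaurin error bound. -/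
theorem ggs_difference_equation_C1
    (a b : ℝ) (hab : a < b) (M : ℕ → ℝ) (hM : StandingAssumptions M)
    (χ : ℝ → ℂ) (hχM : χ ∈ CarlemanClass M)
    (y : ℝ → ℂ) (hy : y ∈ CarlemanClass M)
    (δ : ℝ → ℝ) (hδ : ∀ s : ℝ, 0 ≤ δ s) (hδC1 : ContDiff ℝ 1 δ)
    (hyδ : ∀ s : ℝ, ‖y s - y (s + 1) - χ s‖ ≤ δ s) :
    ∃ z ∈ CarlemanClass M, (∀ s : ℝ, z s - z (s + 1) = χ s) ∧
      ∀ s : ℝ, ‖y s - z s‖ ≤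
        ((⌈max (b - s) 0⌉ + ⌈max (s - a) 0⌉ : ℤ) : ℝ) *
          sSup (δ '' Set.Icc (s - (⌈max (s - a) 0⌉ : ℝ)) (s + (⌈max (b - s) 0⌉ : ℝ) - 1)) +
        (((⌈max (b - s) 0⌉ + ⌈max (s - a) 0⌉ : ℤ) : ℝ) - 1) / 2 *
          sSup ((fun u => |deriv δ u|) ''
            Set.Icc (s - (⌈max (s - a) 0⌉ : ℝ)) (s + (⌈max (b - s) 0⌉ : ℝ) - 1)) := by
  classical
  obtain ⟨hposM, hNQ, _, ⟨h1, h01⟩, hlc, _, _⟩ := hM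
  obtain ⟨ψ, hψM, hψbd, hψ1, hψ0⟩ := exists_cutoff hposM h1 h01 hlc hNQ a b hab
  set e : ℝ → ℂ := fun s => y s - y (s + 1) - χ s with hedef
  have heM : e ∈ CarlemanClass M :=
    CarlemanClass.sub hposM (CarlemanClass.sub hposM hy (CarlemanClass.translate hy 1)) hχM
  set F : ℝ → ℂ := fun t => e t * ψ t with hFdef
  set G : ℝ → ℂ := fun t => e t * (1 - ψ t) with hGdef
  have hFM : F ∈ CarlemanClass M := CarlemanClass.mul hposM h1 hlc heM hψM
  have hGM : G ∈ CarlemanClass M := by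
    apply CarlemanClass.mul hposM h1 hlc heM
    exact CarlemanClass.sub hposM (CarlemanClass.const 1 hposM) hψM
  have hF0 : ∀ t : ℝ, b ≤ t → F t = 0 := by
    intro t ht
    show e t * ψ t = 0
    rw [hψ0 t ht, mul_zero]
  have hG0 : ∀ t : ℝ, t ≤ a → G t = 0 := by
    intro t ht
    show e t * (1 - ψ t) = 0
    rw [hψ1 t ht, sub_self, mul_zero]
  have hFbd : ∀ t : ℝ, ‖F t‖ ≤ δ t := by
    intro t
    show ‖e t * ψ t‖ ≤ δ t
    rw [norm_mul]
    calc ‖e t‖ * ‖ψ t‖ ≤ δ t * 1 :=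
        mul_le_mul (hyδ t) (hψbd t).1 (norm_nonneg _) (hδ t)
      _ = δ t := mul_one _
  have hGbd : ∀ t : ℝ, ‖G t‖ ≤ δ t := by
    intro t
    show ‖e t * (1 - ψ t)‖ ≤ δ t
    rw [norm_mul]
    calc ‖e t‖ * ‖1 - ψ t‖ ≤ δ t * 1 :=
        mul_le_mul (hyδ t) (hψbd t).2 (norm_nonneg _) (hδ t)
      _ = δ t := mul_one _
  set E : ℝ → ℂ := fun s =>
    (∑' k : ℕ, F (s + (k : ℝ))) - (∑' k : ℕ, G (s - ((k : ℝ) + 1))) with hEdef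
  have hFsum : ∀ (s : ℝ) (N : ℕ), b ≤ s + N →
      (∑' k : ℕ, F (s + (k : ℝ))) = ∑ k ∈ Finset.range N, F (s + (k : ℝ)) := by
    intro s N hN
    apply tsum_eq_sum
    intro k hk
    apply hF0
    have hkN : (N : ℝ) ≤ (k : ℝ) :=
      Nat.cast_le.mpr (Nat.le_of_not_lt fun hlt => hk (Finset.mem_range.mpr hlt))
    linarith
  have hGsum : ∀ (s : ℝ) (N : ℕ), s - N ≤ a →
      (∑' k : ℕ, G (s - ((k : ℝ) + 1))) = ∑ k ∈ Finset.range N, G (s - ((k : ℝ) + 1)) := by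
    intro s N hN
    apply tsum_eq_sum
    intro k hk
    apply hG0
    have hkN : (N : ℝ) ≤ (k : ℝ) :=
      Nat.cast_le.mpr (Nat.le_of_not_lt fun hlt => hk (Finset.mem_range.mpr hlt))
    linarith
  -- the difference equation
  have hkey : ∀ s : ℝ, E s - E (s + 1) = e s := by
    intro s
    obtain ⟨N, hN⟩ := exists_nat_ge (b - s)
    obtain ⟨N', hN'⟩ := exists_nat_ge (s - a)
    have e1 := hFsum s (N + 1) (by push_cast; linarith)
    have e2 := hFsum (s + 1) N (by push_cast; linarith)
    have e3 := hGsum s N' (by push_cast; linarith)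
    have e4 := hGsum (s + 1) (N' + 1) (by push_cast; linarith)
    have srs : ∑ k ∈ Finset.range (N + 1), F (s + (k : ℝ))
        = (∑ k ∈ Finset.range N, F ((s + 1) + (k : ℝ))) + F (s + ((0 : ℕ) : ℝ)) := by
      rw [Finset.sum_range_succ']
      congr 1
      apply Finset.sum_congr rfl
      intro k _
      congr 1
      push_cast
      ring
    have srs2 : ∑ k ∈ Finset.range (N' + 1), G ((s + 1) - ((k : ℝ) + 1))
        = (∑ k ∈ Finset.range N', G (s - ((k : ℝ) + 1))) + G ((s + 1) - (((0 : ℕ) : ℝ) + 1)) := by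
      rw [Finset.sum_range_succ']
      congr 1
      apply Finset.sum_congr rfl
      intro k _
      congr 1
      push_cast
      ring
    have hE1 : E s = (∑ k ∈ Finset.range (N + 1), F (s + (k : ℝ)))
        - (∑ k ∈ Finset.range N', G (s - ((k : ℝ) + 1))) := by
      show (∑' k : ℕ, F (s + (k : ℝ))) - (∑' k : ℕ, G (s - ((k : ℝ) + 1))) = _
      rw [e1, e3]
    have hE2 : E (s + 1) = (∑ k ∈ Finset.range N, F ((s + 1) + (k : ℝ)))
        - (∑ k ∈ Finset.range (N' + 1), G ((s + 1) - ((k : ℝ) + 1))) := by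
      show (∑' k : ℕ, F ((s + 1) + (k : ℝ))) - (∑' k : ℕ, G ((s + 1) - ((k : ℝ) + 1))) = _
      rw [e2, e4]
    rw [hE1, hE2, srs, srs2]
    have hF00 : F (s + ((0 : ℕ) : ℝ)) = F s := by norm_num
    have hG00 : G ((s + 1) - (((0 : ℕ) : ℝ) + 1)) = G s := by norm_num
    rw [hF00, hG00]
    have hFG : F s + G s = e s := by
      show e s * ψ s + e s * (1 - ψ s) = e s
      ring
    linear_combination hFG
  -- local finite representation on strips
  have hstrip : ∀ α β : ℝ, ∃ N N' : ℕ, ∀ s ∈ Set.Ioo (α - 1) (β + 1),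
      E s = (∑ k ∈ Finset.range N, F (s + (k : ℝ)))
        - (∑ k ∈ Finset.range N', G (s - ((k : ℝ) + 1))) := by
    intro α β
    obtain ⟨N, hN⟩ := exists_nat_ge (b - α + 1)
    obtain ⟨N', hN'⟩ := exists_nat_ge (β + 1 - a)
    refine ⟨N, N', fun s hs => ?_⟩
    obtain ⟨hs1, hs2⟩ := hs
    show (∑' k : ℕ, F (s + (k : ℝ))) - (∑' k : ℕ, G (s - ((k : ℝ) + 1))) = _
    rw [hFsum s N (by linarith), hGsum s N' (by linarith)]
  have hFtr : ∀ k : ℕ, ContDiff ℝ (⊤ : ℕ∞) (fun s : ℝ => F (s + (k : ℝ))) :=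
    fun k => hFM.1.comp (contDiff_id.add contDiff_const)
  have hGtr : ∀ k : ℕ, ContDiff ℝ (⊤ : ℕ∞) (fun s : ℝ => G (s - ((k : ℝ) + 1))) :=
    fun k => hGM.1.comp (contDiff_id.sub contDiff_const)
  have hfinsm : ∀ N N' : ℕ, ContDiff ℝ (⊤ : ℕ∞) (fun s =>
      (∑ k ∈ Finset.range N, F (s + (k : ℝ)))
        - (∑ k ∈ Finset.range N', G (s - ((k : ℝ) + 1)))) := by
    intro N N'
    apply ContDiff.sub
    · exact ContDiff.sum fun k _ => hFtr k
    · exact ContDiff.sum fun k _ => hGtr k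
  have hEsm : ContDiff ℝ (⊤ : ℕ∞) E := by
    rw [contDiff_iff_contDiffAt]
    intro s₀
    obtain ⟨N, N', hrep⟩ := hstrip s₀ s₀
    apply ((hfinsm N N').contDiffAt).congr_of_eventuallyEq
    filter_upwards [Ioo_mem_nhds (by linarith : s₀ - 1 < s₀) (by linarith : s₀ < s₀ + 1)]
      with t ht using hrep t ht
  have hEM : E ∈ CarlemanClass M := by
    refine ⟨hEsm, fun α β => ?_⟩
    obtain ⟨N, N', hrep⟩ := hstrip α β
    obtain ⟨C1, ρ1, hC1, hρ1, hB1⟩ := hFM.2 α (β + N)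
    obtain ⟨C2, ρ2, hC2, hρ2, hB2⟩ := hGM.2 (α - N' - 1) β
    refine ⟨N * C1 + N' * C2 + 1, max ρ1 ρ2, by positivity, lt_max_of_lt_left hρ1,
      fun n x hx => ?_⟩
    have hx' : x ∈ Set.Ioo (α - 1) (β + 1) := ⟨by linarith [hx.1], by linarith [hx.2]⟩
    have hEeq : iteratedDeriv n E x = iteratedDeriv n (fun s =>
        (∑ k ∈ Finset.range N, F (s + (k : ℝ)))
          - (∑ k ∈ Finset.range N', G (s - ((k : ℝ) + 1)))) x := by
      apply Filter.EventuallyEq.iteratedDeriv_eq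
      filter_upwards [Ioo_mem_nhds hx'.1 hx'.2] with t ht using hrep t ht
    rw [hEeq, iteratedDeriv_sub' (ContDiff.sum fun k _ => hFtr k)
      (ContDiff.sum fun k _ => hGtr k),
      iteratedDeriv_finset_sum_range N _ hFtr,
      iteratedDeriv_finset_sum_range N' _ hGtr]
    have hbF : ∀ k ∈ Finset.range N,
        ‖iteratedDeriv n (fun s : ℝ => F (s + (k : ℝ))) x‖ ≤ C1 * (max ρ1 ρ2) ^ n * M n := by
      intro k hk
      rw [congrFun (iteratedDeriv_comp_add_const n F (k : ℝ)) x]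
      have hkN : (k : ℝ) ≤ N := by
        exact_mod_cast (Finset.mem_range.mp hk).le
      have hmem : x + (k : ℝ) ∈ Set.Icc α (β + N) :=
        ⟨by nlinarith [hx.1, Nat.cast_nonneg (α := ℝ) k], by nlinarith [hx.2]⟩
      calc ‖iteratedDeriv n F (x + (k : ℝ))‖ ≤ C1 * ρ1 ^ n * M n := hB1 n _ hmem
        _ ≤ C1 * (max ρ1 ρ2) ^ n * M n := by
            apply mul_le_mul_of_nonneg_right _ (hposM n).le
            exact mul_le_mul_of_nonneg_left
              (pow_le_pow_left₀ hρ1.le (le_max_left _ _) n) hC1.le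
    have hbG : ∀ k ∈ Finset.range N',
        ‖iteratedDeriv n (fun s : ℝ => G (s - ((k : ℝ) + 1))) x‖
          ≤ C2 * (max ρ1 ρ2) ^ n * M n := by
      intro k hk
      have : (fun s : ℝ => G (s - ((k : ℝ) + 1))) = fun s : ℝ => G (s + (-((k : ℝ) + 1))) := by
        funext s; rw [sub_eq_add_neg]
      rw [this, congrFun (iteratedDeriv_comp_add_const n G _) x]
      have hkN : (k : ℝ) + 1 ≤ N' := by
        have := (Finset.mem_range.mp hk)
        exact_mod_cast Nat.succ_le_of_lt this
      have hmem : x + -((k : ℝ) + 1) ∈ Set.Icc (α - N' - 1) β :=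
        ⟨by nlinarith [hx.1], by nlinarith [hx.2, Nat.cast_nonneg (α := ℝ) k]⟩
      calc ‖iteratedDeriv n G _‖ ≤ C2 * ρ2 ^ n * M n := hB2 n _ hmem
        _ ≤ C2 * (max ρ1 ρ2) ^ n * M n := by
            apply mul_le_mul_of_nonneg_right _ (hposM n).le
            exact mul_le_mul_of_nonneg_left
              (pow_le_pow_left₀ hρ2.le (le_max_right _ _) n) hC2.le
    calc ‖(∑ k ∈ Finset.range N, iteratedDeriv n (fun s : ℝ => F (s + (k : ℝ))) x)
          - ∑ k ∈ Finset.range N', iteratedDeriv n (fun s : ℝ => G (s - ((k : ℝ) + 1))) x‖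
        ≤ ‖∑ k ∈ Finset.range N, iteratedDeriv n (fun s : ℝ => F (s + (k : ℝ))) x‖
          + ‖∑ k ∈ Finset.range N', iteratedDeriv n (fun s : ℝ => G (s - ((k : ℝ) + 1))) x‖ :=
          norm_sub_le _ _
      _ ≤ (∑ k ∈ Finset.range N, ‖iteratedDeriv n (fun s : ℝ => F (s + (k : ℝ))) x‖)
          + ∑ k ∈ Finset.range N', ‖iteratedDeriv n (fun s : ℝ => G (s - ((k : ℝ) + 1))) x‖ :=
          add_le_add (norm_sum_le _ _) (norm_sum_le _ _)
      _ ≤ (∑ _k ∈ Finset.range N, C1 * (max ρ1 ρ2) ^ n * M n)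
          + ∑ _k ∈ Finset.range N', C2 * (max ρ1 ρ2) ^ n * M n :=
          add_le_add (Finset.sum_le_sum hbF) (Finset.sum_le_sum hbG)
      _ = (N * C1 + N' * C2) * (max ρ1 ρ2) ^ n * M n := by
          rw [Finset.sum_const, Finset.sum_const, Finset.card_range, Finset.card_range,
            nsmul_eq_mul, nsmul_eq_mul]
          ring
      _ ≤ (N * C1 + N' * C2 + 1) * (max ρ1 ρ2) ^ n * M n := by
          apply mul_le_mul_of_nonneg_right _ (hposM n).le
          apply mul_le_mul_of_nonneg_right _ (by positivity)
          linarith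
  refine ⟨fun s => y s - E s, CarlemanClass.sub hposM hy hEM, fun s => ?_, fun s => ?_⟩
  · have h2 : e s = y s - y (s + 1) - χ s := rfl
    have h3 := hkey s
    show (y s - E s) - (y (s + 1) - E (s + 1)) = χ s
    linear_combination (-1 : ℂ) * h3 - h2
  · have hgoal0 : y s - (fun s => y s - E s) s = E s := by
      show y s - (y s - E s) = E s
      ring
    rw [hgoal0]
    set Kb : ℕ := (⌈max (b - s) 0⌉).toNat with hKbdef
    set Ka : ℕ := (⌈max (s - a) 0⌉).toNat with hKadef
    have hKbc : ((Kb : ℤ) : ℝ) = ((⌈max (b - s) 0⌉ : ℤ) : ℝ) := by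
      rw [hKbdef, Int.toNat_of_nonneg (Int.ceil_nonneg (le_max_right _ _))]
    have hKac : ((Ka : ℤ) : ℝ) = ((⌈max (s - a) 0⌉ : ℤ) : ℝ) := by
      rw [hKadef, Int.toNat_of_nonneg (Int.ceil_nonneg (le_max_right _ _))]
    have hKbc' : (Kb : ℝ) = ((⌈max (b - s) 0⌉ : ℤ) : ℝ) := by exact_mod_cast hKbc
    have hKac' : (Ka : ℝ) = ((⌈max (s - a) 0⌉ : ℤ) : ℝ) := by exact_mod_cast hKac
    have hKbge : b - s ≤ (Kb : ℝ) := by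
      rw [hKbc']
      exact le_trans (le_max_left _ _) (Int.le_ceil _)
    have hKage : s - a ≤ (Ka : ℝ) := by
      rw [hKac']
      exact le_trans (le_max_left _ _) (Int.le_ceil _)
    have hKbnn : (0:ℝ) ≤ (Kb:ℝ) := Nat.cast_nonneg _
    have hKann : (0:ℝ) ≤ (Ka:ℝ) := Nat.cast_nonneg _
    have hEs : E s = (∑ k ∈ Finset.range Kb, F (s + (k:ℝ)))
        - (∑ k ∈ Finset.range Ka, G (s - ((k:ℝ) + 1))) := by
      show (∑' k : ℕ, F (s + (k : ℝ))) - (∑' k : ℕ, G (s - ((k : ℝ) + 1))) = _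
      rw [hFsum s Kb (by linarith), hGsum s Ka (by linarith)]
    set L : ℝ := s - ((⌈max (s - a) 0⌉ : ℤ) : ℝ) with hLdef
    set Rr : ℝ := s + ((⌈max (b - s) 0⌉ : ℤ) : ℝ) - 1 with hRrdef
    have hsum1 : (1:ℝ) ≤ (Kb:ℝ) + (Ka:ℝ) := by
      have hKposR : (0:ℝ) < (Kb:ℝ) + (Ka:ℝ) := by linarith
      have hKpos : 0 < Kb + Ka := by exact_mod_cast (by push_cast; linarith :
        (0:ℝ) < ((Kb + Ka : ℕ) : ℝ))
      have := Nat.one_le_cast (α := ℝ).mpr hKpos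
      push_cast at this
      linarith
    have hLR : L ≤ Rr := by rw [hLdef, hRrdef, ← hKac', ← hKbc']; linarith
    have hbdd1 : BddAbove (δ '' Set.Icc L Rr) := (isCompact_Icc.image hδC1.continuous).bddAbove
    have hcontd : Continuous fun u => |deriv δ u| := (hδC1.continuous_deriv le_rfl).abs
    have hbdd2 : BddAbove ((fun u => |deriv δ u|) '' Set.Icc L Rr) :=
      (isCompact_Icc.image hcontd).bddAbove
    have hS1 : ∀ u ∈ Set.Icc L Rr, δ u ≤ sSup (δ '' Set.Icc L Rr) :=
      fun u hu => le_csSup hbdd1 (Set.mem_image_of_mem _ hu)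
    have hLmem : L ∈ Set.Icc L Rr := ⟨le_rfl, hLR⟩
    have hS1nn : 0 ≤ sSup (δ '' Set.Icc L Rr) := le_trans (hδ L) (hS1 L hLmem)
    have hS2nn : 0 ≤ sSup ((fun u => |deriv δ u|) '' Set.Icc L Rr) :=
      le_trans (abs_nonneg _) (le_csSup hbdd2 (Set.mem_image_of_mem _ hLmem))
    have hmemF : ∀ k ∈ Finset.range Kb, s + (k:ℝ) ∈ Set.Icc L Rr := by
      intro k hk
      have hk1 : (k:ℝ) + 1 ≤ (Kb:ℝ) := by
        exact_mod_cast Nat.succ_le_of_lt (Finset.mem_range.mp hk)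
      have hknn : (0:ℝ) ≤ (k:ℝ) := Nat.cast_nonneg _
      constructor
      · rw [hLdef, ← hKac']; linarith
      · rw [hRrdef, ← hKbc']; linarith
    have hmemG : ∀ k ∈ Finset.range Ka, s - ((k:ℝ)+1) ∈ Set.Icc L Rr := by
      intro k hk
      have hk1 : (k:ℝ) + 1 ≤ (Ka:ℝ) := by
        exact_mod_cast Nat.succ_le_of_lt (Finset.mem_range.mp hk)
      have hknn : (0:ℝ) ≤ (k:ℝ) := Nat.cast_nonneg _
      constructor
      · rw [hLdef, ← hKac']; linarith
      · rw [hRrdef, ← hKbc']; linarith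
    calc ‖E s‖ ≤ (∑ k ∈ Finset.range Kb, δ (s + (k:ℝ)))
          + ∑ k ∈ Finset.range Ka, δ (s - ((k:ℝ)+1)) := by
          rw [hEs]
          refine le_trans (norm_sub_le _ _) (add_le_add ?_ ?_)
          · exact le_trans (norm_sum_le _ _) (Finset.sum_le_sum fun k _ => hFbd _)
          · exact le_trans (norm_sum_le _ _) (Finset.sum_le_sum fun k _ => hGbd _)
      _ ≤ (∑ _k ∈ Finset.range Kb, sSup (δ '' Set.Icc L Rr))
          + ∑ _k ∈ Finset.range Ka, sSup (δ '' Set.Icc L Rr) :=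
          add_le_add (Finset.sum_le_sum fun k hk => hS1 _ (hmemF k hk))
            (Finset.sum_le_sum fun k hk => hS1 _ (hmemG k hk))
      _ = ((Kb:ℝ) + (Ka:ℝ)) * sSup (δ '' Set.Icc L Rr) := by
          rw [Finset.sum_const, Finset.sum_const, Finset.card_range, Finset.card_range,
            nsmul_eq_mul, nsmul_eq_mul]
          ring
      _ ≤ ((⌈max (b - s) 0⌉ + ⌈max (s - a) 0⌉ : ℤ) : ℝ) * sSup (δ '' Set.Icc L Rr)
          + (((⌈max (b - s) 0⌉ + ⌈max (s - a) 0⌉ : ℤ) : ℝ) - 1) / 2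
            * sSup ((fun u => |deriv δ u|) '' Set.Icc L Rr) := by
          have hcoeff : ((⌈max (b - s) 0⌉ + ⌈max (s - a) 0⌉ : ℤ) : ℝ) = (Kb:ℝ) + (Ka:ℝ) := by
            push_cast
            rw [← hKbc', ← hKac']
          rw [hcoeff]
          have h2 : 0 ≤ ((Kb:ℝ) + (Ka:ℝ) - 1) / 2
              * sSup ((fun u => |deriv δ u|) '' Set.Icc L Rr) :=
            mul_nonneg (by linarith) hS2nn
          linarith
end
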